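/- arXiv:1009.2199 — 7 statements merged into one kernel-verified Lean document; each statement's English description precedes it below -/
import Mathlib

section
/- Let A ⊆ ℤ^d be an affine semigroup (a finitely generated additive submonoid of ℤ^d), let Q be an arbitrary commutative additive monoid, and let φ : A → Q be a surjective monoid homomorphism. Then for every q ∈ Q, the fiber φ⁻¹(q), regarded as a subset of ℤ^d, possesses an affine stratification. -/
open Pointwise

/-- In a partially well-ordered set (e.g. `ℕ^n` by Dickson's lemma), every subset has a
finite "basis": a finite subset below every element. -/
lemma exists_finset_basis_of_isPWO {α : Type*} [Preorder α] {s : Set α} (hs : s.IsPWO) :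
    ∃ F : Finset α, ↑F ⊆ s ∧ ∀ v ∈ s, ∃ f ∈ F, f ≤ v := by
  classical
  by_contra hcon
  push_neg at hcon
  have H : ∀ F : {F : Finset α // ↑F ⊆ s}, ∃ x, x ∈ s ∧ ∀ f ∈ F.1, ¬ f ≤ x := by
    intro F
    obtain ⟨v, hv1, hv2⟩ := hcon F.1 F.2
    exact ⟨v, hv1, hv2⟩
  choose v hvs hvlt using H
  let F : ℕ → {F : Finset α // ↑F ⊆ s} := fun n =>
    Nat.rec ⟨∅, by simp⟩
      (fun _ Fn => ⟨insert (v Fn) Fn.1, by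
        rw [Finset.coe_insert]
        exact Set.insert_subset (hvs Fn) Fn.2⟩) n
  have hsub : ∀ n, (F n).1 ⊆ (F (n + 1)).1 := fun n => Finset.subset_insert _ _
  have hmono : ∀ m n, m ≤ n → (F m).1 ⊆ (F n).1 := by
    intro m n h
    induction h with
    | refl => exact subset_rfl
    | step _ ih => exact ih.trans (hsub _)
  obtain ⟨m, n, hmn, hle⟩ := hs.exists_lt (f := fun k => v (F k)) fun k => hvs _
  have hmem : v (F m) ∈ (F n).1 :=
    hmono (m + 1) n hmn (Finset.mem_insert_self _ _)
  exact hvlt (F n) (v (F m)) hmem hle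

/-- Dickson's lemma for `ℕ^ι`. -/
lemma natPi_isPWO {ι : Type*} [Finite ι] (V : Set (ι → ℕ)) : V.IsPWO :=
  (Set.isPWO_univ_iff.2 inferInstance).mono (Set.subset_univ V)

/-- An affine stratification of `W ⊆ ℤ^d`: a finite partition of `W` into pairwise
disjoint sets, each of the form `F + A` for a finite set `F ⊆ ℤ^d` and a finitely
generated submonoid (affine semigroup) `A ⊆ ℤ^d`. -/
def IsAffineStratification {d : ℕ} (W : Set (Fin d → ℤ)) : Prop :=
  ∃ (r : ℕ) (F : Fin r → Finset (Fin d → ℤ)) (A : Fin r → AddSubmonoid (Fin d → ℤ)),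
    (∀ i, (A i).FG) ∧
    (Pairwise fun i j => Disjoint
      ((F i : Set (Fin d → ℤ)) + (A i : Set (Fin d → ℤ)))
      ((F j : Set (Fin d → ℤ)) + (A j : Set (Fin d → ℤ)))) ∧
    W = ⋃ i, ((F i : Set (Fin d → ℤ)) + (A i : Set (Fin d → ℤ)))

/-- If `φ : A → Q` is a surjective monoid homomorphism from an affine semigroup
`A ⊆ ℤ^d` to an arbitrary commutative monoid `Q`, then every fiber of `φ`,
regarded as a subset of `ℤ^d`, possesses an affine stratification. -/
theorem fiber_of_affine_semigroup_hom_isAffineStratification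
    {d : ℕ} (A : AddSubmonoid (Fin d → ℤ)) (hA : A.FG)
    (Q : Type) [AddCommMonoid Q] (φ : A →+ Q) (hφ : Function.Surjective φ)
    (q : Q) :
    IsAffineStratification {x : Fin d → ℤ | ∃ hx : x ∈ A, φ ⟨x, hx⟩ = q} := by
  classical
  obtain ⟨G, hG⟩ := hA
  -- the canonical map ℕ^G → ℤ^d
  let π : (↥G → ℕ) →+ (Fin d → ℤ) :=
    { toFun := fun u => ∑ i : ↥G, (u i) • (i : Fin d → ℤ)
      map_zero' := by simp
      map_add' := by
        intro u v
        simp [add_smul, Finset.sum_add_distrib] }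
  have hπA : ∀ u, π u ∈ A := by
    intro u
    rw [← hG]
    exact sum_mem fun i _ => nsmul_mem (AddSubmonoid.subset_closure i.2) _
  have hsurj : ∀ a ∈ A, ∃ u, π u = a := by
    intro a ha
    have hle : A ≤ AddMonoidHom.mrange π := by
      rw [← hG]
      refine AddSubmonoid.closure_le.2 ?_
      intro g hg
      refine AddMonoidHom.mem_mrange.2 ⟨Pi.single (⟨g, hg⟩ : ↥G) 1, ?_⟩
      show ∑ i : ↥G, (Pi.single (⟨g, hg⟩ : ↥G) 1 i) • (i : Fin d → ℤ) = g
      rw [Finset.sum_eq_single (⟨g, hg⟩ : ↥G)]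
      · simp
      · intro b _ hb
        rw [Pi.single_eq_of_ne hb]
        simp
      · intro h
        exact absurd (Finset.mem_univ _) h
    exact AddMonoidHom.mem_mrange.1 (hle ha)
  -- the lift ℕ^G →+ A and composition with φ
  let ρ : (↥G → ℕ) →+ A :=
    { toFun := fun u => ⟨π u, hπA u⟩
      map_zero' := Subtype.ext (map_zero π)
      map_add' := fun u v => Subtype.ext (map_add π u v) }
  let ψ : (↥G → ℕ) →+ Q := φ.comp ρ
  have hψ : ∀ (u : ↥G → ℕ) (h : π u ∈ A), φ ⟨π u, h⟩ = ψ u := fun u h => rfl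
  -- the stabilizer submonoid upstairs
  let T : AddSubmonoid (↥G → ℕ) :=
    { carrier := {u | ψ u + q = q}
      zero_mem' := by simp
      add_mem' := by
        intro u v hu hv
        show ψ (u + v) + q = q
        rw [map_add, add_assoc, hv]
        exact hu }
  have hTmem : ∀ u, u ∈ T ↔ ψ u + q = q := fun u => Iff.rfl
  -- T is finitely generated, by Dickson's lemma plus descent
  obtain ⟨F₁, hF₁sub, hF₁basis⟩ :=
    exists_finset_basis_of_isPWO (natPi_isPWO {u : ↥G → ℕ | u ∈ T ∧ u ≠ 0})
  have hTcl : AddSubmonoid.closure (↑F₁ : Set (↥G → ℕ)) = T := by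
    apply le_antisymm
    · exact AddSubmonoid.closure_le.2 fun f hf => (hF₁sub hf).1
    · intro u hu
      have main : ∀ N : ℕ, ∀ u : ↥G → ℕ, u ∈ T → (∑ i, u i) ≤ N →
          u ∈ AddSubmonoid.closure (↑F₁ : Set (↥G → ℕ)) := by
        intro N
        induction N with
        | zero =>
          intro u _ hsum
          have hu0 : u = 0 := by
            funext i
            have h1 : ∑ j, u j = 0 := Nat.le_zero.1 hsum
            have := (Finset.sum_eq_zero_iff.1 h1) i (Finset.mem_univ i)
            simpa using this
          rw [hu0]
          exact zero_mem _
        | succ N ih =>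
          intro u hu hsum
          by_cases h0 : u = 0
          · rw [h0]; exact zero_mem _
          · obtain ⟨f, hfF, hfle⟩ := hF₁basis u ⟨hu, h0⟩
            obtain ⟨hfT, hf0⟩ := hF₁sub hfF
            set a : ↥G → ℕ := u - f with ha
            have hfa : f + a = u := by
              funext i
              have hi : f i ≤ u i := hfle i
              simp only [ha, Pi.add_apply, Pi.sub_apply]
              omega
            have haT : a ∈ T := by
              show ψ a + q = q
              have h1 : ψ f + q = q := hfT
              have h2 : ψ u + q = q := hu
              calc ψ a + q = ψ a + (ψ f + q) := by rw [h1]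
                _ = ψ f + ψ a + q := by rw [← add_assoc, add_comm (ψ a) (ψ f)]
                _ = ψ (f + a) + q := by rw [map_add]
                _ = q := by rw [hfa]; exact h2
            have hsum_split : (∑ i, f i) + (∑ i, a i) = ∑ i, u i := by
              rw [← Finset.sum_add_distrib]
              exact Finset.sum_congr rfl fun i _ => congrFun hfa i
            have hfpos : 0 < ∑ i, f i := by
              rcases Nat.eq_zero_or_pos (∑ i, f i) with h | h
              · exfalso
                apply hf0
                funext i
                have := (Finset.sum_eq_zero_iff.1 h) i (Finset.mem_univ i)
                simpa using this
              · exact h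
            have hsuma : (∑ i, a i) ≤ N := by omega
            have := ih a haT hsuma
            rw [← hfa]
            exact add_mem (AddSubmonoid.subset_closure hfF) this
      exact main _ u hu le_rfl
  have hTFG : T.FG := ⟨F₁, hTcl⟩
  -- the stabilizer downstairs
  let S : AddSubmonoid (Fin d → ℤ) := T.map π
  have hSFG : S.FG := AddSubmonoid.FG.map hTFG π
  -- a finite basis for the fiber upstairs
  obtain ⟨Ft, hFtsub, hFtbasis⟩ :=
    exists_finset_basis_of_isPWO (natPi_isPWO {u : ↥G → ℕ | ψ u = q})
  let F₀ : Finset (Fin d → ℤ) := Ft.image π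
  -- main set equality
  have hmain : {x : Fin d → ℤ | ∃ hx : x ∈ A, φ ⟨x, hx⟩ = q} =
      (F₀ : Set (Fin d → ℤ)) + (S : Set (Fin d → ℤ)) := by
    ext x
    constructor
    · rintro ⟨hx, hq⟩
      obtain ⟨u, hu⟩ := hsurj x hx
      have huq : ψ u = q := by
        rw [← hψ u (hπA u)]
        have : (⟨π u, hπA u⟩ : A) = ⟨x, hx⟩ := Subtype.ext hu
        rw [this]
        exact hq
      obtain ⟨f, hfF, hfle⟩ := hFtbasis u huq
      set a : ↥G → ℕ := u - f with ha
      have hfa : f + a = u := by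
        funext i
        have hi : f i ≤ u i := hfle i
        simp only [ha, Pi.add_apply, Pi.sub_apply]
        omega
      have haT : a ∈ T := by
        show ψ a + q = q
        have h1 : ψ f = q := hFtsub hfF
        calc ψ a + q = ψ a + ψ f := by rw [h1]
          _ = ψ f + ψ a := add_comm _ _
          _ = ψ (f + a) := (map_add ψ f a).symm
          _ = ψ u := by rw [hfa]
          _ = q := huq
      have hxeq : x = π f + π a := by rw [← map_add, hfa, hu]
      rw [hxeq]
      refine Set.add_mem_add ?_ ?_
      · exact Finset.mem_coe.2 (Finset.mem_image_of_mem π hfF)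
      · exact ⟨a, haT, rfl⟩
    · rintro ⟨y, hy, z, hz, rfl⟩
      obtain ⟨f, hfF, rfl⟩ := Finset.mem_image.1 (Finset.mem_coe.1 hy)
      obtain ⟨t, htT, rfl⟩ := hz
      have hmem : π f + π t ∈ A := by
        rw [← map_add]
        exact hπA _
      refine ⟨hmem, ?_⟩
      have hft : (⟨π f + π t, hmem⟩ : A) = ⟨π (f + t), hπA (f + t)⟩ :=
        Subtype.ext (map_add π f t).symm
      rw [hft, hψ]
      have h1 : ψ f = q := hFtsub hfF
      have h2 : ψ t + q = q := htT
      rw [map_add, h1, add_comm]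
      exact h2
  -- assemble the stratification with a single stratum
  refine ⟨1, fun _ => F₀, fun _ => S, fun _ => hSFG, ?_, ?_⟩
  · intro i j hij
    exact absurd (Subsingleton.elim i j) hij
  · rw [hmain]
    exact (Set.iUnion_const _).symm
end

section
/- Fix a lattice game G = (Γ, B) played on the polyhedral set Λ = Π ∩ ℤ^d, with set of P-positions 𝒫. If the indistinguishability relation ∼ on Λ has only finitely many equivalence classes (i.e., the misère quotient Λ/∼ is finite), then 𝒫 possesses an affine stratification. -/
open Pointwise

/-- Indistinguishability of positions `p, q ∈ ℤ^d` relative to the recession cone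
`C` and the set `Pos` of P-positions: `p + r ∈ Pos ⟺ q + r ∈ Pos` for all lattice
points `r` of `C`. -/
def Indist {d : ℕ} (C : Set (Fin d → ℝ)) (Pos : Set (Fin d → ℤ)) (p q : Fin d → ℤ) : Prop :=
  ∀ r : Fin d → ℤ, (fun j => (r j : ℝ)) ∈ C → (p + r ∈ Pos ↔ q + r ∈ Pos)

namespace LGAux



/-- Lexicographic (first-difference) strict order on `Fin k → ℕ`. -/
def llt {k : ℕ} (a b : Fin k → ℕ) : Prop :=
  ∃ i, (∀ j, j < i → a j = b j) ∧ a i < b i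

theorem llt_irrefl {k : ℕ} (a : Fin k → ℕ) : ¬ llt a a := by
  rintro ⟨i, _, hlt⟩
  omega

theorem llt_trichot {k : ℕ} {a b : Fin k → ℕ} (h : a ≠ b) : llt a b ∨ llt b a := by
  classical
  have hne : (Finset.univ.filter fun j => a j ≠ b j).Nonempty := by
    rcases Function.ne_iff.mp h with ⟨j, hj⟩
    exact ⟨j, by simp [hj]⟩
  set i := (Finset.univ.filter fun j => a j ≠ b j).min' hne with hidef
  have hi : a i ≠ b i := by
    have := Finset.min'_mem _ hne
    simpa using this
  have heq : ∀ j, j < i → a j = b j := by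
    intro j hj
    by_contra hx
    have := Finset.min'_le (Finset.univ.filter fun j => a j ≠ b j) j (by simp [hx])
    exact absurd hj (not_lt.2 this)
  rcases lt_or_gt_of_ne hi with h1 | h1
  · exact Or.inl ⟨i, heq, h1⟩
  · exact Or.inr ⟨i, fun j hj => (heq j hj).symm, h1⟩

theorem llt_trans {k : ℕ} {a b c : Fin k → ℕ} (h1 : llt a b) (h2 : llt b c) : llt a c := by
  obtain ⟨i, hi, hlt⟩ := h1
  obtain ⟨i', hi', hlt'⟩ := h2
  rcases lt_trichotomy i i' with h | h | h
  · exact ⟨i, fun j hj => (hi j hj).trans (hi' j (hj.trans h)), hlt.trans_le (hi' i h).le⟩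
  · subst h
    exact ⟨i, fun j hj => (hi j hj).trans (hi' j hj), hlt.trans hlt'⟩
  · refine ⟨i', fun j hj => (hi j (hj.trans h)).trans (hi' j hj), ?_⟩
    rw [hi i' h]
    exact hlt'

theorem llt_add {k : ℕ} {a b : Fin k → ℕ} (δ : Fin k → ℕ) (h : llt a b) :
    llt (fun j => a j + δ j) (fun j => b j + δ j) := by
  obtain ⟨i, hi, hlt⟩ := h
  refine ⟨i, fun j hj => ?_, ?_⟩
  · show a j + δ j = b j + δ j
    rw [hi j hj]
  · show a i + δ i < b i + δ i
    omega

instance {k : ℕ} : IsTrans (Fin k → ℕ) llt := ⟨fun _ _ _ => llt_trans⟩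
instance {k : ℕ} : IsIrrefl (Fin k → ℕ) llt := ⟨llt_irrefl⟩
instance {k : ℕ} : IsStrictOrder (Fin k → ℕ) llt := {}

/-- Dickson / product PWO for `Fin k → ℕ`. -/
theorem pwoPi : ∀ k : ℕ, Set.IsPWO (Set.univ : Set (Fin k → ℕ)) := by
  intro k
  induction k with
  | zero =>
    have h0 : (Set.univ : Set (Fin 0 → ℕ)).Subsingleton := Set.subsingleton_univ
    exact h0.isPWO
  | succ k ih =>
    have himg : Set.IsPWO ((fun p : ℕ × (Fin k → ℕ) => (Fin.cons p.1 p.2 : Fin (k+1) → ℕ)) ''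
        (Set.univ ×ˢ Set.univ)) := by
      refine Set.IsPWO.image_of_monotone
        (((Set.isWF_univ_iff.2 (inferInstance : WellFoundedLT ℕ)).isPWO).prod ih) ?_
      intro p q hpq j
      refine Fin.cases ?_ ?_ j
      · simpa using hpq.1
      · intro i
        simpa using hpq.2 i
    refine himg.mono ?_
    intro x _
    exact ⟨(x 0, Fin.tail x), ⟨trivial, trivial⟩, Fin.cons_self_tail x⟩

theorem llt_wf {k : ℕ} : WellFounded (@llt k) := by
  refine RelEmbedding.wellFounded_iff_isEmpty.2 ⟨fun e => ?_⟩
  have hdesc : ∀ m l : ℕ, m < l → llt (e l) (e m) := by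
    intro m l hml
    induction l with
    | zero => omega
    | succ l ih =>
      have h1 : llt (e (l+1)) (e l) := e.map_rel_iff.2 (Nat.lt_succ_self l)
      rcases Nat.lt_or_ge m l with h | h
      · exact llt_trans h1 (ih h)
      · have hml' : m = l := by omega
        exact hml' ▸ h1
  obtain ⟨i, j, hij, hle⟩ := pwoPi k (fun n => ⟨e n, trivial⟩)
  obtain ⟨l, _, hlt⟩ := hdesc i j hij
  exact absurd (hle l) (not_le.2 hlt)

/-- Dickson's lemma: an upward closed subset of `Fin k → ℕ` is a finite union of
principal up-sets. -/
theorem dickson {k : ℕ} (U : Set (Fin k → ℕ)) (hU : ∀ a ∈ U, ∀ b, a ≤ b → b ∈ U) :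
    ∃ M : Finset (Fin k → ℕ), ↑M ⊆ U ∧ ∀ b, b ∈ U ↔ ∃ m ∈ M, m ≤ b := by
  classical
  set Mn : Set (Fin k → ℕ) := {x | x ∈ U ∧ ∀ y ∈ U, y ≤ x → y = x} with hMn
  have hcover : ∀ u ∈ U, ∃ m ∈ Mn, m ≤ u := by
    have key : ∀ N : ℕ, ∀ u ∈ U, ∑ j, u j = N → ∃ m ∈ Mn, m ≤ u := by
      intro N
      induction N using Nat.strong_induction_on with
      | _ N ihN =>
        intro u hu hN
        by_cases hmin : ∀ y ∈ U, y ≤ u → y = u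
        · exact ⟨u, ⟨hu, hmin⟩, le_refl u⟩
        · push_neg at hmin
          obtain ⟨y, hyU, hyu, hne⟩ := hmin
          have hsum : ∑ j, y j < ∑ j, u j := by
            have hlt : ∃ j, y j < u j := by
              by_contra hx
              push_neg at hx
              exact hne (le_antisymm hyu (fun j => hx j))
            obtain ⟨j0, hj0⟩ := hlt
            exact Finset.sum_lt_sum (fun j _ => hyu j) ⟨j0, Finset.mem_univ _, hj0⟩
          obtain ⟨m, hm, hmy⟩ := ihN (∑ j, y j) (hN ▸ hsum) y hyU rfl
          exact ⟨m, hm, hmy.trans hyu⟩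
    exact fun u hu => key (∑ j, u j) u hu rfl
  have hfin : Mn.Finite := by
    by_contra hinf
    have hinf' : Mn.Infinite := hinf
    set e := hinf'.natEmbedding
    obtain ⟨i, j, hij, hle⟩ := pwoPi k (fun n => ⟨(e n : Fin k → ℕ), trivial⟩)
    have heq : (e i : Fin k → ℕ) = e j := (e j).2.2 _ (e i).2.1 hle
    exact absurd (e.injective (Subtype.ext heq)) (Nat.ne_of_lt hij)
  refine ⟨hfin.toFinset, ?_, ?_⟩
  · intro m hm
    rw [Set.Finite.coe_toFinset] at hm
    exact hm.1
  · intro b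
    constructor
    · intro hb
      obtain ⟨m, hm, hmb⟩ := hcover b hb
      exact ⟨m, (Set.Finite.mem_toFinset _).2 hm, hmb⟩
    · rintro ⟨m, hm, hmb⟩
      rw [Set.Finite.mem_toFinset] at hm
      exact hU m hm.1 b hmb


theorem main {d n k : ℕ} (w : Fin k → (Fin d → ℤ)) (fb : Fin n → (Fin d → ℤ))
    (Λ Pos : Set (Fin d → ℤ)) (Q : Type) [Finite Q] (cl : (Fin d → ℤ) → Q)
    (h1 : ∀ x ∈ Λ, ∀ j, x + w j ∈ Λ)
    (h2 : ∀ x ∈ Λ, ∃ (i : Fin n) (a : Fin k → ℕ), x = fb i + ∑ j, a j • w j)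
    (h3 : ∀ i, fb i ∈ Λ)
    (h4 : ∀ x ∈ Λ, ∀ y ∈ Λ, cl x = cl y → ∀ j, cl (x + w j) = cl (y + w j))
    (h5 : Pos ⊆ Λ)
    (h6 : ∀ x ∈ Λ, ∀ y ∈ Λ, cl x = cl y → (x ∈ Pos ↔ y ∈ Pos)) :
    IsAffineStratification Pos := by
  classical
  -- trivial case n = 0
  rcases Nat.eq_zero_or_pos n with hn | hn
  · subst hn
    refine ⟨0, Fin.elim0, Fin.elim0, fun i => i.elim0, fun i => i.elim0, ?_⟩
    rw [Set.iUnion_of_empty]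
    refine Set.eq_empty_iff_forall_notMem.2 fun x hx => ?_
    obtain ⟨i, -⟩ := h2 x (h5 hx)
    exact i.elim0
  haveI : Nonempty (Fin n) := ⟨⟨0, hn⟩⟩
  -- Θ map
  set Θ : Fin n → (Fin k → ℕ) → (Fin d → ℤ) :=
    fun i a => fb i + ∑ j, a j • w j with hΘ
  -- Λ is closed under adding ℕ-combinations of the w's
  have hΛsum : ∀ x ∈ Λ, ∀ a : Fin k → ℕ, x + ∑ j, a j • w j ∈ Λ := by
    have key : ∀ N : ℕ, ∀ a : Fin k → ℕ, ∑ j, a j = N →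
        ∀ x ∈ Λ, x + ∑ j, a j • w j ∈ Λ := by
      intro N
      induction N using Nat.strong_induction_on with
      | _ N ihN =>
        intro a hN x hx
        rcases Nat.eq_zero_or_pos N with h0 | h0
        · have hz : ∀ j, a j = 0 := by
            intro j
            have := Finset.sum_eq_zero_iff.mp (hN.trans h0)
            exact this j (Finset.mem_univ j)
          have : ∑ j, a j • w j = 0 := by
            refine Finset.sum_eq_zero fun j _ => by rw [hz j, zero_smul]
          rw [this, add_zero]; exact hx
        · have hne : ∃ j0, a j0 ≠ 0 := by
            by_contra hc
            push_neg at hc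
            have : ∑ j, a j = 0 := Finset.sum_eq_zero fun j _ => hc j
            omega
          obtain ⟨j0, hj0⟩ := hne
          set a' := Function.update a j0 (a j0 - 1) with ha'
          have esplit : ∀ b : Fin k → ℕ, ∑ j, b j • w j
              = b j0 • w j0 + ∑ j ∈ Finset.univ.erase j0, b j • w j :=
            fun b => (Finset.add_sum_erase _ (fun j => b j • w j) (Finset.mem_univ j0)).symm
          have esplitN : ∀ b : Fin k → ℕ, ∑ j, b j
              = b j0 + ∑ j ∈ Finset.univ.erase j0, b j :=
            fun b => (Finset.add_sum_erase _ b (Finset.mem_univ j0)).symm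
          have e1' : ∑ j ∈ Finset.univ.erase j0, a' j • w j
              = ∑ j ∈ Finset.univ.erase j0, a j • w j :=
            Finset.sum_congr rfl fun j hj => by
              rw [ha', Function.update_of_ne (Finset.ne_of_mem_erase hj)]
          have e1N : ∑ j ∈ Finset.univ.erase j0, a' j
              = ∑ j ∈ Finset.univ.erase j0, a j :=
            Finset.sum_congr rfl fun j hj => by
              rw [ha', Function.update_of_ne (Finset.ne_of_mem_erase hj)]
          have ha'j0 : a' j0 = a j0 - 1 := Function.update_self _ _ _
          have hsm : a j0 • w j0 = (a j0 - 1) • w j0 + w j0 := by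
            have h' : a j0 = (a j0 - 1) + 1 := by omega
            calc a j0 • w j0 = ((a j0 - 1) + 1) • w j0 := by rw [← h']
              _ = (a j0 - 1) • w j0 + w j0 := succ_nsmul _ _
          have hsplit : ∑ j, a j • w j = (∑ j, a' j • w j) + w j0 := by
            rw [esplit a, esplit a', e1', ha'j0, hsm]
            abel
          have hsum' : ∑ j, a' j = N - 1 := by
            have q1 := esplitN a
            have q2 := esplitN a'
            rw [e1N, ha'j0] at q2
            omega
          have hmem := ihN (N - 1) (by omega) a' hsum' x hx
          rw [hsplit, ← add_assoc]
          exact h1 _ hmem j0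
    exact fun x hx a => key (∑ j, a j) a rfl x hx
  have hΘΛ : ∀ i a, Θ i a ∈ Λ := fun i a => hΛsum (fb i) (h3 i) a
  -- transition maps on Q
  have hrep : ∀ q : Q, ∃ x : Fin d → ℤ, (∃ y ∈ Λ, cl y = q) → (x ∈ Λ ∧ cl x = q) := by
    intro q
    by_cases hq : ∃ y ∈ Λ, cl y = q
    · obtain ⟨y, hy, hcy⟩ := hq
      exact ⟨y, fun _ => ⟨hy, hcy⟩⟩
    · exact ⟨0, fun h => absurd h hq⟩
  choose rep hrepp using hrep
  set σ : Fin k → Q → Q := fun j q => cl (rep q + w j) with hσ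
  have hstep : ∀ x ∈ Λ, ∀ j, cl (x + w j) = σ j (cl x) := by
    intro x hx j
    have h := hrepp (cl x) ⟨x, hx, rfl⟩
    exact h4 x hx (rep (cl x)) h.1 h.2.symm j
  have hiter : ∀ x ∈ Λ, ∀ j (t : ℕ), cl (x + t • w j) = (σ j)^[t] (cl x) := by
    intro x hx j t
    induction t with
    | zero => simp
    | succ t ih =>
      have hxt : x + t • w j ∈ Λ := by
        have := hΛsum x hx (fun l => if l = j then t else 0)
        simpa using this
      have : x + (t + 1) • w j = (x + t • w j) + w j := by
        rw [succ_nsmul]; abel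
      rw [this, hstep _ hxt j, ih, Function.iterate_succ_apply']
  -- eventual periodicity of the transition maps
  have hper : ∀ j : Fin k, ∃ (p N₁ : ℕ), 0 < p ∧
      ∀ t, N₁ ≤ t → (σ j)^[t + p] = (σ j)^[t] := by
    intro j
    have key : ∀ a b : ℕ, a < b → (σ j)^[a] = (σ j)^[b] →
        ∃ p N₁, 0 < p ∧ ∀ t, N₁ ≤ t → (σ j)^[t + p] = (σ j)^[t] := by
      intro a b hab heq
      refine ⟨b - a, a, by omega, fun t ht => ?_⟩
      have h1 : t + (b - a) = (t - a) + b := by omega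
      have h2 : (t - a) + a = t := by omega
      rw [h1, Function.iterate_add, ← heq, ← Function.iterate_add, h2]
    obtain ⟨a, b, hab, heq⟩ :=
      Finite.exists_ne_map_eq_of_infinite (fun t : ℕ => (σ j)^[t])
    rcases lt_trichotomy a b with h | h | h
    · exact key a b h heq
    · exact absurd h hab
    · exact key b a h heq.symm
  choose pf N1f hpf0 hpf using hper
  set π := ∏ j, pf j with hπdef
  have hπpos : 0 < π := Finset.prod_pos (fun j _ => hpf0 j)
  set N₀ := Finset.univ.sup N1f with hN₀def
  have hperπ : ∀ (j : Fin k) (t : ℕ), N₀ ≤ t → (σ j)^[t + π] = (σ j)^[t] := by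
    intro j t ht
    have hN1 : N1f j ≤ t := le_trans (Finset.le_sup (Finset.mem_univ j)) ht
    obtain ⟨s, hs⟩ : pf j ∣ π := Finset.dvd_prod_of_mem pf (Finset.mem_univ j)
    have gen : ∀ s' : ℕ, (σ j)^[t + pf j * s'] = (σ j)^[t] := by
      intro s'
      induction s' with
      | zero => simp
      | succ s' ih =>
        have he : t + pf j * (s' + 1) = (t + pf j * s') + pf j := by ring
        rw [he, hpf j (t + pf j * s') (by omega), ih]
    rw [hs]; exact gen s
  have hiterper : ∀ (j : Fin k) (u s : ℕ), N₀ ≤ u → (σ j)^[u + π * s] = (σ j)^[u] := by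
    intro j u s hu
    induction s with
    | zero => simp
    | succ s ih =>
      have he : u + π * (s + 1) = (u + π * s) + π := by ring
      rw [he, hperπ j (u + π * s) (by omega), ih]
  have hmod : ∀ (j : Fin k) (u v : ℕ), N₀ ≤ u → N₀ ≤ v → u % π = v % π →
      (σ j)^[u] = (σ j)^[v] := by
    have key : ∀ (j : Fin k) (u v : ℕ), N₀ ≤ u → u ≤ v → u % π = v % π →
        (σ j)^[v] = (σ j)^[u] := by
      intro j u v hu huv hm
      have hz : (v - u) % π = 0 := Nat.sub_mod_eq_zero_of_mod_eq hm.symm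
      obtain ⟨s, hs⟩ := Nat.dvd_of_mod_eq_zero hz
      have he : v = u + π * s := by omega
      rw [he, hiterper j u s hu]
    intro j u v hu hv hm
    rcases Nat.le_total u v with h | h
    · exact (key j u v hu h hm).symm
    · exact key j v u hv h hm.symm
  -- the well-founded linear order on representations
  set ord : (Fin n × (Fin k → ℕ)) → (Fin n × (Fin k → ℕ)) → Prop :=
    Prod.Lex (· < ·) llt with hordd
  have ordwf : WellFounded ord := WellFounded.prod_lex wellFounded_lt llt_wf
  have ordtri : ∀ p q : Fin n × (Fin k → ℕ), p ≠ q → ord p q ∨ ord q p := by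
    intro p q hpq
    rcases lt_trichotomy p.1 q.1 with h | h | h
    · exact Or.inl (Prod.lex_def.mpr (Or.inl h))
    · have h2 : p.2 ≠ q.2 := fun hc => hpq (Prod.ext h hc)
      rcases llt_trichot h2 with hl | hl
      · exact Or.inl (Prod.lex_def.mpr (Or.inr ⟨h, hl⟩))
      · exact Or.inr (Prod.lex_def.mpr (Or.inr ⟨h.symm, hl⟩))
    · exact Or.inr (Prod.lex_def.mpr (Or.inl h))
  -- minimal representatives
  set S : (Fin d → ℤ) → Set (Fin n × (Fin k → ℕ)) := fun x => {pa | Θ pa.1 pa.2 = x} with hSS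
  have hSne : ∀ x ∈ Λ, (S x).Nonempty := by
    intro x hx
    obtain ⟨i, a, hia⟩ := h2 x hx
    exact ⟨(i, a), hia.symm⟩
  set mr : (Fin d → ℤ) → (Fin n × (Fin k → ℕ)) :=
    fun x => if hx : (S x).Nonempty then ordwf.min (S x) hx else Classical.arbitrary _ with hmrd
  have hmrS : ∀ x ∈ Λ, mr x ∈ S x := by
    intro x hx
    simp only [hmrd, dif_pos (hSne x hx)]
    exact ordwf.min_mem _ _
  have hmrmin : ∀ x ∈ Λ, ∀ pa ∈ S x, ¬ ord pa (mr x) := by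
    intro x hx pa hpa
    simp only [hmrd, dif_pos (hSne x hx)]
    exact ordwf.not_lt_min _ hpa
  -- additivity of Θ
  have hΘadd : ∀ (p : Fin n) (c δ' : Fin k → ℕ),
      Θ p (fun l => c l + δ' l) = Θ p c + ∑ l, δ' l • w l := by
    intro p c δ'
    show fb p + ∑ l, (c l + δ' l) • w l = (fb p + ∑ l, c l • w l) + ∑ l, δ' l • w l
    have e : ∑ l, (c l + δ' l) • w l = ∑ l, (c l • w l + δ' l • w l) :=
      Finset.sum_congr rfl (fun l _ => add_nsmul (w l) (c l) (δ' l))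
    rw [e, Finset.sum_add_distrib, add_assoc]
  set R : Set (Fin n × (Fin k → ℕ)) := {pa | mr (Θ pa.1 pa.2) = pa} with hRR
  set E : Fin n → Set (Fin k → ℕ) := fun i => {a | (i, a) ∉ R} with hEE
  have hEup : ∀ i, ∀ a ∈ E i, ∀ b, a ≤ b → b ∈ E i := by
    intro i a ha b hab
    have hxΛ : Θ i a ∈ Λ := hΘΛ i a
    have hmx : mr (Θ i a) ∈ S (Θ i a) := hmrS _ hxΛ
    have hne : mr (Θ i a) ≠ (i, a) := ha
    have hordm : ord (mr (Θ i a)) (i, a) := by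
      rcases ordtri (mr (Θ i a)) (i, a) hne with h | h
      · exact h
      · exact absurd h (hmrmin _ hxΛ (i, a) rfl)
    set δ : Fin k → ℕ := fun l => b l - a l with hδd
    have hb : b = fun l => a l + δ l := by
      funext l
      have hl : a l ≤ b l := hab l
      show b l = a l + (b l - a l)
      omega
    set m' : Fin n × (Fin k → ℕ) := ((mr (Θ i a)).1, fun l => (mr (Θ i a)).2 l + δ l) with hm'd
    have hm'S : m' ∈ S (Θ i b) := by
      show Θ m'.1 m'.2 = Θ i b
      have e1 : Θ m'.1 m'.2 = Θ (mr (Θ i a)).1 (mr (Θ i a)).2 + ∑ l, δ l • w l := hΘadd _ _ _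
      have e2 : Θ i b = Θ i a + ∑ l, δ l • w l := by
        rw [hb]; exact hΘadd _ _ _
      rw [e1, e2, hmx]
    have hordm' : ord m' (i, b) := by
      rcases Prod.lex_def.mp hordm with h | h
      · exact Prod.lex_def.mpr (Or.inl h)
      · refine Prod.lex_def.mpr (Or.inr ⟨h.1, ?_⟩)
        show llt m'.2 b
        rw [hb]
        exact llt_add δ h.2
    intro hcon
    have hcon' : mr (Θ i b) = (i, b) := hcon
    have := hmrmin (Θ i b) (hΘΛ i b) m' hm'S
    rw [hcon'] at this
    exact this hordm'
  -- Dickson bases for the bad sets, and the threshold T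
  have hdick : ∀ i, ∃ M : Finset (Fin k → ℕ), ↑M ⊆ E i ∧ ∀ b, b ∈ E i ↔ ∃ m ∈ M, m ≤ b :=
    fun i => dickson (E i) (fun a ha b hab => hEup i a ha b hab)
  choose Mk hMk1 hMk2 using hdick
  set TB : ℕ := Finset.univ.sup (fun i : Fin n => (Mk i).sup (fun m => Finset.univ.sup m)) with hTBd
  set T : ℕ := max N₀ TB with hTd
  have hTN : N₀ ≤ T := le_max_left _ _
  have hTm : ∀ i, ∀ m ∈ Mk i, ∀ j, m j ≤ T := by
    intro i m hm j
    have h1 : m j ≤ Finset.univ.sup m := Finset.le_sup (Finset.mem_univ j)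
    have h2 : Finset.univ.sup m ≤ (Mk i).sup (fun m => Finset.univ.sup m) := Finset.le_sup hm
    have h3 : (Mk i).sup (fun m => Finset.univ.sup m) ≤ TB :=
      Finset.le_sup (f := fun i => (Mk i).sup fun m => Finset.univ.sup m) (Finset.mem_univ i)
    exact le_trans (le_trans h1 (le_trans h2 h3)) (le_max_right _ _)
  -- cells
  set coordSet : (Fin T ⊕ Fin π) → Set ℕ := fun g =>
    Sum.elim (fun c : Fin T => {u : ℕ | u = (c : ℕ)})
      (fun s : Fin π => {u : ℕ | ∃ t, u = (T + (s : ℕ)) + π * t}) g with hcoordd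
  set cell : (Fin k → (Fin T ⊕ Fin π)) → Set (Fin k → ℕ) :=
    fun γ => {a | ∀ j, a j ∈ coordSet (γ j)} with hcelld
  set bse : (Fin k → (Fin T ⊕ Fin π)) → (Fin k → ℕ) :=
    fun γ j => Sum.elim (fun c : Fin T => (c : ℕ)) (fun s : Fin π => T + (s : ℕ)) (γ j) with hbsed
  have hbse_mem : ∀ γ, bse γ ∈ cell γ := by
    intro γ j
    show bse γ j ∈ coordSet (γ j)
    rcases hγ : γ j with c | s
    · simp only [hcoordd, Sum.elim_inl, Set.mem_setOf_eq]
      simp [hbsed, hγ]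
    · simp only [hcoordd, Sum.elim_inr, Set.mem_setOf_eq]
      exact ⟨0, by simp [hbsed, hγ]⟩
  set cellOf : (Fin k → ℕ) → (Fin k → (Fin T ⊕ Fin π)) :=
    fun a j => if h : a j < T then Sum.inl ⟨a j, h⟩
      else Sum.inr ⟨(a j - T) % π, Nat.mod_lt _ hπpos⟩ with hcellOfd
  have hmem_cellOf : ∀ a, a ∈ cell (cellOf a) := by
    intro a j
    show a j ∈ coordSet (cellOf a j)
    by_cases h : a j < T
    · simp [hcellOfd, hcoordd, h]
    · have hd := Nat.div_add_mod (a j - T) π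
      simp only [hcellOfd, dif_neg h, hcoordd, Sum.elim_inr, Set.mem_setOf_eq]
      exact ⟨(a j - T) / π, by omega⟩
  have hcellOf_unique : ∀ γ a, a ∈ cell γ → γ = cellOf a := by
    intro γ a ha
    funext j
    have haj : a j ∈ coordSet (γ j) := ha j
    rcases hγ : γ j with c | s
    · rw [hγ] at haj
      have he : a j = (c : ℕ) := by simpa [hcoordd] using haj
      have hlt : a j < T := by rw [he]; exact c.isLt
      simp only [hcellOfd, dif_pos hlt]
      congr 1
      exact Fin.ext he.symm
    · rw [hγ] at haj
      obtain ⟨t, ht⟩ : ∃ t, a j = (T + (s : ℕ)) + π * t := by simpa [hcoordd] using haj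
      have hge : ¬ a j < T := by omega
      simp only [hcellOfd, dif_neg hge]
      congr 1
      refine Fin.ext ?_
      show (s : ℕ) = (a j - T) % π
      have h1 : a j - T = (s : ℕ) + π * t := by omega
      rw [h1, Nat.add_mul_mod_self_left, Nat.mod_eq_of_lt s.isLt]
  have hcell_corner : ∀ γ (mv : Fin k → ℕ), (∀ j, mv j ≤ T) →
      (∃ a ∈ cell γ, mv ≤ a) → ∀ b ∈ cell γ, mv ≤ b := by
    rintro γ mv hmv ⟨a, ha, hma⟩ b hb j
    have haj : a j ∈ coordSet (γ j) := ha j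
    have hbj : b j ∈ coordSet (γ j) := hb j
    rcases hγ : γ j with c | s
    · rw [hγ] at haj hbj
      have ha' : a j = (c : ℕ) := by simpa [hcoordd] using haj
      have hb' : b j = (c : ℕ) := by simpa [hcoordd] using hbj
      rw [hb', ← ha']
      exact hma j
    · rw [hγ] at hbj
      obtain ⟨t, ht⟩ : ∃ t, b j = (T + (s : ℕ)) + π * t := by simpa [hcoordd] using hbj
      rw [ht]
      exact le_trans (hmv j) (le_trans (Nat.le_add_right T _) (Nat.le_add_right _ _))
  have hcell_R : ∀ i γ, (∃ a ∈ cell γ, (i, a) ∈ R) → ∀ b ∈ cell γ, (i, b) ∈ R := by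
    rintro i γ ⟨a, ha, haR⟩ b hb
    by_contra hbR
    have hbE : b ∈ E i := hbR
    obtain ⟨m, hm, hmb⟩ := (hMk2 i b).mp hbE
    have hma : m ≤ a := hcell_corner γ m (hTm i m hm) ⟨b, hb, hmb⟩ a ha
    have haE : a ∈ E i := (hMk2 i a).mpr ⟨m, hm, hma⟩
    exact haE haR
  -- class constancy on cells
  have hclup : ∀ x ∈ Λ, ∀ a a' : Fin k → ℕ,
      (∀ j, a j = a' j ∨ (N₀ ≤ a j ∧ N₀ ≤ a' j ∧ a j % π = a' j % π)) →
      cl (x + ∑ j, a j • w j) = cl (x + ∑ j, a' j • w j) := by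
    intro x hx
    have key : ∀ s : Finset (Fin k), ∀ a a' : Fin k → ℕ,
        (∀ j, a j = a' j ∨ (N₀ ≤ a j ∧ N₀ ≤ a' j ∧ a j % π = a' j % π)) →
        (∀ j ∉ s, a j = a' j) →
        cl (x + ∑ j, a j • w j) = cl (x + ∑ j, a' j • w j) := by
      intro s
      induction s using Finset.induction_on with
      | empty =>
        intro a a' _ hout
        have he : a = a' := funext fun j => hout j (Finset.notMem_empty j)
        rw [he]
      | @insert j0 s hj0 ih =>
        intro a a' hcond hout
        set a'' := Function.update a j0 (a' j0) with ha''
        have hstep1 : cl (x + ∑ j, a j • w j) = cl (x + ∑ j, a'' j • w j) := by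
          rcases hcond j0 with he | hper'
          · have he2 : a'' = a := by rw [ha'', ← he, Function.update_eq_self]
            rw [he2]
          · set b0 := Function.update a j0 0 with hb0
            have hsum_split : ∀ v : ℕ, ∑ j, (Function.update a j0 v) j • w j
                = v • w j0 + ∑ j, b0 j • w j := by
              intro v
              have e1 : ∑ j, (Function.update a j0 v) j • w j
                  = v • w j0 + ∑ j ∈ Finset.univ.erase j0, a j • w j := by
                rw [← Finset.add_sum_erase _ (fun j => (Function.update a j0 v) j • w j)
                  (Finset.mem_univ j0)]
                congr 1
                · rw [Function.update_self]
                · exact Finset.sum_congr rfl fun j hj => by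
                    rw [Function.update_of_ne (Finset.ne_of_mem_erase hj)]
              have e2 : ∑ j, b0 j • w j = ∑ j ∈ Finset.univ.erase j0, a j • w j := by
                rw [← Finset.add_sum_erase _ (fun j => b0 j • w j) (Finset.mem_univ j0)]
                rw [hb0, Function.update_self, zero_smul, zero_add]
                exact Finset.sum_congr rfl fun j hj => by
                  rw [Function.update_of_ne (Finset.ne_of_mem_erase hj)]
              rw [e1, e2]
            have hyΛ : x + ∑ j, b0 j • w j ∈ Λ := hΛsum x hx b0
            have htrans : ∀ v : ℕ, cl (x + ∑ j, (Function.update a j0 v) j • w j)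
                = (σ j0)^[v] (cl (x + ∑ j, b0 j • w j)) := by
              intro v
              rw [hsum_split v]
              have he3 : x + (v • w j0 + ∑ j, b0 j • w j)
                  = (x + ∑ j, b0 j • w j) + v • w j0 := by abel
              rw [he3]
              exact hiter _ hyΛ j0 v
            have ha_upd : Function.update a j0 (a j0) = a := Function.update_eq_self _ _
            calc cl (x + ∑ j, a j • w j)
                = cl (x + ∑ j, (Function.update a j0 (a j0)) j • w j) := by rw [ha_upd]
              _ = (σ j0)^[a j0] (cl (x + ∑ j, b0 j • w j)) := htrans _
              _ = (σ j0)^[a' j0] (cl (x + ∑ j, b0 j • w j)) := by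
                  rw [hmod j0 _ _ hper'.1 hper'.2.1 hper'.2.2]
              _ = cl (x + ∑ j, a'' j • w j) := (htrans _).symm
        have hstep2 : cl (x + ∑ j, a'' j • w j) = cl (x + ∑ j, a' j • w j) := by
          refine ih a'' a' ?_ ?_
          · intro j
            by_cases hjj : j = j0
            · subst hjj; left; rw [ha'', Function.update_self]
            · rw [ha'', Function.update_of_ne hjj]; exact hcond j
          · intro j hjs
            by_cases hjj : j = j0
            · subst hjj; rw [ha'', Function.update_self]
            · rw [ha'', Function.update_of_ne hjj]
              exact hout j (by simp [hjj, hjs])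
        rw [hstep1, hstep2]
    exact fun a a' hcond => key Finset.univ a a' hcond
      (fun j hj => absurd (Finset.mem_univ j) hj)
  have hclcell : ∀ i γ, ∀ a ∈ cell γ, cl (Θ i a) = cl (Θ i (bse γ)) := by
    intro i γ a ha
    refine hclup (fb i) (h3 i) a (bse γ) ?_
    intro j
    have haj : a j ∈ coordSet (γ j) := ha j
    rcases hγ : γ j with c | s
    · rw [hγ] at haj
      have he : a j = (c : ℕ) := by simpa [hcoordd] using haj
      left
      have : bse γ j = (c : ℕ) := by simp [hbsed, hγ]
      omega
    · rw [hγ] at haj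
      obtain ⟨t, ht⟩ : ∃ t, a j = (T + (s : ℕ)) + π * t := by simpa [hcoordd] using haj
      right
      have hbj : bse γ j = T + (s : ℕ) := by simp [hbsed, hγ]
      refine ⟨by omega, by omega, ?_⟩
      rw [ht, hbj, Nat.add_mul_mod_self_left]
  -- generating finsets for the submonoids
  set Sfin : (Fin k → (Fin T ⊕ Fin π)) → Finset (Fin d → ℤ) :=
    fun γ => (Finset.univ.filter (fun j => (γ j).isRight)).image (fun j => π • w j) with hSfind
  -- strata are exactly the Θ-images of cells
  have hstrat : ∀ i γ,
      (↑({Θ i (bse γ)} : Finset (Fin d → ℤ)) : Set (Fin d → ℤ))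
        + ↑(AddSubmonoid.closure (↑(Sfin γ) : Set (Fin d → ℤ)))
      = {x | ∃ a ∈ cell γ, Θ i a = x} := by
    intro i γ
    have hchar : ∀ v, v ∈ AddSubmonoid.closure (↑(Sfin γ) : Set (Fin d → ℤ)) →
        ∃ t : Fin k → ℕ, (∀ j, (γ j).isRight = false → t j = 0) ∧
          v = ∑ j, (t j * π) • w j := by
      intro v hv
      refine AddSubmonoid.closure_induction ?_ ?_ ?_ hv
      · rintro v hvS
        obtain ⟨j, hj, rfl⟩ : ∃ j, (γ j).isRight ∧ π • w j = v := by
          simpa only [hSfind, Finset.coe_image, Set.mem_image, Finset.mem_coe,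
            Finset.mem_filter, Finset.mem_univ, true_and] using hvS
        refine ⟨fun l => if l = j then 1 else 0, ?_, ?_⟩
        · intro l hlf
          by_cases hlj : l = j
          · subst hlj; rw [hlf] at hj; cases hj
          · simp [hlj]
        · rw [Finset.sum_eq_single j]
          · simp
          · intro l _ hlj; simp [hlj]
          · intro hju; exact absurd (Finset.mem_univ j) hju
      · exact ⟨0, fun _ _ => rfl, by simp⟩
      · rintro v₁ v₂ hv₁ hv₂ ⟨t₁, ht₁, he₁⟩ ⟨t₂, ht₂, he₂⟩
        refine ⟨fun l => t₁ l + t₂ l, fun l hl => by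
          show t₁ l + t₂ l = 0
          rw [ht₁ l hl, ht₂ l hl], ?_⟩
        rw [he₁, he₂, ← Finset.sum_add_distrib]
        refine Finset.sum_congr rfl fun l _ => ?_
        rw [add_mul, add_nsmul]
    ext x
    simp only [Set.mem_add, Finset.coe_singleton, Set.mem_singleton_iff, SetLike.mem_coe,
      Set.mem_setOf_eq]
    constructor
    · rintro ⟨y, hy, v, hv, hsum⟩
      obtain ⟨t, ht0, htv⟩ := hchar v hv
      refine ⟨fun l => bse γ l + π * t l, ?_, ?_⟩
      · intro j
        show bse γ j + π * t j ∈ coordSet (γ j)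
        rcases hγ : γ j with c | s
        · have h0 : t j = 0 := ht0 j (by rw [hγ]; rfl)
          have hb : bse γ j = (c : ℕ) := by simp [hbsed, hγ]
          simp only [hcoordd, Sum.elim_inl, Set.mem_setOf_eq]
          rw [h0, Nat.mul_zero, Nat.add_zero, hb]
        · have hb : bse γ j = T + (s : ℕ) := by simp [hbsed, hγ]
          simp only [hcoordd, Sum.elim_inr, Set.mem_setOf_eq]
          exact ⟨t j, by rw [hb]⟩
      · rw [← hsum, hy, htv]
        calc Θ i (fun l => bse γ l + π * t l)
            = Θ i (bse γ) + ∑ l, (π * t l) • w l := hΘadd _ _ _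
          _ = Θ i (bse γ) + ∑ l, (t l * π) • w l := by
              congr 1
              exact Finset.sum_congr rfl fun l _ => by rw [Nat.mul_comm]
    · rintro ⟨a, ha, rfl⟩
      have hrepc : ∀ l, a l = bse γ l + π * ((a l - bse γ l) / π) := by
        intro l
        have hal : a l ∈ coordSet (γ l) := ha l
        rcases hγ : γ l with c | s
        · rw [hγ] at hal
          have he : a l = (c : ℕ) := by simpa [hcoordd] using hal
          have hb : bse γ l = (c : ℕ) := by simp [hbsed, hγ]
          rw [he, hb]
          simp
        · rw [hγ] at hal
          obtain ⟨t, ht⟩ : ∃ t, a l = (T + (s : ℕ)) + π * t := by simpa [hcoordd] using hal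
          have hb : bse γ l = T + (s : ℕ) := by simp [hbsed, hγ]
          rw [ht, hb]
          have hsub : (T + (s : ℕ)) + π * t - (T + (s : ℕ)) = π * t := by omega
          rw [hsub, Nat.mul_div_cancel_left t hπpos]
      refine ⟨Θ i (bse γ), rfl, ∑ l, (((a l - bse γ l) / π) * π) • w l, ?_, ?_⟩
      · refine AddSubmonoid.sum_mem _ (fun l _ => ?_)
        rcases hγ : γ l with c | s
        · have hal : a l ∈ coordSet (γ l) := ha l
          rw [hγ] at hal
          have he : a l = (c : ℕ) := by simpa [hcoordd] using hal
          have hb : bse γ l = (c : ℕ) := by simp [hbsed, hγ]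
          have h0 : (a l - bse γ l) / π = 0 := by rw [he, hb]; simp
          rw [h0, Nat.zero_mul, zero_smul]
          exact AddSubmonoid.zero_mem _
        · have hmem : π • w l ∈ (↑(Sfin γ) : Set (Fin d → ℤ)) := by
            simp only [hSfind, Finset.coe_image, Set.mem_image, Finset.mem_coe,
              Finset.mem_filter, Finset.mem_univ, true_and]
            exact ⟨l, by rw [hγ]; rfl, rfl⟩
          have hmemS : π • w l ∈ AddSubmonoid.closure (↑(Sfin γ) : Set (Fin d → ℤ)) :=
            AddSubmonoid.subset_closure hmem
          have hns := AddSubmonoid.nsmul_mem _ hmemS ((a l - bse γ l) / π)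
          rw [smul_smul] at hns
          exact hns
      · have ha' : a = fun l => bse γ l + ((a l - bse γ l) / π) * π := by
          funext l
          rw [Nat.mul_comm]
          exact hrepc l
        calc Θ i (bse γ) + ∑ l, (((a l - bse γ l) / π) * π) • w l
            = Θ i (fun l => bse γ l + ((a l - bse γ l) / π) * π) := (hΘadd _ _ _).symm
          _ = Θ i a := by rw [← ha']
  -- selection of nonempty strata
  set Sel : Fin n → (Fin k → (Fin T ⊕ Fin π)) → Prop :=
    fun i γ => (∀ a ∈ cell γ, (i, a) ∈ R) ∧ Θ i (bse γ) ∈ Pos with hSeld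
  set Fm : (Fin n × (Fin k → Fin T ⊕ Fin π)) → Finset (Fin d → ℤ) :=
    fun p => if Sel p.1 p.2 then {Θ p.1 (bse p.2)} else ∅ with hFmd
  set Am : (Fin n × (Fin k → Fin T ⊕ Fin π)) → AddSubmonoid (Fin d → ℤ) :=
    fun p => if Sel p.1 p.2 then AddSubmonoid.closure (↑(Sfin p.2)) else ⊥ with hAmd
  set e := (Fintype.equivFin (Fin n × (Fin k → Fin T ⊕ Fin π))).symm with hed
  refine ⟨_, fun q => Fm (e q), fun q => Am (e q), ?_, ?_, ?_⟩
  · -- finite generation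
    intro q
    dsimp only
    simp only [hAmd]
    by_cases hsel : Sel (e q).1 (e q).2
    · simp only [if_pos hsel]
      exact ⟨Sfin (e q).2, rfl⟩
    · simp only [if_neg hsel]
      exact ⟨∅, by simp⟩
  · -- pairwise disjointness
    intro p q hpq
    have hempty : ∀ (B : AddSubmonoid (Fin d → ℤ)),
        ((↑(∅ : Finset (Fin d → ℤ)) : Set (Fin d → ℤ)) + (B : Set (Fin d → ℤ))) = ∅ := by
      intro B
      rw [Finset.coe_empty, Set.empty_add]
    by_cases hp : Sel (e p).1 (e p).2
    · by_cases hq : Sel (e q).1 (e q).2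
      · dsimp only
        simp only [hFmd, hAmd, if_pos hp, if_pos hq]
        rw [Set.disjoint_left]
        intro x hx1 hx2
        obtain ⟨a, ha, hΘa⟩ := (Set.ext_iff.mp (hstrat (e p).1 (e p).2) x).mp hx1
        obtain ⟨a', ha', hΘa'⟩ := (Set.ext_iff.mp (hstrat (e q).1 (e q).2) x).mp hx2
        have r1 : ((e p).1, a) ∈ R := hp.1 a ha
        have r2 : ((e q).1, a') ∈ R := hq.1 a' ha'
        have hr1 : mr x = ((e p).1, a) := by rw [← hΘa]; exact r1
        have hr2 : mr x = ((e q).1, a') := by rw [← hΘa']; exact r2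
        rw [hr1] at hr2
        injection hr2 with heq1 heq2
        have hγeq : (e p).2 = (e q).2 := by
          rw [hcellOf_unique (e p).2 a ha, hcellOf_unique (e q).2 a' ha', heq2]
        have : e p = e q := Prod.ext heq1 hγeq
        exact hpq (e.injective this)
      · dsimp only
        simp only [hFmd, hAmd, if_neg hq]
        rw [hempty]
        exact Set.disjoint_empty _
    · dsimp only
      simp only [hFmd, hAmd, if_neg hp]
      rw [hempty]
      exact Set.empty_disjoint _
  · -- the union is Pos
    ext x
    simp only [Set.mem_iUnion]
    constructor
    · intro hx
      have hxΛ : x ∈ Λ := h5 hx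
      have hmx : Θ (mr x).1 (mr x).2 = x := hmrS x hxΛ
      have haR : ((mr x).1, (mr x).2) ∈ R := by
        show mr (Θ (mr x).1 (mr x).2) = ((mr x).1, (mr x).2)
        rw [hmx]
      set γ0 := cellOf (mr x).2 with hγ0
      have hSel : Sel (mr x).1 γ0 := by
        constructor
        · exact hcell_R (mr x).1 γ0 ⟨(mr x).2, hmem_cellOf (mr x).2, haR⟩
        · have hcl := hclcell (mr x).1 γ0 (mr x).2 (hmem_cellOf (mr x).2)
          have hiff := h6 _ (hΘΛ (mr x).1 (mr x).2) _ (hΘΛ (mr x).1 (bse γ0)) hcl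
          exact hiff.mp (by rw [hmx]; exact hx)
      refine ⟨e.symm ((mr x).1, γ0), ?_⟩
      simp only [hFmd, hAmd, Equiv.apply_symm_apply]
      simp only [if_pos hSel]
      exact (Set.ext_iff.mp (hstrat (mr x).1 γ0) x).mpr ⟨(mr x).2, hmem_cellOf (mr x).2, hmx⟩
    · rintro ⟨q, hq⟩
      simp only [hFmd, hAmd] at hq
      by_cases hsel : Sel (e q).1 (e q).2
      · simp only [if_pos hsel] at hq
        obtain ⟨a, ha, hΘa⟩ := (Set.ext_iff.mp (hstrat (e q).1 (e q).2) x).mp hq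
        have hcl := hclcell (e q).1 (e q).2 a ha
        have hiff := h6 _ (hΘΛ (e q).1 a) _ (hΘΛ (e q).1 (bse (e q).2)) hcl
        rw [← hΘa]
        exact hiff.mpr hsel.2
      · simp only [if_neg hsel] at hq
        rw [Finset.coe_empty, Set.empty_add] at hq
        exact absurd hq (Set.notMem_empty x)






end LGAux

/-- A lattice game `G = (Γ, B)` is played on `Λ = Π ∩ ℤ^d`, where `Π = P + C` is a
pointed rational convex polyhedron with full-dimensional recession cone `C`.  If the
misère quotient `Λ/∼` is finite (the indistinguishability relation `∼` has finitely
many classes), then the set `Pos` of P-positions of `G` possesses an affine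
stratification. -/
theorem lattice_game_finite_misere_quotient_isAffineStratification {d : ℕ}
    (m k : ℕ) (pv : Fin m → (Fin d → ℚ)) (cv : Fin k → (Fin d → ℚ))
    (P C Pl : Set (Fin d → ℝ))
    -- Π = P + C is a pointed rational polyhedron with recession cone C of dimension d
    (hP : P = convexHull ℝ (Set.range fun i => fun j => ((pv i j : ℝ))))
    (hC : C = {x | ∃ c : Fin k → ℝ, (∀ i, 0 ≤ c i) ∧
      x = ∑ i, c i • fun j => ((cv i j : ℝ))})
    (hpointed : C ∩ (-C) = {(0 : Fin d → ℝ)})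
    (hdim : Submodule.span ℝ C = ⊤)
    (hPl : Pl = P + C)
    -- Λ = Π ∩ ℤ^d
    (Λ : Set (Fin d → ℤ)) (hΛ : Λ = {x : Fin d → ℤ | (fun j => (x j : ℝ)) ∈ Pl})
    -- Γ is a rule set
    (Γ : Finset (Fin d → ℤ)) (hΓ0 : (0 : Fin d → ℤ) ∉ Γ)
    (ℓ : (Fin d → ℝ) →ₗ[ℝ] ℝ)
    (hℓΓ : ∀ γ ∈ Γ, 0 < ℓ (fun j => (γ j : ℝ)))
    (hℓC : ∀ x ∈ C, x ≠ 0 → 0 < ℓ x)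
    (F : Finset (Fin d → ℤ)) (hFΛ : (F : Set (Fin d → ℤ)) ⊆ Λ)
    (hpath : ∀ p ∈ Λ, ∃ (r : ℕ) (seq : ℕ → (Fin d → ℤ)),
      seq r = p ∧ seq 0 ∈ F ∧ (∀ i ≤ r, seq i ∈ Λ) ∧
      ∀ i < r, seq (i + 1) - seq i ∈ Γ)
    -- B = Λ ∖ D is a game board: D is a finite Γ-order ideal of defeated positions
    (D : Finset (Fin d → ℤ)) (hDΛ : (D : Set (Fin d → ℤ)) ⊆ Λ)
    (hD : ∀ p ∈ Λ, ∀ q ∈ D, q - p ∈ AddSubmonoid.closure (Γ : Set (Fin d → ℤ)) → p ∈ D)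
    (B : Set (Fin d → ℤ)) (hB : B = Λ \ (D : Set (Fin d → ℤ)))
    -- Pos is the set of P-positions
    (Pos : Set (Fin d → ℤ)) (hPosB : Pos ⊆ B)
    (hPos : (Pos + (Γ : Set (Fin d → ℤ))) ∩ B = B \ Pos)
    -- the misère quotient Λ/∼ is finite
    (hfin : Finite (Quot fun p q : {x : Fin d → ℤ // x ∈ Λ} =>
      Indist C Pos (p : Fin d → ℤ) (q : Fin d → ℤ))) :
    IsAffineStratification Pos := by
  classical
  -- the integer cast map
  set ι : (Fin d → ℤ) → (Fin d → ℝ) := fun x j => (x j : ℝ) with hιd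
  have hι_add : ∀ x y : Fin d → ℤ, ι (x + y) = ι x + ι y := by
    intro x y
    funext j
    simp [hιd]
  -- basic facts about the cone C
  have hC0 : (0 : Fin d → ℝ) ∈ C := by
    rw [hC]
    exact ⟨0, fun i => le_refl 0, by simp⟩
  have hCadd : ∀ x ∈ C, ∀ y ∈ C, x + y ∈ C := by
    intro x hx y hy
    rw [hC] at hx hy ⊢
    obtain ⟨c, hc, rfl⟩ := hx
    obtain ⟨c', hc', rfl⟩ := hy
    refine ⟨fun i => c i + c' i, fun i => by have := hc i; have := hc' i; positivity, ?_⟩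
    rw [← Finset.sum_add_distrib]
    exact Finset.sum_congr rfl fun i _ => (add_smul (c i) (c' i) _).symm
  have hCsmul : ∀ (r : ℝ), 0 ≤ r → ∀ x ∈ C, r • x ∈ C := by
    intro r hr x hx
    rw [hC] at hx ⊢
    obtain ⟨c, hc, rfl⟩ := hx
    refine ⟨fun i => r * c i, fun i => mul_nonneg hr (hc i), ?_⟩
    rw [Finset.smul_sum]
    exact Finset.sum_congr rfl fun i _ => (smul_smul r (c i) _)
  -- the polyhedron is closed under adding cone elements
  have hPlC : ∀ x ∈ Pl, ∀ c ∈ C, x + c ∈ Pl := by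
    intro x hx c hc
    rw [hPl] at hx ⊢
    obtain ⟨p, hp, c₀, hc₀, rfl⟩ := hx
    exact ⟨p, hp, c₀ + c, hCadd c₀ hc₀ c hc, (add_assoc _ _ _).symm⟩
  -- integer scalings of the cone generators
  set Ni : Fin k → ℕ := fun i => ∏ j, (cv i j).den with hNid
  have hNipos : ∀ i, 0 < Ni i := by
    intro i
    exact Finset.prod_pos fun j _ => (cv i j).pos
  set w : Fin k → (Fin d → ℤ) := fun i j => (cv i j).num * ((Ni i : ℤ) / ((cv i j).den : ℤ)) with hwd
  have hwcastQ : ∀ i j, ((w i j : ℤ) : ℚ) = (Ni i : ℚ) * cv i j := by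
    intro i j
    have hdvd : ((cv i j).den : ℤ) ∣ (Ni i : ℤ) := by
      have : (cv i j).den ∣ Ni i := Finset.dvd_prod_of_mem (fun j => (cv i j).den) (Finset.mem_univ j)
      exact Int.natCast_dvd_natCast.mpr this
    have hmul : ((Ni i : ℤ) / ((cv i j).den : ℤ)) * ((cv i j).den : ℤ) = (Ni i : ℤ) :=
      Int.ediv_mul_cancel hdvd
    have hden0 : (((cv i j).den : ℤ) : ℚ) ≠ 0 := by
      exact_mod_cast (Nat.cast_ne_zero (R := ℚ)).mpr (cv i j).den_nz
    have hmulQ : (((Ni i : ℤ) / ((cv i j).den : ℤ) : ℤ) : ℚ) * (((cv i j).den : ℤ) : ℚ)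
        = ((Ni i : ℤ) : ℚ) := by
      exact_mod_cast congrArg (fun z : ℤ => (z : ℚ)) hmul
    have hq : ((cv i j).num : ℚ) = cv i j * ((cv i j).den : ℚ) := by
      have hnd := Rat.num_div_den (cv i j)
      have hden0' : ((cv i j).den : ℚ) ≠ 0 := by
        exact_mod_cast (Nat.cast_ne_zero (R := ℚ)).mpr (cv i j).den_nz
      exact (div_eq_iff hden0').mp hnd
    show (((cv i j).num * ((Ni i : ℤ) / ((cv i j).den : ℤ)) : ℤ) : ℚ) = (Ni i : ℚ) * cv i j
    push_cast
    push_cast at hmulQ hq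
    calc ((cv i j).num : ℚ) * (((Ni i : ℤ) / ((cv i j).den : ℤ) : ℤ) : ℚ)
        = cv i j * (((cv i j).den : ℚ) * (((Ni i : ℤ) / ((cv i j).den : ℤ) : ℤ) : ℚ)) := by
          rw [hq]; ring
      _ = cv i j * (Ni i : ℚ) := by rw [mul_comm ((cv i j).den : ℚ) _, hmulQ]
      _ = (Ni i : ℚ) * cv i j := by ring
  have hwcast : ∀ i j, ((w i j : ℤ) : ℝ) = (Ni i : ℝ) * ((cv i j : ℚ) : ℝ) := by
    intro i j
    have := hwcastQ i j
    have h2 : (((w i j : ℤ) : ℚ) : ℝ) = (((Ni i : ℚ) * cv i j : ℚ) : ℝ) := by rw [this]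
    push_cast at h2
    push_cast
    exact h2
  have hwC : ∀ i, ι (w i) ∈ C := by
    intro i
    rw [hC]
    refine ⟨fun l => if l = i then (Ni i : ℝ) else 0, ?_, ?_⟩
    · intro l
      show 0 ≤ if l = i then ((Ni i : ℕ) : ℝ) else 0
      by_cases h : l = i
      · rw [if_pos h]
        positivity
      · rw [if_neg h]
    · rw [Finset.sum_eq_single i (fun l _ hl => by simp [hl])
        (fun h => absurd (Finset.mem_univ i) h)]
      simp only [if_pos rfl]
      funext j
      simp only [hιd, Pi.smul_apply, smul_eq_mul]
      exact hwcast i j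
  -- ι of an ℕ-combination of the w's
  have hιsum : ∀ a : Fin k → ℕ, ι (∑ j, a j • w j) = ∑ j, (a j : ℝ) • ι (w j) := by
    intro a
    funext l
    simp only [hιd, Finset.sum_apply, Pi.smul_apply, smul_eq_mul, nsmul_eq_mul,
      Pi.mul_apply, Pi.natCast_apply]
    push_cast
    rfl
  have hCsum : ∀ a : Fin k → ℕ, ι (∑ j, a j • w j) ∈ C := by
    intro a
    rw [hιsum]
    refine Finset.sum_induction _ (fun z => z ∈ C) (fun x y hx hy => hCadd x hx y hy) hC0 ?_
    intro j _
    exact hCsmul _ (by positivity) _ (hwC j)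
  -- Λ is closed under adding cone lattice vectors
  have hΛadd : ∀ x ∈ Λ, ∀ v : Fin d → ℤ, ι v ∈ C → x + v ∈ Λ := by
    intro x hx v hv
    rw [hΛ] at hx ⊢
    show ι (x + v) ∈ Pl
    rw [hι_add]
    exact hPlC _ hx _ hv
  -- bound on the polytope part
  set BP : ℝ := ∑ i, ∑ j, |((pv i j : ℚ) : ℝ)| with hBPd
  have hBP : ∀ p ∈ P, ∀ j, |p j| ≤ BP := by
    have hconv : Convex ℝ {x : Fin d → ℝ | ∀ j, |x j| ≤ BP} := by
      intro x hx y hy a b ha hb hab j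
      have he : (a • x + b • y) j = a * x j + b * y j := by simp
      rw [he]
      calc |a * x j + b * y j| ≤ |a * x j| + |b * y j| := abs_add_le _ _
        _ = a * |x j| + b * |y j| := by
            rw [abs_mul, abs_mul, abs_of_nonneg ha, abs_of_nonneg hb]
        _ ≤ a * BP + b * BP := by nlinarith [hx j, hy j, abs_nonneg (x j), abs_nonneg (y j)]
        _ = BP := by rw [← add_mul, hab, one_mul]
    have hrange : (Set.range fun i => fun j => ((pv i j : ℝ))) ⊆
        {x : Fin d → ℝ | ∀ j, |x j| ≤ BP} := by
      rintro _ ⟨i, rfl⟩ j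
      have h1 : |((pv i j : ℚ) : ℝ)| ≤ ∑ j', |((pv i j' : ℚ) : ℝ)| :=
        Finset.single_le_sum (f := fun j' => |((pv i j' : ℚ) : ℝ)|)
          (fun _ _ => abs_nonneg _) (Finset.mem_univ j)
      have h2 : ∑ j', |((pv i j' : ℚ) : ℝ)| ≤ BP := by
        rw [hBPd]
        exact Finset.single_le_sum
          (f := fun i' => ∑ j', |((pv i' j' : ℚ) : ℝ)|)
          (fun i' _ => Finset.sum_nonneg fun _ _ => abs_nonneg _) (Finset.mem_univ i)
      exact le_trans h1 h2
    intro p hp j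
    rw [hP] at hp
    exact convexHull_min hrange hconv hp j
  set BW : ℝ := ∑ i : Fin k, ∑ j, |((w i j : ℤ) : ℝ)| with hBWd
  set BK : ℝ := BP + BW with hBKd
  set F₀ : Set (Fin d → ℤ) := {y | y ∈ Λ ∧ ∀ j, |ι y j| ≤ BK} with hF₀d
  have hF₀fin : F₀.Finite := by
    refine Set.Finite.subset (Set.finite_Icc (fun _ : Fin d => -⌈BK⌉) (fun _ : Fin d => ⌈BK⌉)) ?_
    intro y hy
    rw [Set.mem_Icc]
    have hbd : ∀ j, |y j| ≤ ⌈BK⌉ := by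
      intro j
      have h1 : |ι y j| ≤ BK := hy.2 j
      have h2 : ((|y j| : ℤ) : ℝ) ≤ (⌈BK⌉ : ℝ) := by
        rw [Int.cast_abs]
        exact le_trans h1 (Int.le_ceil BK)
      exact_mod_cast h2
    exact ⟨fun j => (abs_le.mp (hbd j)).1, fun j => (abs_le.mp (hbd j)).2⟩
  set nn := hF₀fin.toFinset.card with hnnd
  set fb : Fin nn → (Fin d → ℤ) := fun i => (hF₀fin.toFinset.equivFin.symm i : _) with hfbd
  have hfbΛ : ∀ i, fb i ∈ Λ := by
    intro i
    have hm := (hF₀fin.toFinset.equivFin.symm i).2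
    rw [Set.Finite.mem_toFinset] at hm
    exact hm.1
  have hfb_surj : ∀ y ∈ F₀, ∃ i, fb i = y := by
    intro y hy
    refine ⟨hF₀fin.toFinset.equivFin ⟨y, (Set.Finite.mem_toFinset _).mpr hy⟩, ?_⟩
    rw [hfbd]
    simp
  -- the decomposition of Λ
  have h2 : ∀ x ∈ Λ, ∃ (i : Fin nn) (a : Fin k → ℕ), x = fb i + ∑ j, a j • w j := by
    intro x hx
    have hx' : ι x ∈ Pl := by rw [hΛ] at hx; exact hx
    rw [hPl] at hx'
    obtain ⟨p, hp, c, hc, hpc⟩ := hx'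
    rw [hC] at hc
    obtain ⟨b, hb, hceq⟩ := hc
    set cr : Fin k → ℝ := fun i => b i / (Ni i) with hcrd
    have hcr0 : ∀ i, 0 ≤ cr i := fun i => div_nonneg (hb i) (by positivity)
    have hceq2 : c = ∑ i, cr i • ι (w i) := by
      rw [hceq]
      refine Finset.sum_congr rfl fun i _ => ?_
      funext j
      simp only [Pi.smul_apply, smul_eq_mul, hcrd, hιd]
      rw [hwcast i j]
      have hNi0 : ((Ni i : ℕ) : ℝ) ≠ 0 := by positivity
      field_simp
    set na : Fin k → ℕ := fun i => ⌊cr i⌋₊ with hnad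
    set y : Fin d → ℤ := x - ∑ i, na i • w i with hyd
    have hxy : x = y + ∑ i, na i • w i := by rw [hyd, sub_add_cancel]
    have hιy : ι y = p + ∑ i, (cr i - (na i : ℝ)) • ι (w i) := by
      have hsub : ι y = ι x - ι (∑ i, na i • w i) := by
        funext j
        simp only [hιd, hyd, Pi.sub_apply]
        push_cast
        ring
      have hsplit : ∑ i, (cr i - (na i : ℝ)) • ι (w i)
          = ∑ i, cr i • ι (w i) - ∑ i, (na i : ℝ) • ι (w i) := by
        rw [← Finset.sum_sub_distrib]
        exact Finset.sum_congr rfl fun i _ => sub_smul _ _ _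
      rw [hsub, hιsum na, ← hpc, hceq2, hsplit]
      beta_reduce
      abel
    have hfrac : ∀ i, 0 ≤ cr i - (na i : ℝ) ∧ cr i - (na i : ℝ) ≤ 1 := by
      intro i
      constructor
      · have := Nat.floor_le (hcr0 i)
        rw [hnad]
        simp only []
        linarith
      · have := Nat.lt_floor_add_one (cr i)
        rw [hnad]
        simp only []
        linarith
    have hyΛ : y ∈ Λ := by
      rw [hΛ]
      show ι y ∈ Pl
      rw [hPl, hιy]
      refine ⟨p, hp, _, ?_, rfl⟩
      refine Finset.sum_induction _ (fun z => z ∈ C)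
        (fun u v hu hv => hCadd u hu v hv) hC0 ?_
      intro i _
      exact hCsmul _ (hfrac i).1 _ (hwC i)
    have hybound : ∀ j, |ι y j| ≤ BK := by
      intro j
      have he : ι y j = p j + ∑ i, (cr i - (na i : ℝ)) * ι (w i) j := by
        rw [hιy]
        simp [Finset.sum_apply]
      rw [he, hBKd]
      have hstep1 : |p j + ∑ i, (cr i - (na i : ℝ)) * ι (w i) j|
          ≤ |p j| + |∑ i, (cr i - (na i : ℝ)) * ι (w i) j| := abs_add_le _ _
      have hstep2 : |∑ i, (cr i - (na i : ℝ)) * ι (w i) j| ≤ ∑ i, |ι (w i) j| := by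
        refine le_trans (Finset.abs_sum_le_sum_abs _ _) ?_
        refine Finset.sum_le_sum fun i _ => ?_
        rw [abs_mul]
        have h01 : |cr i - (na i : ℝ)| ≤ 1 := by
          rw [abs_le]
          exact ⟨by linarith [(hfrac i).1], (hfrac i).2⟩
        calc |cr i - (na i : ℝ)| * |ι (w i) j| ≤ 1 * |ι (w i) j| :=
            mul_le_mul_of_nonneg_right h01 (abs_nonneg _)
          _ = |ι (w i) j| := one_mul _
      have hstep3 : ∑ i, |ι (w i) j| ≤ BW := by
        rw [hBWd]
        refine Finset.sum_le_sum fun i _ => ?_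
        exact Finset.single_le_sum (f := fun j' => |((w i j' : ℤ) : ℝ)|)
          (fun _ _ => abs_nonneg _) (Finset.mem_univ j)
      have hpj := hBP p hp j
      calc |p j + ∑ i, (cr i - (na i : ℝ)) * ι (w i) j|
          ≤ |p j| + |∑ i, (cr i - (na i : ℝ)) * ι (w i) j| := hstep1
        _ ≤ BP + ∑ i, |ι (w i) j| := add_le_add hpj hstep2
        _ ≤ BP + BW := add_le_add (le_refl _) hstep3
    obtain ⟨i, hfbi⟩ := hfb_surj y ⟨hyΛ, hybound⟩
    exact ⟨i, na, by rw [hfbi]; exact hxy⟩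
  -- the misère quotient and the class function
  let QT : Type := Quot fun p q : {x : Fin d → ℤ // x ∈ Λ} =>
    Indist C Pos (p : Fin d → ℤ) (q : Fin d → ℤ)
  haveI hQTfin : Finite QT := hfin
  haveI : Finite (Option QT) :=
    Finite.of_equiv (QT ⊕ PUnit.{1}) (Equiv.optionEquivSumPUnit.{0, 0} QT).symm
  set cl : (Fin d → ℤ) → Option QT :=
    fun x => if h : x ∈ Λ then some (Quot.mk _ ⟨x, h⟩) else none with hcld
  have hEquiv : Equivalence fun p q : {x : Fin d → ℤ // x ∈ Λ} =>
      Indist C Pos (p : Fin d → ℤ) (q : Fin d → ℤ) := by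
    refine ⟨fun p r hr => Iff.rfl, ?_, ?_⟩
    · intro p q h r hr
      exact (h r hr).symm
    · intro p q r h1 h2 rr hrr
      exact (h1 rr hrr).trans (h2 rr hrr)
  have hexact : ∀ x, x ∈ Λ → ∀ y, y ∈ Λ → cl x = cl y → Indist C Pos x y := by
    intro x hx y hy h
    simp only [hcld, dif_pos hx, dif_pos hy, Option.some.injEq] at h
    exact hEquiv.eqvGen_iff.mp (Quot.eqvGen_exact h)
  have hsound : ∀ x, x ∈ Λ → ∀ y, y ∈ Λ → Indist C Pos x y → cl x = cl y := by
    intro x hx y hy h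
    simp only [hcld, dif_pos hx, dif_pos hy, Option.some.injEq]
    exact Quot.sound h
  have hshift : ∀ x y v : Fin d → ℤ, Indist C Pos x y → ι v ∈ C →
      Indist C Pos (x + v) (y + v) := by
    intro x y v h hv r hr
    have hvr : ι (v + r) ∈ C := by
      rw [hι_add]
      exact hCadd _ hv _ hr
    have hh := h (v + r) hvr
    rw [← add_assoc, ← add_assoc] at hh
    exact hh
  have h5 : Pos ⊆ Λ := by
    intro x hx
    have hxB := hPosB hx
    rw [hB] at hxB
    exact hxB.1
  have h1 : ∀ x ∈ Λ, ∀ j, x + w j ∈ Λ := fun x hx j => hΛadd x hx _ (hwC j)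
  have h4 : ∀ x ∈ Λ, ∀ y ∈ Λ, cl x = cl y → ∀ j, cl (x + w j) = cl (y + w j) := by
    intro x hx y hy h j
    exact hsound _ (hΛadd x hx _ (hwC j)) _ (hΛadd y hy _ (hwC j))
      (hshift x y (w j) (hexact x hx y hy h) (hwC j))
  have h6 : ∀ x ∈ Λ, ∀ y ∈ Λ, cl x = cl y → (x ∈ Pos ↔ y ∈ Pos) := by
    intro x hx y hy h
    have hind := hexact x hx y hy h
    have h0C : ι (0 : Fin d → ℤ) ∈ C := by
      have hz : ι (0 : Fin d → ℤ) = 0 := by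
        funext j
        simp [hιd]
      rw [hz]
      exact hC0
    have hh := hind 0 h0C
    simpa using hh
  exact LGAux.main w fb Λ Pos (Option QT) cl h1 h2 hfbΛ h4 h5 h6
end

section
/- Every affine semigroup A ⊆ ℤ^d can be written as a finite disjoint union of translates fᵢ + Aᵢ of normal affine semigroups Aᵢ ⊆ ℤ^d; that is, A possesses an affine stratification in which each stratum is a single translate of a normal affine semigroup. -/
open Pointwise

/-- A normal affine semigroup: a finitely generated submonoid of `ℤ^d` that is
saturated in the subgroup it generates (equivalently, the intersection of a
rational polyhedral cone with a sublattice of `ℤ^d`). -/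
def IsNormalAffineSemigroup {d : ℕ} (A : AddSubmonoid (Fin d → ℤ)) : Prop :=
  A.FG ∧ ∀ (n : ℕ) (x : Fin d → ℤ), 0 < n →
    x ∈ AddSubgroup.closure (A : Set (Fin d → ℤ)) → n • x ∈ A → x ∈ A


namespace AffineStratAux

variable {k d : ℕ}

/-- Lexicographic strict order on `Fin k → ℕ`. -/
def LexLt (u v : Fin k → ℕ) : Prop :=
  ∃ i, (∀ j, j < i → u j = v j) ∧ u i < v i

theorem isPWO_pi (s : Set (Fin k → ℕ)) : s.IsPWO :=
  Set.isPWO_of_wellQuasiOrderedLE s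

theorem not_lexLt_of_le {u v : Fin k → ℕ} (h : u ≤ v) : ¬ LexLt v u := by
  rintro ⟨i, -, hi⟩
  exact absurd (h i) (not_le.mpr hi)

theorem LexLt.add_right {u v : Fin k → ℕ} (h : LexLt u v) (w : Fin k → ℕ) :
    LexLt (u + w) (v + w) := by
  obtain ⟨i, hj, hi⟩ := h
  exact ⟨i, fun j hji => by simp [Pi.add_apply, hj j hji], by
    simpa [Pi.add_apply] using Nat.add_lt_add_right hi (w i)⟩

theorem lexLt_trichot {u v : Fin k → ℕ} (h : u ≠ v) : LexLt u v ∨ LexLt v u := by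
  have hne : (Finset.univ.filter (fun j => u j ≠ v j)).Nonempty := by
    obtain ⟨j, hj⟩ := Function.ne_iff.mp h
    exact ⟨j, by simp [hj]⟩
  set s := Finset.univ.filter (fun j => u j ≠ v j) with hs
  set i := s.min' hne with hi
  have hmem : i ∈ s := s.min'_mem hne
  have hine : u i ≠ v i := by simpa [hs] using hmem
  have hlt : ∀ j, j < i → u j = v j := by
    intro j hji
    by_contra hj
    have : i ≤ j := s.min'_le j (by simp [hs, hj])
    exact absurd hji (not_lt.mpr this)
  rcases lt_or_gt_of_ne hine with h' | h'
  · exact Or.inl ⟨i, hlt, h'⟩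
  · exact Or.inr ⟨i, fun j hji => (hlt j hji).symm, h'⟩

instance : IsTrans (Fin k → ℕ) LexLt where
  trans := by
    rintro u v w ⟨i, hji, hi⟩ ⟨i', hji', hi'⟩
    rcases lt_trichotomy i i' with h | h | h
    · exact ⟨i, fun j hj => (hji j hj).trans (hji' j (hj.trans h)), hi.trans_le (hji' i h).le⟩
    · subst h; exact ⟨i, fun j hj => (hji j hj).trans (hji' j hj), hi.trans hi'⟩
    · exact ⟨i', fun j hj => (hji j (hj.trans h)).trans (hji' j hj), (hji i' h).le.trans_lt hi'⟩

instance : IsIrrefl (Fin k → ℕ) LexLt where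
  irrefl := by rintro u ⟨i, -, hi⟩; exact lt_irrefl _ hi

instance : IsStrictOrder (Fin k → ℕ) LexLt := {}

theorem lexLt_wf : WellFounded (@LexLt k) := by
  rw [RelEmbedding.wellFounded_iff_isEmpty]
  constructor
  intro F
  obtain ⟨m, n, hmn, hle⟩ := (isPWO_pi (Set.univ : Set (Fin k → ℕ))).exists_lt (f := fun n => F n)
    (fun _ => Set.mem_univ _)
  have : LexLt (F n) (F m) := F.map_rel_iff.mpr hmn
  exact not_lexLt_of_le hle this

/-- The monoid hom `ℕ^k → ℤ^d` sending `u` to `∑ u j • a j`. -/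
def phi (a : Fin k → (Fin d → ℤ)) : (Fin k → ℕ) →+ (Fin d → ℤ) where
  toFun u := ∑ j, u j • a j
  map_zero' := by simp
  map_add' u v := by
    show (∑ j, (u + v) j • a j) = _
    rw [← Finset.sum_add_distrib]
    exact Finset.sum_congr rfl fun j _ => by simp [Pi.add_apply, add_smul]

theorem phi_single (a : Fin k → (Fin d → ℤ)) (j : Fin k) :
    phi a (Pi.single j 1) = a j := by
  show (∑ j', Pi.single j 1 j' • a j') = a j
  rw [Finset.sum_eq_single j]
  · simp
  · intro j' _ hj'; simp [Pi.single_apply, hj']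
  · simp

/-- The set of coordinates supported on `S`. -/
def Csub (S : Finset (Fin k)) : Set (Fin k → ℕ) := {w | ∀ j ∉ S, w j = 0}

theorem zero_mem_Csub (S : Finset (Fin k)) : 0 ∈ Csub S := fun _ _ => rfl

theorem add_mem_Csub {S : Finset (Fin k)} {w w' : Fin k → ℕ}
    (h : w ∈ Csub S) (h' : w' ∈ Csub S) : w + w' ∈ Csub S := by
  intro j hj; simp [Pi.add_apply, h j hj, h' j hj]

/-- A translated coordinate submonoid. -/
def Strat (u : Fin k → ℕ) (S : Finset (Fin k)) : Set (Fin k → ℕ) := (u + ·) '' Csub S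

theorem mem_strat {u : Fin k → ℕ} {S : Finset (Fin k)} {v : Fin k → ℕ} :
    v ∈ Strat u S ↔ u ≤ v ∧ ∀ j ∉ S, v j = u j := by
  constructor
  · rintro ⟨w, hw, rfl⟩
    exact ⟨le_add_of_nonneg_right zero_le, fun j hj => by simp [Pi.add_apply, hw j hj]⟩
  · rintro ⟨hle, hv⟩
    refine ⟨fun j => v j - u j, fun j hj => by simp [hv j hj], ?_⟩
    funext j
    simp [Pi.add_apply, Nat.add_sub_cancel' (hle j)]

theorem self_mem_strat (u : Fin k → ℕ) (S : Finset (Fin k)) : u ∈ Strat u S :=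
  mem_strat.mpr ⟨le_refl _, fun _ _ => rfl⟩

/-- A decreasing sequence of lower sets in `ℕ^k` stabilizes. -/
theorem eventually_const (D : ℕ → Set (Fin k → ℕ)) (hlow : ∀ n, IsLowerSet (D n))
    (hanti : ∀ m n, m ≤ n → D n ⊆ D m) : ∃ N, ∀ n, N ≤ n → D n = D N := by
  by_contra hc
  push_neg at hc
  have H : ∀ N, ∃ n, N < n ∧ ∃ x ∈ D N, x ∉ D n := by
    intro N
    obtain ⟨n, hNn, hne⟩ := hc N
    have hlt : N < n := lt_of_le_of_ne hNn (by rintro rfl; exact hne rfl)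
    obtain ⟨x, hx⟩ := Set.not_subset.mp (fun hsub => hne (le_antisymm (hanti N n hNn) hsub))
    exact ⟨n, hlt, x, hx.1, hx.2⟩
  -- build a strictly increasing sequence of indices with witnesses
  let g : ℕ → ℕ := fun i => Nat.rec 0 (fun _ m => (H m).choose) i
  have hg : ∀ i, g i < g (i + 1) := fun i => (H (g i)).choose_spec.1
  have hgmono : ∀ i j, i ≤ j → g i ≤ g j := fun i j h => by
    induction j with
    | zero => have : i = 0 := by omega
              subst this; exact le_refl _
    | succ j ih =>
      rcases Nat.lt_or_ge i (j+1) with h' | h'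
      · exact (ih (by omega)).trans (hg j).le
      · have : i = j + 1 := by omega
        subst this; exact le_refl _
  let x : ℕ → (Fin k → ℕ) := fun i => (H (g i)).choose_spec.2.choose
  have hx1 : ∀ i, x i ∈ D (g i) := fun i => (H (g i)).choose_spec.2.choose_spec.1
  have hx2 : ∀ i, x i ∉ D (g (i + 1)) := fun i => (H (g i)).choose_spec.2.choose_spec.2
  obtain ⟨m, n, hmn, hle⟩ :=
    (Set.isPWO_of_wellQuasiOrderedLE
      (Set.univ : Set (Fin k → ℕ))).exists_lt (f := x) (fun _ => Set.mem_univ _)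
  have hxn : x n ∈ D (g (m + 1)) :=
    hanti (g (m + 1)) (g n) (hgmono (m + 1) n hmn) (hx1 n)
  exact hx2 m ((hlow (g (m + 1))) hle hxn)




section MinSet
variable (a : Fin k → (Fin d → ℤ))

/-- The set of lex-minimal preimages. -/
def MinSet : Set (Fin k → ℕ) := {u | ∀ v, phi a v = phi a u → ¬ LexLt v u}

theorem minSet_lower : IsLowerSet (MinSet a) := by
  intro u u' hle hu v hv hlt
  obtain ⟨w, rfl⟩ := exists_add_of_le hle
  exact hu (v + w) (by rw [map_add, map_add, hv]) (hlt.add_right w)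

theorem injOn_minSet : Set.InjOn (phi a) (MinSet a) := by
  intro u hu u' hu' h
  by_contra hne
  rcases lexLt_trichot hne with h' | h'
  · exact hu' u h h'
  · exact hu u' h.symm h'

theorem image_minSet : phi a '' MinSet a = Set.range (phi a) := by
  apply Set.Subset.antisymm (Set.image_subset_range _ _)
  rintro x ⟨u, rfl⟩
  have hne : {v : Fin k → ℕ | phi a v = phi a u}.Nonempty := ⟨u, rfl⟩
  obtain ⟨m, hm, hmin⟩ := lexLt_wf.has_min _ hne
  exact ⟨m, fun v hv hlt => hmin v (hv.trans hm) hlt, hm⟩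

theorem strat_subset_minSet_injOn {u : Fin k → ℕ} {S : Finset (Fin k)}
    (h : Strat u S ⊆ MinSet a) : Set.InjOn (phi a) (Csub S) := by
  intro w hw w' hw' hww
  have h1 : u + w ∈ MinSet a := h ⟨w, hw, rfl⟩
  have h2 : u + w' ∈ MinSet a := h ⟨w', hw', rfl⟩
  have : phi a (u + w) = phi a (u + w') := by rw [map_add, map_add, hww]
  have := injOn_minSet a h1 h2 this
  exact add_left_cancel this

end MinSet


section Cons
variable {n m : ℕ} {u w : Fin k → ℕ}

theorem cons_le_cons (hnm : n ≤ m) (huw : u ≤ w) :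
    (Fin.cons n u : Fin (k+1) → ℕ) ≤ Fin.cons m w := by
  intro j
  induction j using Fin.cases with
  | zero => simpa using hnm
  | succ j => simpa using huw j

theorem cons_le_iff {v : Fin (k+1) → ℕ} :
    (Fin.cons n u : Fin (k+1) → ℕ) ≤ v ↔ n ≤ v 0 ∧ u ≤ (Fin.tail v : Fin k → ℕ) := by
  constructor
  · intro h
    refine ⟨by simpa using h 0, fun j => by simpa [Fin.tail] using h j.succ⟩
  · rintro ⟨h0, ht⟩ j
    induction j using Fin.cases with
    | zero => simpa using h0
    | succ j => simpa [Fin.tail] using ht j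

theorem strat_cons (n : ℕ) (u : Fin k → ℕ) (S : Finset (Fin k)) :
    Strat (Fin.cons n u : Fin (k+1) → ℕ) (S.image Fin.succ) =
      {v | v 0 = n ∧ (Fin.tail v : Fin k → ℕ) ∈ Strat u S} := by
  ext v
  rw [Set.mem_setOf_eq, mem_strat, mem_strat, cons_le_iff]
  constructor
  · rintro ⟨⟨h0, ht⟩, hv⟩
    have hv0 : v 0 = n := by
      have := hv 0 (by simp [Fin.succ_ne_zero, eq_comm])
      simpa using this
    refine ⟨hv0, ht, fun j hj => ?_⟩
    have : j.succ ∉ S.image Fin.succ := by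
      simp only [Finset.mem_image]
      rintro ⟨j', hj', hjj⟩
      exact hj ((Fin.succ_injective _ hjj) ▸ hj')
    simpa [Fin.tail] using hv j.succ this
  · rintro ⟨hv0, ⟨ht, hv⟩⟩
    refine ⟨⟨hv0.ge, ht⟩, fun j hj => ?_⟩
    induction j using Fin.cases with
    | zero => simpa using hv0
    | succ j =>
      have hjS : j ∉ S := fun hjS => hj (Finset.mem_image_of_mem _ hjS)
      simpa [Fin.tail] using hv j hjS

theorem strat_cons_insert (n : ℕ) (u : Fin k → ℕ) (S : Finset (Fin k)) :
    Strat (Fin.cons n u : Fin (k+1) → ℕ) (insert 0 (S.image Fin.succ)) =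
      {v | n ≤ v 0 ∧ (Fin.tail v : Fin k → ℕ) ∈ Strat u S} := by
  ext v
  rw [Set.mem_setOf_eq, mem_strat, mem_strat, cons_le_iff]
  constructor
  · rintro ⟨⟨h0, ht⟩, hv⟩
    refine ⟨h0, ht, fun j hj => ?_⟩
    have : j.succ ∉ insert 0 (S.image Fin.succ) := by
      simp only [Finset.mem_insert, Finset.mem_image]
      push_neg
      refine ⟨Fin.succ_ne_zero j, ?_⟩
      rintro j' hj' hjj
      exact hj ((Fin.succ_injective _ hjj) ▸ hj')
    simpa [Fin.tail] using hv j.succ this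
  · rintro ⟨hv0, ⟨ht, hv⟩⟩
    refine ⟨⟨hv0, ht⟩, fun j hj => ?_⟩
    induction j using Fin.cases with
    | zero => exact absurd (Finset.mem_insert_self 0 _) hj
    | succ j =>
      have hjS : j ∉ S := fun hjS =>
        hj (Finset.mem_insert_of_mem (Finset.mem_image_of_mem _ hjS))
      simpa [Fin.tail] using hv j hjS

end Cons

/-- Every lower set of `ℕ^k` is a finite disjoint union of translated
coordinate submonoids. -/
theorem decomp (k : ℕ) : ∀ (D : Set (Fin k → ℕ)), IsLowerSet D →
    ∃ L : List ((Fin k → ℕ) × Finset (Fin k)),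
      (L.Pairwise fun p q => Disjoint (Strat p.1 p.2) (Strat q.1 q.2)) ∧
      D = ⋃ p ∈ L, Strat p.1 p.2 := by
  induction k with
  | zero =>
    intro D _
    by_cases hD : D.Nonempty
    · obtain ⟨x, hx⟩ := hD
      refine ⟨[(x, ∅)], List.pairwise_singleton _ _, ?_⟩
      ext v
      have hvx : v = x := Subsingleton.elim v x
      subst hvx
      simp only [List.mem_singleton, Set.mem_iUnion]
      exact ⟨fun _ => ⟨(v, ∅), ⟨rfl, self_mem_strat v ∅⟩⟩, fun _ => hx⟩
    · refine ⟨[], List.Pairwise.nil, ?_⟩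
      rw [Set.not_nonempty_iff_eq_empty.mp hD]
      simp
  | succ k ih =>
    intro D hD
    set Dn : ℕ → Set (Fin k → ℕ) := fun n => {u | (Fin.cons n u : Fin (k+1) → ℕ) ∈ D} with hDn
    have hlow : ∀ n, IsLowerSet (Dn n) := by
      intro n u' u hle hu
      exact hD (cons_le_cons (le_refl n) hle) hu
    have hanti : ∀ m n, m ≤ n → Dn n ⊆ Dn m := by
      intro m n hmn u hu
      exact hD (cons_le_cons hmn (le_refl u)) hu
    obtain ⟨N, hN⟩ := eventually_const Dn hlow hanti
    choose L hL1 hL2 using fun n => ih (Dn n) (hlow n)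
    set TL : ℕ → List ((Fin (k+1) → ℕ) × Finset (Fin (k+1))) :=
      fun n => (L n).map (fun p => (Fin.cons n p.1, p.2.image Fin.succ)) with hTL
    set TT : List ((Fin (k+1) → ℕ) × Finset (Fin (k+1))) :=
      (L N).map (fun p => (Fin.cons N p.1, insert 0 (p.2.image Fin.succ))) with hTT
    -- strata shape facts
    have memTL : ∀ {n q}, q ∈ TL n →
        ∃ p ∈ L n, Strat q.1 q.2 = {v | v 0 = n ∧ (Fin.tail v : Fin k → ℕ) ∈ Strat p.1 p.2} := by
      intro n q hq
      rw [hTL, List.mem_map] at hq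
      obtain ⟨p, hp, rfl⟩ := hq
      exact ⟨p, hp, strat_cons n p.1 p.2⟩
    have memTT : ∀ {q}, q ∈ TT →
        ∃ p ∈ L N, Strat q.1 q.2 = {v | N ≤ v 0 ∧ (Fin.tail v : Fin k → ℕ) ∈ Strat p.1 p.2} := by
      intro q hq
      rw [hTT, List.mem_map] at hq
      obtain ⟨p, hp, rfl⟩ := hq
      exact ⟨p, hp, strat_cons_insert N p.1 p.2⟩
    refine ⟨((List.range N).flatMap TL) ++ TT, ?_, ?_⟩
    · rw [List.pairwise_append]
      refine ⟨?_, ?_, ?_⟩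
      · -- pairwise within the flatMap
        rw [List.flatMap, List.pairwise_flatten]
        constructor
        · intro l' hl'
          rw [List.mem_map] at hl'
          obtain ⟨n, _, rfl⟩ := hl'
          rw [hTL, List.pairwise_map]
          refine (hL1 n).imp ?_
          intro p p' hdisj
          rw [strat_cons, strat_cons]
          rw [Set.disjoint_left]
          rintro v ⟨hv0, hvt⟩ ⟨_, hvt'⟩
          exact Set.disjoint_left.mp hdisj hvt hvt'
        · rw [List.pairwise_map]
          refine List.Pairwise.imp ?_ (List.pairwise_lt_range (n := N))
          intro m n hmn q hq q' hq'
          obtain ⟨p, _, hps⟩ := memTL hq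
          obtain ⟨p', _, hps'⟩ := memTL hq'
          rw [hps, hps', Set.disjoint_left]
          rintro v ⟨hv0, -⟩ ⟨hv0', -⟩
          exact absurd (hv0 ▸ hv0' ▸ rfl : m = n) hmn.ne
      · -- pairwise within TT
        rw [hTT, List.pairwise_map]
        refine (hL1 N).imp ?_
        intro p p' hdisj
        rw [strat_cons_insert, strat_cons_insert]
        rw [Set.disjoint_left]
        rintro v ⟨hv0, hvt⟩ ⟨_, hvt'⟩
        exact Set.disjoint_left.mp hdisj hvt hvt'
      · -- cross disjointness
        intro q hq q' hq'
        rw [List.mem_flatMap] at hq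
        obtain ⟨n, hn, hq⟩ := hq
        rw [List.mem_range] at hn
        obtain ⟨p, _, hps⟩ := memTL hq
        obtain ⟨p', _, hps'⟩ := memTT hq'
        rw [hps, hps', Set.disjoint_left]
        rintro v ⟨hv0, -⟩ ⟨hv0', -⟩
        omega
    · -- the union
      ext v
      have hv : v ∈ D ↔ (Fin.tail v : Fin k → ℕ) ∈ Dn (v 0) := by
        rw [hDn]
        simp only [Set.mem_setOf_eq, Fin.cons_self_tail]
      simp only [Set.mem_iUnion, List.mem_append, List.mem_flatMap, List.mem_range]
      constructor
      · intro hvD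
        rcases lt_or_ge (v 0) N with hlt | hge
        · have : Fin.tail v ∈ Dn (v 0) := hv.mp hvD
          rw [hL2 (v 0)] at this
          rw [Set.mem_iUnion₂] at this
          obtain ⟨p, hp, hvp⟩ := this
          refine ⟨(Fin.cons (v 0) p.1, p.2.image Fin.succ), ⟨Or.inl ⟨v 0, hlt, ?_⟩, ?_⟩⟩
          · rw [hTL, List.mem_map]; exact ⟨p, hp, rfl⟩
          · rw [strat_cons]; exact ⟨rfl, hvp⟩
        · have : Fin.tail v ∈ Dn N := (hN (v 0) hge) ▸ hv.mp hvD
          rw [hL2 N] at this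
          rw [Set.mem_iUnion₂] at this
          obtain ⟨p, hp, hvp⟩ := this
          refine ⟨(Fin.cons N p.1, insert 0 (p.2.image Fin.succ)), ⟨Or.inr ?_, ?_⟩⟩
          · rw [hTT, List.mem_map]; exact ⟨p, hp, rfl⟩
          · rw [strat_cons_insert]; exact ⟨hge, hvp⟩
      · rintro ⟨q, hq, hvq⟩
        rcases hq with ⟨n, hn, hqn⟩ | hqT
        · obtain ⟨p, hp, hps⟩ := memTL hqn
          rw [hps] at hvq
          obtain ⟨hv0, hvt⟩ := hvq
          rw [hv]
          rw [hv0, hL2 n, Set.mem_iUnion₂]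
          exact ⟨p, hp, hvt⟩
        · obtain ⟨p, hp, hps⟩ := memTT hqT
          rw [hps] at hvq
          obtain ⟨hv0, hvt⟩ := hvq
          rw [hv, hN (v 0) hv0, hL2 N, Set.mem_iUnion₂]
          exact ⟨p, hp, hvt⟩


/-- The coordinate submonoid as an `AddSubmonoid`. -/
def CsubM (S : Finset (Fin k)) : AddSubmonoid (Fin k → ℕ) where
  carrier := Csub S
  zero_mem' := zero_mem_Csub S
  add_mem' := fun h h' => add_mem_Csub h h'

theorem csubM_fg (S : Finset (Fin k)) : (CsubM S).FG := by
  refine ⟨S.image (fun j => Pi.single j 1), le_antisymm ?_ ?_⟩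
  · rw [AddSubmonoid.closure_le]
    intro w hw
    simp only [Finset.coe_image, Set.mem_image, Finset.mem_coe] at hw
    obtain ⟨j, hj, rfl⟩ := hw
    intro j' hj'
    rw [Pi.single_apply, if_neg]
    rintro rfl
    exact hj' hj
  · intro w hw
    rw [← Finset.univ_sum_single w]
    refine AddSubmonoid.sum_mem _ fun j _ => ?_
    by_cases hj : j ∈ S
    · have h1 : (Pi.single j (w j) : Fin k → ℕ) = w j • (Pi.single j 1 : Fin k → ℕ) := by
        rw [← Pi.single_smul, smul_eq_mul, mul_one]
      rw [h1]
      exact AddSubmonoid.nsmul_mem _ (AddSubmonoid.subset_closure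
        (by exact_mod_cast Finset.mem_image_of_mem _ hj)) _
    · rw [hw j hj, Pi.single_zero]
      exact AddSubmonoid.zero_mem _

theorem exists_sub_of_mem_closure {M : AddSubmonoid (Fin d → ℤ)} {x : Fin d → ℤ}
    (hx : x ∈ AddSubgroup.closure (M : Set (Fin d → ℤ))) :
    ∃ p ∈ M, ∃ q ∈ M, x = p - q := by
  induction hx using AddSubgroup.closure_induction with
  | mem x hx => exact ⟨x, hx, 0, M.zero_mem, by simp⟩
  | zero => exact ⟨0, M.zero_mem, 0, M.zero_mem, by simp⟩
  | add x y hx hy ihx ihy =>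
    obtain ⟨p, hp, q, hq, rfl⟩ := ihx
    obtain ⟨p', hp', q', hq', rfl⟩ := ihy
    exact ⟨p + p', M.add_mem hp hp', q + q', M.add_mem hq hq', by abel⟩
  | neg x hx ihx =>
    obtain ⟨p, hp, q, hq, rfl⟩ := ihx
    exact ⟨q, hq, p, hp, by abel⟩

end AffineStratAux

open AffineStratAux

/-- Every affine semigroup `A ⊆ ℤ^d` is a finite disjoint union of translates
of normal affine semigroups. -/
theorem affine_semigroup_disjoint_union_of_normal {d : ℕ}
    (A : AddSubmonoid (Fin d → ℤ)) (hA : A.FG) :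
    ∃ (r : ℕ) (f : Fin r → (Fin d → ℤ)) (N : Fin r → AddSubmonoid (Fin d → ℤ)),
      (∀ i, IsNormalAffineSemigroup (N i)) ∧
      (Pairwise fun i j => Disjoint
        (({f i} : Set (Fin d → ℤ)) + (N i : Set (Fin d → ℤ)))
        (({f j} : Set (Fin d → ℤ)) + (N j : Set (Fin d → ℤ)))) ∧
      (A : Set (Fin d → ℤ)) = ⋃ i, (({f i} : Set (Fin d → ℤ)) + (N i : Set (Fin d → ℤ))) := by
  classical
  obtain ⟨s, hs⟩ := hA
  set k := s.card with hk
  set a : Fin k → (Fin d → ℤ) := fun i => ((s.equivFin.symm i : ↥s) : Fin d → ℤ) with ha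
  have hrange : Set.range a = ↑s := by
    ext x
    constructor
    · rintro ⟨i, rfl⟩
      exact (s.equivFin.symm i).2
    · intro hx
      exact ⟨s.equivFin ⟨x, hx⟩, by simp [ha]⟩
  have hA' : (A : Set (Fin d → ℤ)) = Set.range (phi a) := by
    have h1 : AddMonoidHom.mrange (phi a) = A := by
      rw [← hs]
      apply le_antisymm
      · rintro x ⟨u, rfl⟩
        show (∑ j, u j • a j) ∈ _
        exact AddSubmonoid.sum_mem _ fun j _ => AddSubmonoid.nsmul_mem _
          (AddSubmonoid.subset_closure (by
            rw [← hrange]; exact Set.mem_range_self j)) _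
      · rw [AddSubmonoid.closure_le]
        intro x hx
        rw [← hrange] at hx
        obtain ⟨j, rfl⟩ := hx
        exact ⟨Pi.single j 1, phi_single a j⟩
    rw [← h1, AddMonoidHom.coe_mrange]
  obtain ⟨L, hL1, hL2⟩ := decomp k (MinSet a) (minSet_lower a)
  have hsub : ∀ p ∈ L, Strat p.1 p.2 ⊆ MinSet a := by
    intro p hp
    rw [hL2]
    exact Set.subset_iUnion₂ (s := fun (p : (Fin k → ℕ) × Finset (Fin k)) (_ : p ∈ L) => Strat p.1 p.2) p hp
  have himg : ∀ p : (Fin k → ℕ) × Finset (Fin k),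
      ({phi a p.1} : Set (Fin d → ℤ)) + ↑(AddSubmonoid.map (phi a) (CsubM p.2)) =
        phi a '' Strat p.1 p.2 := by
    intro p
    rw [AddSubmonoid.coe_map, Set.singleton_add]
    show _ = phi a '' ((p.1 + ·) '' Csub p.2)
    rw [Set.image_image, Set.image_image]
    exact Set.image_congr fun w _ => (map_add (phi a) p.1 w).symm
  refine ⟨L.length, fun i => phi a (L.get i).1,
    fun i => AddSubmonoid.map (phi a) (CsubM (L.get i).2), ?_, ?_, ?_⟩
  · -- normality
    intro i
    have hsubi : Strat (L.get i).1 (L.get i).2 ⊆ MinSet a := hsub _ (List.get_mem L i)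
    have hinj : Set.InjOn (phi a) (Csub (L.get i).2) := strat_subset_minSet_injOn a hsubi
    constructor
    · exact (csubM_fg _).map _
    · intro n x hn hxcl hnx
      obtain ⟨P, hP, Q, hQ, rfl⟩ := exists_sub_of_mem_closure hxcl
      obtain ⟨p₀, hp₀, rfl⟩ := hP
      obtain ⟨q₀, hq₀, rfl⟩ := hQ
      obtain ⟨m₀, hm₀, hm⟩ := hnx
      have hp₀' : p₀ ∈ Csub (L.get i).2 := hp₀
      have hq₀' : q₀ ∈ Csub (L.get i).2 := hq₀
      have hm₀' : m₀ ∈ Csub (L.get i).2 := hm₀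
      have key : phi a (n • p₀) = phi a (m₀ + n • q₀) := by
        rw [map_nsmul, map_add, map_nsmul, hm, smul_sub]
        abel
      have hmem1 : n • p₀ ∈ Csub (L.get i).2 := (CsubM (L.get i).2).nsmul_mem hp₀ n
      have hmem2 : m₀ + n • q₀ ∈ Csub (L.get i).2 :=
        add_mem_Csub hm₀' ((CsubM (L.get i).2).nsmul_mem hq₀ n)
      have heq : n • p₀ = m₀ + n • q₀ := hinj hmem1 hmem2 key
      have hle : q₀ ≤ p₀ := by
        intro j
        have hj := congrFun heq j
        simp only [Pi.smul_apply, Pi.add_apply, smul_eq_mul] at hj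
        have h2 : n * q₀ j ≤ n * p₀ j := hj ▸ Nat.le_add_left _ _
        exact Nat.le_of_mul_le_mul_left h2 hn
      set w := fun j => p₀ j - q₀ j with hw
      have hqw : q₀ + w = p₀ := funext fun j => Nat.add_sub_cancel' (hle j)
      have hwC : w ∈ Csub (L.get i).2 := by
        intro j hj
        simp [hw, hp₀' j hj, hq₀' j hj]
      refine ⟨w, hwC, ?_⟩
      rw [← hqw, map_add]
      abel
  · -- pairwise disjointness
    intro i j hij
    rw [himg (L.get i), himg (L.get j)]
    have hdis : Disjoint (Strat (L.get i).1 (L.get i).2) (Strat (L.get j).1 (L.get j).2) := by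
      have hpair := List.pairwise_iff_getElem.mp hL1
      rcases lt_or_gt_of_ne hij with h | h
      · simpa [List.get_eq_getElem] using hpair i.val j.val i.isLt j.isLt h
      · exact (by simpa [List.get_eq_getElem] using hpair j.val i.val j.isLt i.isLt h :
          Disjoint (Strat (L.get j).1 (L.get j).2) (Strat (L.get i).1 (L.get i).2)).symm
    rw [Set.disjoint_left] at hdis ⊢
    rintro z ⟨x, hx, rfl⟩ ⟨y, hy, hxy⟩
    have hx' := hsub _ (List.get_mem L i) hx
    have hy' := hsub _ (List.get_mem L j) hy
    have hyx : y = x := injOn_minSet a hy' hx' hxy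
    exact hdis hx (hyx ▸ hy)
  · -- the union
    rw [hA', ← image_minSet, hL2, Set.image_iUnion₂]
    ext x
    simp only [Set.mem_iUnion]
    constructor
    · rintro ⟨p, hp, hx⟩
      obtain ⟨i, hi, rfl⟩ := List.mem_iff_getElem.mp hp
      refine ⟨⟨i, hi⟩, ?_⟩
      rw [himg]
      simpa [List.get_eq_getElem] using hx
    · rintro ⟨i, hx⟩
      rw [himg] at hx
      exact ⟨L.get i, List.get_mem L i, hx⟩
end

section
/- Any finite union of rational convex polyhedra in ℝ^d can be expressed as a disjoint union of finitely many sets, each of which is the relative interior of a rational convex polyhedron. -/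
set_option linter.unusedSectionVars false

open Set

namespace RatPolyAux

variable {E : Type*} [NormedAddCommGroup E] [NormedSpace ℝ E] [FiniteDimensional ℝ E]
variable {ι : Type*} [Fintype ι]
variable (F : ι → (E →ₗ[ℝ] ℝ)) (cst : ι → ℝ) (ε : ι → SignType)

/-- The affine-subspace part of a sign condition. -/
def Wset : Set E := {x | ∀ h, ε h = 0 → F h x = cst h}

/-- The open part of a sign condition. -/
def Uset : Set E := {x | ∀ h, (ε h = 1 → cst h < F h x) ∧ (ε h = -1 → F h x < cst h)}

/-- The cell of a sign vector. -/
def cellSet : Set E := Wset F cst ε ∩ Uset F cst ε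

/-- The closed polyhedron of a sign vector. -/
def Qset : Set E :=
  {x | ∀ h, (ε h = 0 → F h x = cst h) ∧ (ε h = 1 → cst h ≤ F h x) ∧ (ε h = -1 → F h x ≤ cst h)}

lemma cell_subset_Qset : cellSet F cst ε ⊆ Qset F cst ε := by
  rintro x ⟨hW, hU⟩ h
  exact ⟨hW h, fun h1 => ((hU h).1 h1).le, fun h1 => ((hU h).2 h1).le⟩

lemma Qset_subset_Wset : Qset F cst ε ⊆ Wset F cst ε := fun x hx h h0 => (hx h).1 h0

lemma mem_cell_iff (x : E) :
    x ∈ cellSet F cst ε ↔ ∀ h, SignType.sign (F h x - cst h) = ε h := by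
  constructor
  · rintro ⟨hW, hU⟩ h
    cases hε : ε h with
    | zero =>
      have := hW h hε
      simp [sign_eq_zero_iff, sub_eq_zero, this]
    | pos =>
      have := (hU h).1 hε
      simp [sign_eq_one_iff, sub_pos, this]
    | neg =>
      have := (hU h).2 hε
      simp [sign_eq_neg_one_iff, sub_neg, this]
  · intro hs
    refine ⟨fun h h0 => ?_, fun h => ⟨fun h1 => ?_, fun h1 => ?_⟩⟩
    · have := hs h; rw [h0, sign_eq_zero_iff, sub_eq_zero] at this; exact this
    · have := hs h; rw [h1, sign_eq_one_iff, sub_pos] at this; exact this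
    · have := hs h; rw [h1, sign_eq_neg_one_iff, sub_neg] at this; exact this

lemma isOpen_imp {p : Prop} {s : Set E} (hs : IsOpen s) : IsOpen {x | p → x ∈ s} := by
  by_cases hp : p
  · simpa [hp] using hs
  · simp [hp]

lemma isOpen_Uset : IsOpen (Uset F cst ε) := by
  have : Uset F cst ε =
      ⋂ h, ({x | ε h = 1 → x ∈ (F h) ⁻¹' Ioi (cst h)} ∩
        {x | ε h = -1 → x ∈ (F h) ⁻¹' Iio (cst h)}) := by
    ext x; simp [Uset, forall_and]
  rw [this]
  exact isOpen_iInter_of_finite fun h =>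
    (isOpen_imp (isOpen_Ioi.preimage (F h).continuous_of_finiteDimensional)).inter
      (isOpen_imp (isOpen_Iio.preimage (F h).continuous_of_finiteDimensional))

/-- `Wset` as an affine subspace. -/
def Waff : AffineSubspace ℝ E where
  carrier := Wset F cst ε
  smul_vsub_vadd_mem' := by
    intro t p1 p2 p3 h1 h2 h3 h hz
    simp only [vsub_eq_sub, vadd_eq_add, map_add, map_smul, map_sub, smul_eq_mul,
      h1 h hz, h2 h hz, h3 h hz]
    ring

lemma exists_pos_mem {X : Type*} [TopologicalSpace X] {O : Set X} (hO : IsOpen O)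
    {g : ℝ → X} (hg : Continuous g) (h0 : g 0 ∈ O) : ∃ t > 0, g t ∈ O := by
  have h1 : g ⁻¹' O ∈ nhds (0:ℝ) := hg.continuousAt.preimage_mem_nhds (hO.mem_nhds h0)
  have h2 : g ⁻¹' O ∩ Ioi 0 ∈ nhdsWithin (0:ℝ) (Ioi 0) :=
    Filter.inter_mem (nhdsWithin_le_nhds h1) self_mem_nhdsWithin
  obtain ⟨t, htO, ht⟩ := Filter.nonempty_of_mem h2
  exact ⟨t, ht, htO⟩

lemma span_eq (hne : (cellSet F cst ε).Nonempty) :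
    affineSpan ℝ (Qset F cst ε) = Waff F cst ε := by
  refine le_antisymm (affineSpan_le.2 (Qset_subset_Wset F cst ε)) ?_
  rintro w hw
  obtain ⟨x0, hx0⟩ := hne
  obtain ⟨t, ht, hzU⟩ := exists_pos_mem (isOpen_Uset F cst ε)
    (g := fun t : ℝ => x0 + t • (w - x0))
    (by continuity) (by simpa using hx0.2)
  set z : E := x0 + t • (w - x0) with hz
  have hzW : z ∈ Wset F cst ε := by
    intro h h0
    have h1 := hx0.1 h h0
    have h2 := hw h h0
    simp only [hz, map_add, map_smul, map_sub, smul_eq_mul, h1, h2]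
    ring
  have hzQ : z ∈ Qset F cst ε := cell_subset_Qset F cst ε ⟨hzW, hzU⟩
  have hx0Q : x0 ∈ Qset F cst ε := cell_subset_Qset F cst ε hx0
  have hmem := AffineSubspace.smul_vsub_vadd_mem (affineSpan ℝ (Qset F cst ε)) t⁻¹
    (subset_affineSpan ℝ _ hzQ) (subset_affineSpan ℝ _ hx0Q) (subset_affineSpan ℝ _ hx0Q)
  have : t⁻¹ • (z -ᵥ x0) +ᵥ x0 = w := by
    simp only [hz, vsub_eq_sub, vadd_eq_add, add_sub_cancel_left, smul_smul,
      inv_mul_cancel₀ ht.ne', one_smul]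
    abel
  rwa [this] at hmem

/-- Key lemma: the intrinsic interior of the closed polyhedron of a sign vector is its cell,
provided the cell is nonempty. -/
lemma relint_eq (hne : (cellSet F cst ε).Nonempty) :
    intrinsicInterior ℝ (Qset F cst ε) = cellSet F cst ε := by
  obtain ⟨x0, hx0⟩ := hne
  apply subset_antisymm
  · rintro x hx
    have hxQ : x ∈ Qset F cst ε := intrinsicInterior_subset hx
    rw [mem_intrinsicInterior] at hx
    obtain ⟨y, hy, hyx⟩ := hx
    have hpW : ∀ s : ℝ, x + s • (x - x0) ∈ affineSpan ℝ (Qset F cst ε) := by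
      intro s
      rw [span_eq F cst ε ⟨x0, hx0⟩]
      intro h h0
      have h1 := (hxQ h).1 h0
      have h2 := hx0.1 h h0
      simp only [map_add, map_smul, map_sub, smul_eq_mul, h1, h2]
      ring
    set g : ℝ → affineSpan ℝ (Qset F cst ε) := fun s => ⟨x + s • (x - x0), hpW s⟩ with hg
    have hgc : Continuous g := by
      apply Continuous.subtype_mk
      continuity
    have hg0 : g 0 = y := by
      apply Subtype.ext
      simp [hg, hyx]
    have key : ∀ h, (ε h = 1 → cst h < F h x) ∧ (ε h = -1 → F h x < cst h) := by
      intro h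
      constructor
      · intro h1
        rcases lt_or_eq_of_le ((hxQ h).2.1 h1) with hlt | heq
        · exact hlt
        exfalso
        obtain ⟨s, hs, hsm⟩ := exists_pos_mem isOpen_interior hgc (hg0 ▸ hy)
        have hQ : x + s • (x - x0) ∈ Qset F cst ε := by
          have := interior_subset hsm; simpa [hg] using this
        have hle := (hQ h).2.1 h1
        have hstrict := (hx0.2 h).1 h1
        simp only [map_add, map_smul, map_sub, smul_eq_mul, ← heq] at hle
        nlinarith
      · intro h1
        rcases lt_or_eq_of_le ((hxQ h).2.2 h1) with hlt | heq
        · exact hlt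
        exfalso
        obtain ⟨s, hs, hsm⟩ := exists_pos_mem isOpen_interior hgc (hg0 ▸ hy)
        have hQ : x + s • (x - x0) ∈ Qset F cst ε := by
          have := interior_subset hsm; simpa [hg] using this
        have hle := (hQ h).2.2 h1
        have hstrict := (hx0.2 h).2 h1
        simp only [map_add, map_smul, map_sub, smul_eq_mul, heq] at hle
        nlinarith
    exact ⟨Qset_subset_Wset F cst ε hxQ, key⟩
  · intro x hx
    have hxQ := cell_subset_Qset F cst ε hx
    rw [mem_intrinsicInterior]
    refine ⟨⟨x, subset_affineSpan ℝ _ hxQ⟩, ?_, rfl⟩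
    have hsub : ((↑) ⁻¹' (Uset F cst ε) : Set (affineSpan ℝ (Qset F cst ε))) ⊆
        (↑) ⁻¹' (Qset F cst ε) := by
      rintro ⟨y, hy⟩ hyU
      refine cell_subset_Qset F cst ε ⟨?_, hyU⟩
      rw [span_eq F cst ε ⟨x0, hx0⟩] at hy
      exact hy
    exact interior_maximal hsub ((isOpen_Uset F cst ε).preimage continuous_subtype_val) hx.2

end RatPolyAux

/-- A rational convex polyhedron in `ℝ^d`: an intersection of finitely many closed
halfspaces defined by linear functionals with rational coefficients and rational
constants. -/
def IsRatPolyhedron {d : ℕ} (S : Set (Fin d → ℝ)) : Prop :=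
  ∃ (m : ℕ) (a : Fin m → (Fin d → ℚ)) (c : Fin m → ℚ),
    S = {x | ∀ i, (c i : ℝ) ≤ ∑ j, (a i j : ℝ) * x j}

namespace RatPolyAux

lemma isRatPolyhedron_Qset {ι : Type*} [Fintype ι] {d : ℕ} (a : ι → Fin d → ℚ) (c : ι → ℚ)
    (F : ι → ((Fin d → ℝ) →ₗ[ℝ] ℝ)) (cst : ι → ℝ)
    (hF : ∀ h x, F h x = ∑ j, (a h j : ℝ) * x j) (hc : ∀ h, cst h = (c h : ℝ))
    (ε : ι → SignType) : IsRatPolyhedron (Qset F cst ε) := by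
  classical
  let κ := ι × Bool
  let A : κ → Fin d → ℚ := fun p =>
    match ε p.1 with
    | SignType.pos => a p.1
    | SignType.neg => -(a p.1)
    | SignType.zero => if p.2 then a p.1 else -(a p.1)
  let C : κ → ℚ := fun p =>
    match ε p.1 with
    | SignType.pos => c p.1
    | SignType.neg => -(c p.1)
    | SignType.zero => if p.2 then c p.1 else -(c p.1)
  let e : Fin (Fintype.card κ) ≃ κ := (Fintype.equivFin κ).symm
  refine ⟨Fintype.card κ, fun q => A (e q), fun q => C (e q), ?_⟩
  have key : ∀ x : Fin d → ℝ,
      (∀ p : κ, (C p : ℝ) ≤ ∑ j, (A p j : ℝ) * x j) ↔ x ∈ Qset F cst ε := by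
    intro x
    have hpair : ∀ h : ι,
        (((C (h, true) : ℝ) ≤ ∑ j, (A (h, true) j : ℝ) * x j) ∧
         ((C (h, false) : ℝ) ≤ ∑ j, (A (h, false) j : ℝ) * x j)) ↔
        ((ε h = 0 → F h x = cst h) ∧ (ε h = 1 → cst h ≤ F h x) ∧ (ε h = -1 → F h x ≤ cst h)) := by
      intro h
      cases hε : ε h with
      | zero =>
        simp only [A, C, hε, hF, hc, Bool.false_eq_true, reduceIte, Pi.neg_apply, Rat.cast_neg,
          neg_mul, Finset.sum_neg_distrib, neg_le_neg_iff]
        constructor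
        · rintro ⟨h1, h2⟩
          refine ⟨fun _ => le_antisymm (by linarith) h1, fun hh => by simp [hε] at hh,
            fun hh => by simp [hε] at hh⟩
        · rintro ⟨h1, -, -⟩
          have := h1 rfl
          constructor <;> linarith
      | pos =>
        simp only [A, C, hε, hF, hc]
        constructor
        · rintro ⟨h1, -⟩
          exact ⟨fun hh => by simp [hε] at hh, fun _ => h1, fun hh => by simp [hε] at hh⟩
        · rintro ⟨-, h1, -⟩
          exact ⟨h1 rfl, h1 rfl⟩
      | neg =>
        simp only [A, C, hε, hF, hc, Bool.false_eq_true, reduceIte, Pi.neg_apply, Rat.cast_neg,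
          neg_mul, Finset.sum_neg_distrib, neg_le_neg_iff]
        constructor
        · rintro ⟨h1, -⟩
          exact ⟨fun hh => by simp [hε] at hh, fun hh => by simp [hε] at hh, fun _ => by linarith⟩
        · rintro ⟨-, -, h1⟩
          have := h1 rfl
          constructor <;> linarith
    constructor
    · intro hx h
      exact (hpair h).1 ⟨hx (h, true), hx (h, false)⟩
    · intro hx p
      rcases p with ⟨h, b⟩
      have := (hpair h).2 (hx h)
      cases b
      · exact this.2
      · exact this.1
  ext x
  simp only [mem_setOf_eq]
  rw [← key x]
  constructor
  · intro hx q; exact hx (e q)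
  · intro hx p
    have := hx (e.symm p)
    simpa using this

end RatPolyAux

open RatPolyAux
/-- Any finite union of rational convex polyhedra in `ℝ^d` is a disjoint union of
finitely many sets, each the relative (intrinsic) interior of a rational convex
polyhedron. -/
theorem finite_union_polyhedra_eq_disjoint_union_relint {d n : ℕ}
    (P : Fin n → Set (Fin d → ℝ)) (hP : ∀ i, IsRatPolyhedron (P i)) :
    ∃ (r : ℕ) (Q : Fin r → Set (Fin d → ℝ)),
      (∀ j, IsRatPolyhedron (Q j)) ∧
      (Pairwise fun j k => Disjoint (intrinsicInterior ℝ (Q j)) (intrinsicInterior ℝ (Q k))) ∧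
      (⋃ i, P i) = ⋃ j, intrinsicInterior ℝ (Q j) := by
  classical
  choose m a c hPeq using hP
  set ι := (i : Fin n) × Fin (m i) with hι
  set F : ι → ((Fin d → ℝ) →ₗ[ℝ] ℝ) :=
    fun h => ∑ j, (a h.1 h.2 j : ℝ) • LinearMap.proj j with hFdef
  set cst : ι → ℝ := fun h => (c h.1 h.2 : ℝ) with hcstdef
  have hFapp : ∀ (h : ι) (x : Fin d → ℝ), F h x = ∑ j, (a h.1 h.2 j : ℝ) * x j := by
    intro h x
    simp [hFdef, LinearMap.sum_apply, LinearMap.smul_apply, LinearMap.proj_apply, smul_eq_mul]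
  set Good : (ι → SignType) → Prop := fun ε =>
    (∃ i, ∀ k : Fin (m i), ε ⟨i, k⟩ ≠ -1) ∧ (cellSet F cst ε).Nonempty with hGood
  set J := {ε : ι → SignType // Good ε} with hJ
  set e : Fin (Fintype.card J) ≃ J := (Fintype.equivFin J).symm with he
  refine ⟨Fintype.card J, fun j => Qset F cst (e j).1, ?_, ?_, ?_⟩
  · intro j
    exact isRatPolyhedron_Qset (fun h => a h.1 h.2) (fun h => c h.1 h.2) F cst hFapp
      (fun h => rfl) (e j).1
  · intro j k hjk
    rw [relint_eq F cst _ (e j).2.2, relint_eq F cst _ (e k).2.2, Set.disjoint_left]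
    intro x hxj hxk
    have h1 := (mem_cell_iff F cst _ x).1 hxj
    have h2 := (mem_cell_iff F cst _ x).1 hxk
    have : (e j).1 = (e k).1 := funext fun h => (h1 h).symm.trans (h2 h)
    exact hjk (e.injective (Subtype.ext this))
  · have : (⋃ j, intrinsicInterior ℝ (Qset F cst (e j).1)) = ⋃ j, cellSet F cst (e j).1 :=
      Set.iUnion_congr fun j => relint_eq F cst _ (e j).2.2
    rw [this]
    ext x
    simp only [Set.mem_iUnion]
    constructor
    · rintro ⟨i, hxi⟩
      rw [hPeq i] at hxi
      set ε : ι → SignType := fun h => SignType.sign (F h x - cst h) with hεdef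
      have hcell : x ∈ cellSet F cst ε := (mem_cell_iff F cst ε x).2 fun h => rfl
      have hgood : Good ε := by
        refine ⟨⟨i, fun k hk => ?_⟩, ⟨x, hcell⟩⟩
        rw [hεdef] at hk
        have hneg := sign_eq_neg_one_iff.1 hk
        have hle : (c i k : ℝ) ≤ ∑ j, (a i k j : ℝ) * x j := hxi k
        rw [← hFapp ⟨i, k⟩ x] at hle
        have : cst (⟨i, k⟩ : ι) = (c i k : ℝ) := rfl
        rw [this] at hneg
        linarith
      refine ⟨e.symm ⟨ε, hgood⟩, ?_⟩
      have heq : e (e.symm ⟨ε, hgood⟩) = ⟨ε, hgood⟩ := e.apply_symm_apply _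
      rw [heq]
      exact hcell
    · rintro ⟨j, hxj⟩
      obtain ⟨i, hi⟩ := (e j).2.1
      refine ⟨i, ?_⟩
      rw [hPeq i]
      intro k
      have hsign := (mem_cell_iff F cst _ x).1 hxj ⟨i, k⟩
      have hne := hi k
      rw [← hFapp ⟨i, k⟩ x]
      by_contra hlt
      push_neg at hlt
      have hneg : SignType.sign (F (⟨i, k⟩ : ι) x - cst ⟨i, k⟩) = -1 := by
        apply sign_eq_neg_one_iff.2
        have : cst (⟨i, k⟩ : ι) = (c i k : ℝ) := rfl
        rw [this]
        linarith
      rw [hsign] at hneg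
      exact hne hneg
end

section
/- Let Π = P + C ⊆ ℝ^d be a rational convex polyhedron expressed as the Minkowski sum of a rational polytope P (the convex hull of finitely many rational points) and a rational polyhedral cone C (the cone generated by finitely many rational vectors), and let A = C ∩ ℤ^d. Then Π ∩ ℤ^d is a finitely generated module over the monoid A; that is, there exists a finite set F ⊆ ℤ^d such that Π ∩ ℤ^d = F + A. -/
open Pointwise

private lemma rat_mul_nat_den_dvd (q : ℚ) (N : ℕ) (h : q.den ∣ N) :
    ((q.num * (N / q.den : ℕ) : ℤ) : ℚ) = q * N := by
  obtain ⟨c, rfl⟩ := h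
  rw [Nat.mul_div_cancel_left c q.pos]
  push_cast
  have h : (q:ℚ) * q.den = q.num := Rat.mul_den_eq_num q
  linear_combination (-(c:ℚ)) * h

/-- If `Π = P + C ⊆ ℝ^d` is a rational convex polyhedron, expressed as the Minkowski
sum of a rational polytope `P` (convex hull of finitely many rational points) and a
rational polyhedral cone `C` (cone generated by finitely many rational vectors), then
`Π ∩ ℤ^d` is a finitely generated module over the monoid `A = C ∩ ℤ^d`: there is a
finite set `F ⊆ ℤ^d` with `Π ∩ ℤ^d = F + A`. -/
theorem polyhedron_lattice_points_fg_module {d m k : ℕ}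
    (p : Fin m → (Fin d → ℚ)) (v : Fin k → (Fin d → ℚ))
    (P C Pl : Set (Fin d → ℝ))
    (hP : P = convexHull ℝ (Set.range fun i => fun j => ((p i j : ℝ))))
    (hC : C = {x | ∃ c : Fin k → ℝ, (∀ i, 0 ≤ c i) ∧
      x = ∑ i, c i • fun j => ((v i j : ℝ))})
    (hPl : Pl = P + C) :
    ∃ F : Finset (Fin d → ℤ),
      {x : Fin d → ℤ | (fun j => (x j : ℝ)) ∈ Pl} =
        (F : Set (Fin d → ℤ)) + {x : Fin d → ℤ | (fun j => (x j : ℝ)) ∈ C} := by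
  classical
  set ι : (Fin d → ℤ) → (Fin d → ℝ) := fun x => fun j => (x j : ℝ) with hι
  set vR : Fin k → (Fin d → ℝ) := fun i => fun j => ((v i j : ℝ)) with hvR
  set pR : Fin m → (Fin d → ℝ) := fun i => fun j => ((p i j : ℝ)) with hpR
  -- common denominator
  set N : ℕ := ∏ i, ∏ j, (v i j).den with hN
  have hNpos : 0 < N := by
    apply Finset.prod_pos; intro i _; apply Finset.prod_pos; intro j _; exact (v i j).pos
  have hden : ∀ i j, (v i j).den ∣ N := by
    intro i j
    calc (v i j).den ∣ ∏ j, (v i j).den := Finset.dvd_prod_of_mem _ (Finset.mem_univ j)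
      _ ∣ N := Finset.dvd_prod_of_mem _ (Finset.mem_univ i)
  set w : Fin k → (Fin d → ℤ) := fun i j => (v i j).num * (N / (v i j).den : ℕ) with hw
  have hwv : ∀ i j, ((w i j : ℝ)) = (N : ℝ) * (v i j : ℝ) := by
    intro i j
    have := rat_mul_nat_den_dvd (v i j) N (hden i j)
    have h2 : ((w i j : ℤ) : ℚ) = (v i j) * N := this
    have := congrArg (fun q : ℚ => (q : ℝ)) h2
    push_cast at this
    rw [this]; ring
  -- bounds
  set M0 : ℝ := ∑ i, ∑ j, |(p i j : ℝ)| with hM0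
  set M1 : ℝ := ∑ i, ∑ j, (N : ℝ) * |(v i j : ℝ)| with hM1
  set M : ℤ := ⌈M0 + M1⌉ with hM
  -- convex hull bound
  have hull_bound : ∀ q ∈ P, ∀ j, |q j| ≤ M0 := by
    have hK : P ⊆ {y : Fin d → ℝ | ∀ j, |y j| ≤ M0} := by
      rw [hP]
      apply convexHull_min
      · rintro y ⟨i, rfl⟩ j
        calc |(p i j : ℝ)| ≤ ∑ j', |(p i j' : ℝ)| :=
              Finset.single_le_sum (f := fun j' => |(p i j' : ℝ)|)
                (fun j' _ => abs_nonneg _) (Finset.mem_univ j)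
          _ ≤ M0 := Finset.single_le_sum
              (f := fun i => ∑ j', |(p i j' : ℝ)|)
              (fun i _ => Finset.sum_nonneg fun _ _ => abs_nonneg _) (Finset.mem_univ i)
      · intro x hx y hy a b ha hb hab
        intro j
        have : (a • x + b • y) j = a * x j + b * y j := by simp
        rw [this]
        calc |a * x j + b * y j| ≤ |a * x j| + |b * y j| := abs_add_le _ _
          _ = a * |x j| + b * |y j| := by
              rw [abs_mul, abs_mul, abs_of_nonneg ha, abs_of_nonneg hb]
          _ ≤ a * M0 + b * M0 := by
              gcongr
              · exact hx j
              · exact hy j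
          _ = M0 := by rw [← add_mul, hab, one_mul]
    exact fun q hq j => hK hq j
  refine ⟨(Finset.Icc (fun _ => -M) (fun _ => M)).filter (fun x => ι x ∈ Pl), ?_⟩
  ext x
  simp only [Set.mem_setOf_eq, Set.mem_add, Finset.coe_filter, Set.mem_setOf_eq,
    Finset.mem_Icc]
  constructor
  · intro hx
    rw [hPl, Set.mem_add] at hx
    obtain ⟨q, hq, c, hc, hqc⟩ := hx
    rw [hC] at hc
    obtain ⟨cf, hcf0, rfl⟩ := hc
    set n : Fin k → ℤ := fun i => ⌊cf i / (N : ℝ)⌋ with hn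
    have hn0 : ∀ i, 0 ≤ n i := fun i =>
      Int.floor_nonneg.mpr (div_nonneg (hcf0 i) (Nat.cast_nonneg N))
    set t : Fin k → ℝ := fun i => cf i - (n i : ℝ) * N with ht
    have hNR : (0:ℝ) < N := by exact_mod_cast hNpos
    have ht0 : ∀ i, 0 ≤ t i := by
      intro i
      have h1 : ((n i : ℝ)) ≤ cf i / N := Int.floor_le _
      have h2 : (n i : ℝ) * N ≤ cf i := by
        rw [← le_div_iff₀ hNR]
        exact h1
      simp only [ht]
      linarith
    have htN : ∀ i, t i ≤ N := by
      intro i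
      have h1 := Int.lt_floor_add_one (cf i / (N : ℝ))
      have : cf i < ((n i : ℝ) + 1) * N := by
        rw [← div_lt_iff₀ hNR]
        exact h1
      simp only [ht]
      nlinarith
    set z : Fin d → ℤ := fun j => ∑ i, n i * w i j with hz
    have hιz : ∀ j, ((z j : ℝ)) = ∑ i, ((n i : ℝ) * N) * (v i j : ℝ) := by
      intro j
      simp only [hz]
      push_cast
      congr 1
      funext i
      rw [hwv i j]
      ring
    set r : Fin d → ℤ := x - z with hr
    have hιr : ∀ j, ((r j : ℝ)) = q j + ∑ i, t i * (v i j : ℝ) := by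
      intro j
      have hxj : ((x j : ℝ)) = q j + ∑ i, cf i * (v i j : ℝ) := by
        have := congrFun hqc j
        simpa [ι, vR, Finset.sum_apply] using this.symm
      simp only [hr, Pi.sub_apply]
      push_cast
      rw [hxj, hιz]
      simp only [ht, sub_mul]
      rw [Finset.sum_sub_distrib]
      ring
    have hrPl : ι r ∈ Pl := by
      rw [hPl, Set.mem_add]
      refine ⟨q, hq, ∑ i, t i • vR i, ?_, ?_⟩
      · rw [hC]; exact ⟨t, ht0, rfl⟩
      · funext j
        simp only [ι, Finset.sum_apply, Pi.add_apply, Pi.smul_apply, smul_eq_mul]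
        rw [hιr j]
    have hrb : ∀ j, |(r j : ℝ)| ≤ M0 + M1 := by
      intro j
      rw [hιr j]
      calc |q j + ∑ i, t i * (v i j : ℝ)| ≤ |q j| + |∑ i, t i * (v i j : ℝ)| := abs_add_le _ _
        _ ≤ M0 + ∑ i, |t i * (v i j : ℝ)| := by
            gcongr
            · exact hull_bound q hq j
            · exact Finset.abs_sum_le_sum_abs _ _
        _ ≤ M0 + M1 := by
            gcongr
            rw [hM1]
            calc ∑ i, |t i * (v i j : ℝ)| ≤ ∑ i, (N : ℝ) * |(v i j : ℝ)| := by
                  apply Finset.sum_le_sum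
                  intro i _
                  rw [abs_mul]
                  gcongr
                  rw [abs_of_nonneg (ht0 i)]
                  exact htN i
              _ ≤ ∑ i, ∑ j', (N : ℝ) * |(v i j' : ℝ)| := by
                  apply Finset.sum_le_sum
                  intro i _
                  exact Finset.single_le_sum (f := fun j' => (N : ℝ) * |(v i j' : ℝ)|)
                    (fun j' _ => by positivity) (Finset.mem_univ j)
    have hrM : ∀ j, -M ≤ r j ∧ r j ≤ M := by
      intro j
      have h1 := hrb j
      have h2 : (M0 + M1 : ℝ) ≤ (M : ℝ) := Int.le_ceil _
      rw [abs_le] at h1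
      constructor
      · exact_mod_cast le_trans (neg_le_neg h2) h1.1
      · exact_mod_cast le_trans h1.2 h2
    refine ⟨r, ⟨⟨?_, ?_⟩, hrPl⟩, z, ?_, by simp [hr]⟩
    · intro j; exact (hrM j).1
    · intro j; exact (hrM j).2
    · rw [hC]
      refine ⟨fun i => (n i : ℝ) * N, fun i => mul_nonneg (by exact_mod_cast hn0 i) (Nat.cast_nonneg N), ?_⟩
      funext j
      simp only [ι, Finset.sum_apply, Pi.smul_apply, smul_eq_mul]
      exact hιz j
  · rintro ⟨f, ⟨_, hf⟩, a, ha, rfl⟩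
    rw [hPl, Set.mem_add]
    rw [hPl, Set.mem_add] at hf
    obtain ⟨q, hq, c, hc, hqc⟩ := hf
    rw [hC] at hc ha ⊢
    obtain ⟨cf, hcf0, rfl⟩ := hc
    obtain ⟨af, haf0, haf⟩ := ha
    refine ⟨q, hq, ∑ i, (cf i + af i) • vR i, ⟨fun i => cf i + af i,
      fun i => add_nonneg (hcf0 i) (haf0 i), rfl⟩, ?_⟩
    funext j
    have h1 := congrFun hqc j
    have h2 := congrFun haf j
    simp only [ι, vR, Pi.add_apply, Finset.sum_apply, Pi.smul_apply, smul_eq_mul] at h1 h2 ⊢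
    push_cast
    simp only [add_mul, Finset.sum_add_distrib]
    linarith [h1, h2]
end

section
/- Let Π = P + C ⊆ ℝ^d be a rational convex polyhedron expressed as the Minkowski sum of a rational polytope P (the convex hull of finitely many rational points) and a rational polyhedral cone C (the cone generated by finitely many rational vectors), let Π° denote the relative interior of Π, and let A = C ∩ ℤ^d. Then Π° ∩ ℤ^d is a finitely generated module over the monoid A; that is, there exists a finite set F ⊆ ℤ^d such that Π° ∩ ℤ^d = F + A. -/
open Pointwise

lemma monoid_ideal_fg {M : Type*} [AddCommMonoid M] [AddMonoid.FG M] (T : Set M)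
    (hT : ∀ t ∈ T, ∀ a : M, t + a ∈ T) :
    ∃ G : Finset M, ↑G ⊆ T ∧ T = ⋃ g ∈ G, {x | ∃ a : M, x = g + a} := by
  classical
  haveI : IsNoetherianRing (AddMonoidAlgebra ℤ M) :=
    Algebra.FiniteType.isNoetherianRing ℤ (AddMonoidAlgebra ℤ M)
  let I : Ideal (AddMonoidAlgebra ℤ M) :=
    { carrier := {f : AddMonoidAlgebra ℤ M | (f.coeff.support : Set M) ⊆ T}
      zero_mem' := by simp
      add_mem' := by
        intro f g hf hg
        refine Set.Subset.trans (Finset.coe_subset.mpr (Finsupp.support_add (g₁ := f.coeff) (g₂ := g.coeff))) ?_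
        rw [Finset.coe_union]
        exact Set.union_subset hf hg
      smul_mem' := by
        intro c f hf x hx
        have h1 : c • f = c * f := rfl
        rw [h1] at hx
        have hx2 := AddMonoidAlgebra.support_coeff_mul_subset c f hx
        rw [Finset.mem_add] at hx2
        obtain ⟨a, ha, b, hb, rfl⟩ := hx2
        rw [add_comm]
        exact hT b (hf hb) a }
  obtain ⟨X, hX⟩ := IsNoetherian.noetherian I
  have hXI : ∀ f ∈ X, (f.coeff.support : Set M) ⊆ T := by
    intro f hf
    have : f ∈ I := hX ▸ Submodule.subset_span hf
    exact this
  refine ⟨X.biUnion fun f => f.coeff.support, ?_, ?_⟩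
  · intro g hg
    simp only [Finset.coe_biUnion, Set.mem_iUnion, Finset.mem_coe] at hg
    obtain ⟨f, hf, hgf⟩ := hg
    exact hXI f hf hgf
  · ext t
    simp only [Set.mem_iUnion, Set.mem_setOf_eq, Finset.mem_biUnion]
    constructor
    · intro ht
      have hsingle : (AddMonoidAlgebra.single t (1:ℤ) : AddMonoidAlgebra ℤ M) ∈ I := by
        show ((AddMonoidAlgebra.single t (1:ℤ)).coeff.support : Set M) ⊆ T
        intro y hy
        rw [AddMonoidAlgebra.coeff_single] at hy
        have := Finsupp.support_single_subset hy
        simp only [Finset.mem_singleton] at this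
        subst this; exact ht
      have hsp : (AddMonoidAlgebra.single t (1:ℤ) : AddMonoidAlgebra ℤ M) ∈
          Submodule.span (AddMonoidAlgebra ℤ M) (↑X : Set (AddMonoidAlgebra ℤ M)) := by
        rw [hX]; exact hsingle
      obtain ⟨c, -, hc⟩ := Submodule.mem_span_finset.mp hsp
      have htmem : t ∈ (AddMonoidAlgebra.single t (1:ℤ) : AddMonoidAlgebra ℤ M).coeff.support := by
        simp [AddMonoidAlgebra.coeff_single, Finsupp.mem_support_iff]
      rw [← hc, AddMonoidAlgebra.coeff_sum] at htmem
      obtain ⟨f, hf, htf⟩ := Finsupp.mem_support_finset_sum t htmem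
      have h1 : c f • f = c f * f := rfl
      rw [h1] at htf
      have := AddMonoidAlgebra.support_coeff_mul_subset (c f) f htf
      rw [Finset.mem_add] at this
      obtain ⟨a, ha, b, hb, rfl⟩ := this
      exact ⟨b, ⟨⟨f, hf, hb⟩, a, add_comm a b⟩⟩
    · rintro ⟨g, ⟨⟨f, hf, hgf⟩, a, rfl⟩⟩
      exact hT g (hXI f hf hgf) a


lemma intrinsicInterior_add_right {E : Type*} [NormedAddCommGroup E] [NormedSpace ℝ E]
    {s : Set E} {a : E} (h : ∀ y ∈ s, y + a ∈ s) {x : E}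
    (hx : x ∈ intrinsicInterior ℝ s) : x + a ∈ intrinsicInterior ℝ s := by
  classical
  have hxs : x ∈ s := intrinsicInterior_subset hx
  have hxa : x + a ∈ s := h x hxs
  have ha : a ∈ (affineSpan ℝ s).direction := by
    have := AffineSubspace.vsub_mem_direction (subset_affineSpan ℝ s hxa)
      (subset_affineSpan ℝ s hxs)
    simpa using this
  let φ : ↥(affineSpan ℝ s) ≃ₜ ↥(affineSpan ℝ s) :=
    { toFun := fun y => ⟨a + ↑y, by
        simpa [vadd_eq_add] using AffineSubspace.vadd_mem_of_mem_direction ha y.2⟩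
      invFun := fun y => ⟨-a + ↑y, by
        simpa [vadd_eq_add] using
          AffineSubspace.vadd_mem_of_mem_direction (Submodule.neg_mem _ ha) y.2⟩
      left_inv := fun y => by ext; simp
      right_inv := fun y => by ext; simp
      continuous_toFun := by
        exact Continuous.subtype_mk (continuous_const.add continuous_subtype_val) _
      continuous_invFun := by
        exact Continuous.subtype_mk (continuous_const.add continuous_subtype_val) _ }
  rw [mem_intrinsicInterior] at hx ⊢
  obtain ⟨y, hy, hyx⟩ := hx
  refine ⟨φ y, ?_, by simp [φ, hyx, add_comm]⟩
  have himg : φ '' ((↑) ⁻¹' s) ⊆ ((↑) ⁻¹' s : Set ↥(affineSpan ℝ s)) := by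
    rintro z ⟨u, hu, rfl⟩
    simpa [φ, add_comm] using h _ hu
  have hmem : φ y ∈ interior (φ '' ((↑) ⁻¹' s)) := by
    rw [← Homeomorph.image_interior]
    exact Set.mem_image_of_mem _ hy
  exact interior_mono himg hmem


/-- If `Π = P + C ⊆ ℝ^d` is a rational convex polyhedron, expressed as the Minkowski
sum of a rational polytope `P` (convex hull of finitely many rational points) and a
rational polyhedral cone `C` (cone generated by finitely many rational vectors), and
`Π°` is the relative (intrinsic) interior of `Π`, then `Π° ∩ ℤ^d` is a finitely
generated module over the monoid `A = C ∩ ℤ^d`: there is a finite set `F ⊆ ℤ^d`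
with `Π° ∩ ℤ^d = F + A`. -/
theorem polyhedron_relint_lattice_points_fg_module {d m k : ℕ}
    (p : Fin m → (Fin d → ℚ)) (v : Fin k → (Fin d → ℚ))
    (P C Pl : Set (Fin d → ℝ))
    (hP : P = convexHull ℝ (Set.range fun i => fun j => ((p i j : ℝ))))
    (hC : C = {x | ∃ c : Fin k → ℝ, (∀ i, 0 ≤ c i) ∧
      x = ∑ i, c i • fun j => ((v i j : ℝ))})
    (hPl : Pl = P + C) :
    ∃ F : Finset (Fin d → ℤ),
      {x : Fin d → ℤ | (fun j => (x j : ℝ)) ∈ intrinsicInterior ℝ Pl} =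
        (F : Set (Fin d → ℤ)) + {x : Fin d → ℤ | (fun j => (x j : ℝ)) ∈ C} := by
  classical
  -- integer rescaling of the cone generators
  set D : ℤ := ∏ i : Fin k, ∏ j : Fin d, ((v i j).den : ℤ) with hD
  have hDpos : 0 < D := by
    apply Finset.prod_pos; intro i _; apply Finset.prod_pos; intro j _
    exact_mod_cast (v i j).den_pos
  have hden : ∀ i j, ((v i j).den : ℤ) ∣ D := by
    intro i j
    have h1 : ((v i j).den : ℤ) ∣ ∏ j' : Fin d, ((v i j').den : ℤ) :=
      Finset.dvd_prod_of_mem (fun j' => ((v i j').den : ℤ)) (Finset.mem_univ j)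
    have h2 : (∏ j' : Fin d, ((v i j').den : ℤ)) ∣ D :=
      Finset.dvd_prod_of_mem (fun i' => ∏ j' : Fin d, ((v i' j').den : ℤ)) (Finset.mem_univ i)
    exact dvd_trans h1 h2
  set w : Fin k → Fin d → ℤ := fun i j => (v i j).num * (D / ((v i j).den : ℤ)) with hwdef
  have hwQ : ∀ i j, ((w i j : ℚ)) = v i j * (D : ℚ) := by
    intro i j
    have hd0 : (((v i j).den : ℤ) : ℚ) ≠ 0 := by
      exact_mod_cast (Nat.cast_ne_zero (R := ℤ)).mpr (v i j).den_nz
    apply mul_right_cancel₀ hd0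
    have h1 : (D / ((v i j).den : ℤ)) * ((v i j).den : ℤ) = D :=
      Int.ediv_mul_cancel (hden i j)
    have h2 : v i j * (((v i j).den : ℤ) : ℚ) = ((v i j).num : ℚ) := by
      push_cast
      have hgen : ∀ q : ℚ, q * (q.den : ℚ) = (q.num : ℚ) := by
        intro q
        have hdQ : (q.den : ℚ) ≠ 0 := by exact_mod_cast q.den_nz
        have h := Rat.num_div_den q
        rw [div_eq_iff hdQ] at h
        exact h.symm
      exact hgen (v i j)
    calc ((w i j : ℚ)) * ((v i j).den : ℤ)
        = ((v i j).num : ℚ) * (((D / ((v i j).den : ℤ)) * ((v i j).den : ℤ) : ℤ) : ℚ) := by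
          push_cast [hwdef]; ring
      _ = ((v i j).num : ℚ) * (D : ℚ) := by rw [h1]
      _ = v i j * (D : ℚ) * ((v i j).den : ℤ) := by
          rw [mul_comm (v i j) (D:ℚ), mul_assoc, h2]
          ring
  have hwR : ∀ i j, ((w i j : ℝ)) = (v i j : ℝ) * (D : ℝ) := by
    intro i j
    have := hwQ i j
    have h2 : (((w i j : ℚ)) : ℝ) = (((v i j * (D:ℚ)) : ℚ) : ℝ) := by rw [this]
    push_cast at h2
    exact_mod_cast h2
  set wR : Fin k → Fin d → ℝ := fun i j => (w i j : ℝ) with hwRdef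
  -- description of C via the integer generators
  have hDR : ((D : ℝ)) ≠ 0 := by
    have : (0:ℝ) < (D:ℝ) := by exact_mod_cast hDpos
    linarith
  have hwRv : ∀ i, wR i = (D : ℝ) • (fun j => ((v i j : ℝ))) := by
    intro i
    funext j
    simp only [hwRdef, Pi.smul_apply, smul_eq_mul]
    rw [hwR i j]; ring
  have hCw : ∀ x : Fin d → ℝ, x ∈ C ↔
      ∃ c : Fin k → ℝ, (∀ i, 0 ≤ c i) ∧ x = ∑ i, c i • wR i := by
    intro x
    rw [hC]
    simp only [Set.mem_setOf_eq]
    constructor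
    · rintro ⟨c, hc, rfl⟩
      refine ⟨fun i => c i / (D:ℝ), fun i => div_nonneg (hc i) (by positivity), ?_⟩
      apply Finset.sum_congr rfl
      intro i _
      rw [hwRv i, smul_smul, div_mul_cancel₀ _ hDR]
    · rintro ⟨c, hc, rfl⟩
      refine ⟨fun i => c i * (D:ℝ), fun i => mul_nonneg (hc i) (by positivity), ?_⟩
      apply Finset.sum_congr rfl
      intro i _
      rw [hwRv i, smul_smul]
  have hC0 : (0 : Fin d → ℝ) ∈ C := by
    rw [hC]
    exact ⟨0, fun i => le_refl 0, by simp⟩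
  have hCadd : ∀ x ∈ C, ∀ y ∈ C, x + y ∈ C := by
    intro x hx y hy
    rw [hC] at hx hy ⊢
    obtain ⟨c, hc, rfl⟩ := hx
    obtain ⟨c', hc', rfl⟩ := hy
    refine ⟨c + c', fun i => add_nonneg (hc i) (hc' i), ?_⟩
    rw [← Finset.sum_add_distrib]
    apply Finset.sum_congr rfl
    intro i _
    rw [Pi.add_apply, add_smul]
  have hwC : ∀ i, wR i ∈ C := by
    intro i
    rw [hCw]
    refine ⟨fun i' => if i' = i then 1 else 0, fun i' => by positivity, ?_⟩
    rw [Finset.sum_eq_single i]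
    · simp
    · intro b _ hb; simp [hb]
    · intro h; exact absurd (Finset.mem_univ i) h
  have hPlC : ∀ x ∈ Pl, ∀ y ∈ C, x + y ∈ Pl := by
    intro x hx y hy
    rw [hPl] at hx ⊢
    obtain ⟨q, hq, c, hc, rfl⟩ := Set.mem_add.mp hx
    exact Set.mem_add.mpr ⟨q, hq, c + y, hCadd c hc y hy, (add_assoc q c y).symm⟩
  -- bounds
  set K1 : ℝ := ∑ i : Fin m, ∑ j : Fin d, |(p i j : ℝ)| with hK1def
  set K2 : ℝ := ∑ i : Fin k, ∑ j : Fin d, |(w i j : ℝ)| with hK2def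
  have hK1nn : 0 ≤ K1 := by positivity
  have hK2nn : 0 ≤ K2 := by positivity
  have hK1 : ∀ q ∈ P, ∀ j, |q j| ≤ K1 := by
    intro q hq j
    rw [hP] at hq
    have hsub : convexHull ℝ (Set.range fun i => fun j => ((p i j : ℝ))) ⊆
        {z : Fin d → ℝ | ∀ j, |z j| ≤ K1} := by
      apply convexHull_min
      · rintro z ⟨i, rfl⟩ j'
        calc |(p i j' : ℝ)| ≤ ∑ j'', |(p i j'' : ℝ)| :=
              Finset.single_le_sum (f := fun j'' => |(p i j'' : ℝ)|)
                (fun j'' _ => abs_nonneg _) (Finset.mem_univ j')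
          _ ≤ K1 := Finset.single_le_sum
              (f := fun i' => ∑ j'', |(p i' j'' : ℝ)|)
              (fun i' _ => Finset.sum_nonneg fun j'' _ => abs_nonneg _) (Finset.mem_univ i)
      · intro z hz z' hz' a b ha hb hab j'
        have : (a • z + b • z') j' = a * z j' + b * z' j' := by
          simp [Pi.add_apply, Pi.smul_apply, smul_eq_mul]
        rw [this]
        calc |a * z j' + b * z' j'| ≤ |a * z j'| + |b * z' j'| := abs_add_le _ _
          _ = a * |z j'| + b * |z' j'| := by
              rw [abs_mul, abs_mul, abs_of_nonneg ha, abs_of_nonneg hb]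
          _ ≤ a * K1 + b * K1 := by
              gcongr
              · exact hz j'
              · exact hz' j'
          _ = K1 := by rw [← add_mul, hab, one_mul]
    exact hsub hq j
  have hK2 : ∀ t : Fin k → ℝ, (∀ i, 0 ≤ t i) → (∀ i, t i ≤ 1) →
      ∀ j, |(∑ i, t i • wR i) j| ≤ K2 := by
    intro t ht0 ht1 j
    have happ : (∑ i, t i • wR i) j = ∑ i, t i * (w i j : ℝ) := by
      rw [Finset.sum_apply]
      apply Finset.sum_congr rfl
      intro i _
      simp [hwRdef, Pi.smul_apply, smul_eq_mul]
    rw [happ]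
    calc |∑ i, t i * (w i j : ℝ)| ≤ ∑ i, |t i * (w i j : ℝ)| :=
          Finset.abs_sum_le_sum_abs _ _
      _ ≤ ∑ i, |(w i j : ℝ)| := by
          apply Finset.sum_le_sum
          intro i _
          rw [abs_mul, abs_of_nonneg (ht0 i)]
          exact mul_le_of_le_one_left (abs_nonneg _) (ht1 i)
      _ ≤ K2 := by
          apply Finset.sum_le_sum
          intro i _
          exact Finset.single_le_sum (f := fun j' => |(w i j' : ℝ)|)
            (fun j' _ => abs_nonneg _) (Finset.mem_univ j)
  set Kz : ℤ := ⌈K1 + K2⌉ with hKzdef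
  have hfin : Set.Finite {x : Fin d → ℤ | ∀ j, |x j| ≤ Kz} := by
    apply Set.Finite.subset (Set.Finite.pi (fun j : Fin d => Set.finite_Icc (-Kz) Kz))
    intro x hx
    simp only [Set.mem_pi, Set.mem_univ, Set.mem_Icc, forall_true_left]
    intro j; exact abs_le.mp (hx j)
  set F₀ : Finset (Fin d → ℤ) := hfin.toFinset with hF₀def
  have hF₀mem : ∀ x : Fin d → ℤ, (∀ j, |(x j : ℝ)| ≤ K1 + K2) → x ∈ F₀ := by
    intro x hx
    rw [hF₀def, Set.Finite.mem_toFinset]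
    intro j
    have h1 : (|x j| : ℝ) ≤ ((Kz : ℤ) : ℝ) := by
      calc (|(x j : ℝ)|) ≤ K1 + K2 := hx j
        _ ≤ (⌈K1 + K2⌉ : ℝ) := Int.le_ceil _
    exact_mod_cast h1
  -- decomposition of lattice points of Pl
  have hdecomp : ∀ x : Fin d → ℤ, (fun j => (x j : ℝ)) ∈ Pl →
      ∃ f a : Fin d → ℤ, x = f + a ∧ f ∈ F₀ ∧ (fun j => (a j : ℝ)) ∈ C := by
    intro x hx
    rw [hPl] at hx
    obtain ⟨q, hq, cv, hcv, hsum⟩ := Set.mem_add.mp hx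
    obtain ⟨c, hc0, rfl⟩ := (hCw cv).mp hcv
    set aZ : Fin d → ℤ := fun j => ∑ i, ⌊c i⌋ * w i j with haZ
    have haR : ∀ j, ((aZ j : ℝ)) = ∑ i, ((⌊c i⌋ : ℝ)) * (w i j : ℝ) := by
      intro j; simp only [haZ]; push_cast; rfl
    set t : Fin k → ℝ := fun i => c i - ⌊c i⌋ with htdef
    have ht0 : ∀ i, 0 ≤ t i := fun i => sub_nonneg.mpr (Int.floor_le _)
    have ht1 : ∀ i, t i ≤ 1 := by
      intro i
      have := Int.lt_floor_add_one (c i)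
      simp only [htdef]
      linarith
    have hxj : ∀ j, (x j : ℝ) = q j + ∑ i, c i * (w i j : ℝ) := by
      intro j
      have h := congrFun hsum j
      rw [Pi.add_apply, Finset.sum_apply] at h
      simp only [Pi.smul_apply, smul_eq_mul, hwRdef] at h
      exact h.symm
    refine ⟨x - aZ, aZ, by ring, ?_, ?_⟩
    · apply hF₀mem
      intro j
      have hsplit : ∑ i, t i * (w i j : ℝ)
          = ∑ i, c i * (w i j : ℝ) - ∑ i, ((⌊c i⌋:ℝ)) * (w i j : ℝ) := by
        rw [← Finset.sum_sub_distrib]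
        apply Finset.sum_congr rfl
        intro i _
        simp only [htdef]
        ring
      have heq : (((x - aZ) j : ℤ) : ℝ) = q j + (∑ i, t i • wR i) j := by
        rw [Pi.sub_apply]
        push_cast
        rw [hxj j, haR j, Finset.sum_apply]
        simp only [Pi.smul_apply, smul_eq_mul]
        rw [hsplit]
        ring
      rw [heq]
      calc |q j + (∑ i, t i • wR i) j| ≤ |q j| + |(∑ i, t i • wR i) j| := abs_add_le _ _
        _ ≤ K1 + K2 := add_le_add (hK1 q hq j) (hK2 t ht0 ht1 j)
    · rw [hCw]
      refine ⟨fun i => ((⌊c i⌋ : ℝ)), fun i => ?_, ?_⟩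
      · show (0:ℝ) ≤ ((⌊c i⌋ : ℝ))
        exact_mod_cast Int.floor_nonneg.mpr (hc0 i)
      funext j
      rw [haR j, Finset.sum_apply]
      apply Finset.sum_congr rfl
      intro i _
      simp [hwRdef, Pi.smul_apply, smul_eq_mul]
  -- the monoid of lattice points of C
  set AZ : AddSubmonoid (Fin d → ℤ) :=
    { carrier := {x : Fin d → ℤ | (fun j => (x j : ℝ)) ∈ C}
      zero_mem' := by
        have : (fun j => (((0 : Fin d → ℤ)) j : ℝ)) = (0 : Fin d → ℝ) := by
          funext j; simp
        show (fun j => (((0 : Fin d → ℤ)) j : ℝ)) ∈ C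
        rw [this]; exact hC0
      add_mem' := by
        intro x y hx hy
        have : (fun j => (((x + y : Fin d → ℤ)) j : ℝ))
            = (fun j => (x j : ℝ)) + fun j => (y j : ℝ) := by
          funext j; push_cast [Pi.add_apply]; ring
        show (fun j => (((x + y : Fin d → ℤ)) j : ℝ)) ∈ C
        rw [this]; exact hCadd _ hx _ hy } with hAZdef
  have hwF : ∀ i, w i ∈ F₀ := by
    intro i
    apply hF₀mem
    intro j
    have h1 : |(w i j : ℝ)| ≤ K2 := by
      calc |(w i j : ℝ)| ≤ ∑ j', |(w i j' : ℝ)| :=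
            Finset.single_le_sum (f := fun j' => |(w i j' : ℝ)|)
              (fun j' _ => abs_nonneg _) (Finset.mem_univ j)
        _ ≤ K2 := Finset.single_le_sum (f := fun i' => ∑ j', |(w i' j' : ℝ)|)
              (fun i' _ => Finset.sum_nonneg fun j' _ => abs_nonneg _) (Finset.mem_univ i)
    linarith
  have hAZfg : AddMonoid.FG ↥AZ := by
    rw [AddMonoid.fg_iff_addSubmonoid_fg]
    refine ⟨F₀.filter (fun x => (fun j => (x j : ℝ)) ∈ C), ?_⟩
    apply le_antisymm
    · rw [AddSubmonoid.closure_le]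
      intro g hg
      simp only [Finset.coe_filter, Set.mem_setOf_eq] at hg
      exact hg.2
    · intro a ha
      have haC : (fun j => (a j : ℝ)) ∈ C := ha
      obtain ⟨c, hc0, hsum⟩ := (hCw _).mp haC
      set aZ : Fin d → ℤ := fun j => ∑ i, ⌊c i⌋ * w i j with haZ
      have haR : ∀ j, ((aZ j : ℝ)) = ∑ i, ((⌊c i⌋ : ℝ)) * (w i j : ℝ) := by
        intro j; simp only [haZ]; push_cast; rfl
      set t : Fin k → ℝ := fun i => c i - ⌊c i⌋ with htdef
      have ht0 : ∀ i, 0 ≤ t i := fun i => sub_nonneg.mpr (Int.floor_le _)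
      have ht1 : ∀ i, t i ≤ 1 := by
        intro i
        have := Int.lt_floor_add_one (c i)
        simp only [htdef]
        linarith
      have hsplit : ∀ j, ∑ i, t i * (w i j : ℝ)
          = ∑ i, c i * (w i j : ℝ) - ∑ i, ((⌊c i⌋:ℝ)) * (w i j : ℝ) := by
        intro j
        rw [← Finset.sum_sub_distrib]
        apply Finset.sum_congr rfl
        intro i _
        simp only [htdef]
        ring
      have hrR : (fun j => (((a - aZ) j : ℤ) : ℝ)) = ∑ i, t i • wR i := by
        funext j
        rw [Pi.sub_apply]
        push_cast
        have h := congrFun hsum j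
        rw [Finset.sum_apply] at h
        simp only [Pi.smul_apply, smul_eq_mul, hwRdef] at h
        rw [h, haR j, Finset.sum_apply]
        simp only [Pi.smul_apply, smul_eq_mul]
        rw [hsplit j]
      have hrC : (fun j => (((a - aZ) j : ℤ) : ℝ)) ∈ C := by
        rw [hrR, hCw]
        exact ⟨t, ht0, rfl⟩
      have hrF : (a - aZ) ∈ F₀ := by
        apply hF₀mem
        intro j
        have := congrFun hrR j
        rw [this]
        have := hK2 t ht0 ht1 j
        linarith
      have hnat : ∀ i, ((⌊c i⌋).toNat : ℤ) = ⌊c i⌋ :=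
        fun i => Int.toNat_of_nonneg (Int.floor_nonneg.mpr (hc0 i))
      have hsum2 : a = (a - aZ) + ∑ i, (⌊c i⌋).toNat • w i := by
        funext j
        have h2 : (∑ i, (⌊c i⌋).toNat • w i) j = ∑ i, ⌊c i⌋ * w i j := by
          rw [Finset.sum_apply]
          apply Finset.sum_congr rfl
          intro i _
          rw [Pi.smul_apply, nsmul_eq_mul, hnat i]
        rw [Pi.add_apply, Pi.sub_apply, h2, haZ]
        ring
      rw [hsum2]
      apply AddSubmonoid.add_mem
      · apply AddSubmonoid.subset_closure
        rw [Finset.coe_filter]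
        exact ⟨hrF, hrC⟩
      · apply AddSubmonoid.sum_mem
        intro i _
        apply AddSubmonoid.nsmul_mem
        apply AddSubmonoid.subset_closure
        rw [Finset.coe_filter]
        refine ⟨hwF i, ?_⟩
        show (fun j => ((w i j : ℝ))) ∈ C
        exact hwC i
  -- stability of the relative interior under adding cone lattice points
  have hstab : ∀ x : Fin d → ℤ, (fun j => (x j : ℝ)) ∈ intrinsicInterior ℝ Pl →
      ∀ a : Fin d → ℤ, (fun j => (a j : ℝ)) ∈ C →
      (fun j => ((x + a) j : ℝ)) ∈ intrinsicInterior ℝ Pl := by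
    intro x hx a ha
    have hcast : (fun j => ((x + a) j : ℝ))
        = (fun j => (x j : ℝ)) + (fun j => (a j : ℝ)) := by
      funext j
      rw [Pi.add_apply, Pi.add_apply]
      push_cast
      ring
    rw [hcast]
    exact intrinsicInterior_add_right (fun y hy => hPlC y hy _ ha) hx
  haveI := hAZfg
  have hTfg : ∀ f : Fin d → ℤ, ∃ G : Finset ↥AZ,
      ↑G ⊆ {b : ↥AZ | (fun j => ((f + (b : Fin d → ℤ)) j : ℝ)) ∈ intrinsicInterior ℝ Pl} ∧
      {b : ↥AZ | (fun j => ((f + (b : Fin d → ℤ)) j : ℝ)) ∈ intrinsicInterior ℝ Pl}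
        = ⋃ g ∈ G, {b : ↥AZ | ∃ e : ↥AZ, b = g + e} := by
    intro f
    apply monoid_ideal_fg
    intro b hb e
    show (fun j => ((f + ((b + e : ↥AZ) : Fin d → ℤ)) j : ℝ)) ∈ intrinsicInterior ℝ Pl
    have hcoe : ((b + e : ↥AZ) : Fin d → ℤ) = (b : Fin d → ℤ) + (e : Fin d → ℤ) := rfl
    have h2 := hstab (f + (b : Fin d → ℤ)) hb (e : Fin d → ℤ) e.2
    have h3 : f + ((b : Fin d → ℤ) + (e : Fin d → ℤ))
        = (f + (b : Fin d → ℤ)) + (e : Fin d → ℤ) := by rw [add_assoc]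
    rw [hcoe, h3]
    exact h2
  choose G hG1 hG2 using hTfg
  refine ⟨F₀.biUnion fun f => (G f).image fun g : ↥AZ => f + (g : Fin d → ℤ), ?_⟩
  ext x
  simp only [Set.mem_setOf_eq]
  constructor
  · intro hx
    have hxPl : (fun j => (x j : ℝ)) ∈ Pl := intrinsicInterior_subset hx
    obtain ⟨f, a, rfl, hf, ha⟩ := hdecomp x hxPl
    have hbT : (⟨a, ha⟩ : ↥AZ) ∈
        {b : ↥AZ | (fun j => ((f + (b : Fin d → ℤ)) j : ℝ)) ∈ intrinsicInterior ℝ Pl} := hx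
    rw [hG2 f] at hbT
    simp only [Set.mem_iUnion, Set.mem_setOf_eq] at hbT
    obtain ⟨g, hg, e, hbe⟩ := hbT
    rw [Set.mem_add]
    refine ⟨f + (g : Fin d → ℤ), ?_, (e : Fin d → ℤ), e.2, ?_⟩
    · exact Finset.mem_coe.mpr (Finset.mem_biUnion.mpr
        ⟨f, hf, Finset.mem_image.mpr ⟨g, hg, rfl⟩⟩)
    · have hae : a = (g : Fin d → ℤ) + (e : Fin d → ℤ) := by
        have := congrArg (fun b : ↥AZ => (b : Fin d → ℤ)) hbe
        exact this
      rw [hae, add_assoc]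
  · intro hx
    rw [Set.mem_add] at hx
    obtain ⟨u, hu, z, hz, rfl⟩ := hx
    have hu' := Finset.mem_coe.mp hu
    rw [Finset.mem_biUnion] at hu'
    obtain ⟨f, hf, hu2⟩ := hu'
    rw [Finset.mem_image] at hu2
    obtain ⟨g, hg, rfl⟩ := hu2
    have h1 : (fun j => ((f + (g : Fin d → ℤ)) j : ℝ)) ∈ intrinsicInterior ℝ Pl := by
      exact hG1 f (Finset.mem_coe.mpr hg)
    exact hstab (f + (g : Fin d → ℤ)) h1 z hz
end

section
/- Suppose W ⊆ ℤ^d is a finite union of sets Wᵢ, each of which is a translate of a normal affine semigroup Aᵢ = (ℝ₊Aᵢ) ∩ Lᵢ for some subgroup Lᵢ ⊆ ℤ^d. Then there exist a single subgroup L ⊆ ℤ^d of finite index, finitely many rational polyhedral cones σⱼ ⊆ ℝ^d, and vectors fⱼ ∈ ℤ^d such that W = ⋃ⱼ (fⱼ + (σⱼ ∩ L)); that is, W can be expressed as a finite union of translates of normal affine semigroups all defined with respect to the same finite-index sublattice L of ℤ^d. -/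
open Pointwise

/-- A rational polyhedral cone in `ℝ^d`: the set of nonnegative real combinations of
finitely many rational vectors. -/
def IsRatPolyhedralCone {d : ℕ} (σ : Set (Fin d → ℝ)) : Prop :=
  ∃ (m : ℕ) (v : Fin m → (Fin d → ℚ)),
    σ = {x | ∃ c : Fin m → ℝ, (∀ i, 0 ≤ c i) ∧ x = ∑ i, c i • fun j => ((v i j : ℝ))}

namespace UNC

variable {d : ℕ}

/-- cast a rational vector to a real vector -/
def qre (v : Fin d → ℚ) : Fin d → ℝ := fun j => (v j : ℝ)

/-- cast an integer vector to a real vector -/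
def zre (x : Fin d → ℤ) : Fin d → ℝ := fun j => (x j : ℝ)

/-- cast an integer vector to a rational vector -/
def zrat (x : Fin d → ℤ) : Fin d → ℚ := fun j => (x j : ℚ)

/-- rational dot product -/
def dotQ (u v : Fin d → ℚ) : ℚ := ∑ j, u j * v j

/-- dot of a rational functional with a real vector -/
def dotR (u : Fin d → ℚ) (x : Fin d → ℝ) : ℝ := ∑ j, (u j : ℝ) * x j

/-- the cone generated by a finite family of rational vectors -/
def coneOf {ι : Type} [Fintype ι] (v : ι → (Fin d → ℚ)) : Set (Fin d → ℝ) :=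
  {x | ∃ c : ι → ℝ, (∀ i, 0 ≤ c i) ∧ x = ∑ i, c i • qre (v i)}

lemma isRatPolyhedralCone_coneOf {ι : Type} [Fintype ι] (v : ι → (Fin d → ℚ)) :
    IsRatPolyhedralCone (coneOf v) := by
  classical
  obtain ⟨e⟩ : Nonempty (ι ≃ Fin (Fintype.card ι)) := ⟨Fintype.equivFin ι⟩
  refine ⟨Fintype.card ι, fun i => v (e.symm i), ?_⟩
  ext x
  constructor
  · rintro ⟨c, hc, rfl⟩
    refine ⟨fun i => c (e.symm i), fun i => hc _, ?_⟩
    rw [← e.symm.sum_comp (fun i => c i • qre (v i))]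
    rfl
  · rintro ⟨c, hc, rfl⟩
    refine ⟨fun i => c (e i), fun i => hc _, ?_⟩
    rw [← e.symm.sum_comp (fun i => c (e i) • qre (v i))]
    simp only [Equiv.apply_symm_apply]
    rfl

lemma qre_add (a b : Fin d → ℚ) : qre (a + b) = qre a + qre b := by
  funext j; simp [qre]
lemma qre_smul (q : ℚ) (a : Fin d → ℚ) : qre (q • a) = (q : ℝ) • qre a := by
  funext j; simp [qre]
lemma zre_add (a b : Fin d → ℤ) : zre (a + b) = zre a + zre b := by
  funext j; simp [zre]
lemma zre_sub (a b : Fin d → ℤ) : zre (a - b) = zre a - zre b := by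
  funext j; simp [zre]
lemma zre_zsmul (a : ℤ) (z : Fin d → ℤ) : zre (a • z) = (a : ℝ) • zre z := by
  funext j; simp [zre]
lemma dotR_qre (u w : Fin d → ℚ) : dotR u (qre w) = (dotQ u w : ℝ) := by
  simp [dotR, dotQ, qre]
lemma dotR_zre (u : Fin d → ℚ) (x : Fin d → ℤ) : dotR u (zre x) = (dotQ u (zrat x) : ℝ) := by
  simp [dotR, dotQ, zre, zrat]
lemma dotR_add (u : Fin d → ℚ) (x y : Fin d → ℝ) : dotR u (x + y) = dotR u x + dotR u y := by
  simp [dotR, Pi.add_apply, mul_add, Finset.sum_add_distrib]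
lemma dotR_sub (u : Fin d → ℚ) (x y : Fin d → ℝ) : dotR u (x - y) = dotR u x - dotR u y := by
  simp [dotR, Pi.sub_apply, mul_sub, Finset.sum_sub_distrib]
lemma dotR_smul (u : Fin d → ℚ) (r : ℝ) (x : Fin d → ℝ) : dotR u (r • x) = r * dotR u x := by
  simp only [dotR, Pi.smul_apply, smul_eq_mul, Finset.mul_sum]
  exact Finset.sum_congr rfl fun j _ => by ring
lemma dotR_sum (u : Fin d → ℚ) {ι : Type} (s : Finset ι) (f : ι → (Fin d → ℝ)) :
    dotR u (∑ i ∈ s, f i) = ∑ i ∈ s, dotR u (f i) := by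
  classical
  induction s using Finset.induction with
  | empty => simp [dotR]
  | insert _ _ h ih => rw [Finset.sum_insert h, Finset.sum_insert h, dotR_add, ih]

lemma qre_zero : qre (0 : Fin d → ℚ) = 0 := by funext j; simp [qre]
lemma qre_sub (a b : Fin d → ℚ) : qre (a - b) = qre a - qre b := by funext j; simp [qre]
lemma dotR_zero (u : Fin d → ℚ) : dotR u (0 : Fin d → ℝ) = 0 := by simp [dotR]
lemma dotQ_smul_right (u : Fin d → ℚ) (q : ℚ) (a : Fin d → ℚ) :
    dotQ u (q • a) = q * dotQ u a := by
  simp only [dotQ, Pi.smul_apply, smul_eq_mul, Finset.mul_sum]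
  exact Finset.sum_congr rfl fun j _ => by ring
lemma dotQ_sub_right (u : Fin d → ℚ) (a b : Fin d → ℚ) :
    dotQ u (a - b) = dotQ u a - dotQ u b := by
  simp [dotQ, Pi.sub_apply, mul_sub, Finset.sum_sub_distrib]

lemma dotQ_comm (u v : Fin d → ℚ) : dotQ u v = dotQ v u := by
  simp [dotQ, mul_comm]
lemma dotQ_add_right (u a b : Fin d → ℚ) : dotQ u (a + b) = dotQ u a + dotQ u b := by
  simp [dotQ, Pi.add_apply, mul_add, Finset.sum_add_distrib]
lemma dotQ_sum_right (u : Fin d → ℚ) {ι : Type} (s : Finset ι) (f : ι → (Fin d → ℚ)) :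
    dotQ u (∑ i ∈ s, f i) = ∑ i ∈ s, dotQ u (f i) := by
  classical
  induction s using Finset.induction with
  | empty => simp [dotQ]
  | insert _ _ h ih => rw [Finset.sum_insert h, Finset.sum_insert h, dotQ_add_right, ih]
lemma dotQ_single (u : Fin d → ℚ) (j : Fin d) : dotQ u (Pi.single j 1) = u j := by
  classical
  simp only [dotQ, Pi.single_apply]
  have hpt : ∀ j' ∈ Finset.univ, u j' * (if j' = j then (1:ℚ) else 0)
      = if j' = j then u j' else 0 := by
    intro j' _
    rw [mul_ite, mul_one, mul_zero]
  rw [Finset.sum_congr rfl hpt, Finset.sum_ite_eq' Finset.univ j u, if_pos (Finset.mem_univ j)]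
lemma zrat_add (a b : Fin d → ℤ) : zrat (a + b) = zrat a + zrat b := by
  funext j; simp [zrat]
lemma zrat_zsmul (a : ℤ) (z : Fin d → ℤ) : zrat (a • z) = (a : ℚ) • zrat z := by
  funext j; simp [zrat]
lemma zrat_comb {k : ℕ} (a : Fin k → ℤ) (b : Fin k → (Fin d → ℤ)) :
    zrat (∑ s, a s • b s) = ∑ s, (a s : ℚ) • zrat (b s) := by
  funext j
  simp only [zrat, Finset.sum_apply, Pi.smul_apply, smul_eq_mul]
  push_cast
  rfl
lemma den_clear (q : ℚ) (D : ℤ) (hD : (q.den : ℤ) ∣ D) : ∃ n : ℤ, (n : ℚ) = (D : ℚ) * q := by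
  obtain ⟨t, ht⟩ := hD
  refine ⟨q.num * t, ?_⟩
  have hden : ((q.den : ℚ)) ≠ 0 := by
    exact_mod_cast q.den_nz
  have hnum : (q.num : ℚ) = q * (q.den : ℚ) := by
    have h := Rat.num_div_den q
    rw [div_eq_iff hden] at h
    exact h
  push_cast [ht]
  rw [hnum]
  ring

lemma sum_trichotomy3 {M : Type} [AddCommGroup M] {m : ℕ} (ℓ : Fin m → ℚ) (f : Fin m → M) :
    ∑ i, f i = (∑ i, if ℓ i = 0 then f i else 0) + (∑ i, if 0 < ℓ i then f i else 0)
      + (∑ i, if ℓ i < 0 then f i else 0) := by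
  rw [← Finset.sum_add_distrib, ← Finset.sum_add_distrib]
  refine Finset.sum_congr rfl fun i _ => ?_
  rcases lt_trichotomy (ℓ i) 0 with h | h | h
  · rw [if_neg h.ne, if_neg (asymm h), if_pos h, zero_add, zero_add]
  · rw [if_pos h, if_neg (by rw [h]; exact lt_irrefl 0), if_neg (by rw [h]; exact lt_irrefl 0),
      add_zero, add_zero]
  · rw [if_neg h.ne', if_pos h, if_neg (asymm h), zero_add, add_zero]

lemma zero_mem_coneOf {ι : Type} [Fintype ι] (v : ι → (Fin d → ℚ)) : (0 : Fin d → ℝ) ∈ coneOf v :=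
  ⟨0, fun _ => le_refl _, by simp⟩
lemma add_mem_coneOf {ι : Type} [Fintype ι] {v : ι → (Fin d → ℚ)} {x y : Fin d → ℝ}
    (hx : x ∈ coneOf v) (hy : y ∈ coneOf v) : x + y ∈ coneOf v := by
  obtain ⟨c, hc, rfl⟩ := hx
  obtain ⟨c', hc', rfl⟩ := hy
  exact ⟨c + c', fun i => add_nonneg (hc i) (hc' i), by
    rw [← Finset.sum_add_distrib]; congr 1; funext i; rw [Pi.add_apply, add_smul]⟩
lemma smul_mem_coneOf {ι : Type} [Fintype ι] {v : ι → (Fin d → ℚ)} {r : ℝ} (hr : 0 ≤ r)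
    {x : Fin d → ℝ} (hx : x ∈ coneOf v) : r • x ∈ coneOf v := by
  obtain ⟨c, hc, rfl⟩ := hx
  exact ⟨fun i => r * c i, fun i => mul_nonneg hr (hc i), by
    rw [Finset.smul_sum]; congr 1; funext i; rw [smul_smul]⟩
lemma gen_mem_coneOf {ι : Type} [Fintype ι] (v : ι → (Fin d → ℚ)) (i : ι) :
    qre (v i) ∈ coneOf v := by
  classical
  refine ⟨fun k => if k = i then 1 else 0, fun k => by dsimp only; split <;> norm_num, ?_⟩
  have : ∀ k ∈ Finset.univ, (if k = i then (1:ℝ) else 0) • qre (v k) =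
      (if k = i then qre (v k) else 0) := by
    intro k _; split <;> simp
  rw [Finset.sum_congr rfl this, Finset.sum_ite_eq' Finset.univ i (fun k => qre (v k))]
  simp

lemma coneOf_subset {ι : Type} [Fintype ι] {v : ι → (Fin d → ℚ)} {C : Set (Fin d → ℝ)}
    (h0 : (0 : Fin d → ℝ) ∈ C) (hadd : ∀ a ∈ C, ∀ b ∈ C, a + b ∈ C)
    (hsmul : ∀ (r : ℝ), 0 ≤ r → ∀ a ∈ C, r • a ∈ C)
    (hv : ∀ i, qre (v i) ∈ C) : coneOf v ⊆ C := by
  rintro x ⟨c, hc, rfl⟩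
  classical
  refine Finset.sum_induction _ (· ∈ C) (fun a b ha hb => hadd a ha b hb) h0 ?_
  exact fun i _ => hsmul _ (hc i) _ (hv i)

lemma coneOf_scale {ι : Type} [Fintype ι] (v : ι → (Fin d → ℚ)) (q : ι → ℚ)
    (hq : ∀ i, 0 < q i) : coneOf (fun i => q i • v i) = coneOf v := by
  ext x
  constructor
  · rintro ⟨c, hc, rfl⟩
    refine ⟨fun i => c i * (q i : ℝ), fun i => mul_nonneg (hc i) (by exact_mod_cast (hq i).le), ?_⟩
    congr 1; funext i
    rw [qre_smul, smul_smul]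
  · rintro ⟨c, hc, rfl⟩
    refine ⟨fun i => c i / (q i : ℝ), fun i => div_nonneg (hc i) (by exact_mod_cast (hq i).le), ?_⟩
    congr 1; funext i
    rw [qre_smul, smul_smul]
    have h0 : ((q i : ℝ)) ≠ 0 := by exact_mod_cast (hq i).ne'
    congr 1
    field_simp

/-- Fourier–Motzkin step: intersection of a f.g. cone with a rational hyperplane is f.g. -/
lemma cone_inter_hyperplane (u : Fin d → ℚ) {m : ℕ} (v : Fin m → (Fin d → ℚ)) :
    ∃ (m' : ℕ) (v' : Fin m' → (Fin d → ℚ)),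
      coneOf v ∩ {x | dotR u x = 0} = coneOf v' := by
  classical
  set ℓ : Fin m → ℚ := fun i => dotQ u (v i) with hℓ
  set w : (Fin m ⊕ Fin m × Fin m) → (Fin d → ℚ) :=
    Sum.elim (fun i => if ℓ i = 0 then v i else 0)
      (fun p => if 0 < ℓ p.1 ∧ ℓ p.2 < 0 then ℓ p.1 • v p.2 - ℓ p.2 • v p.1 else 0) with hwdef
  have key : coneOf v ∩ {x | dotR u x = 0} = coneOf w := by
    apply Set.Subset.antisymm
    · rintro x ⟨⟨cf, hcf, hx⟩, hker⟩
      have hker' : ∑ i, cf i * (ℓ i : ℝ) = 0 := by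
        have hdot : dotR u x = ∑ i, cf i * (ℓ i : ℝ) := by
          rw [hx, dotR_sum]
          refine Finset.sum_congr rfl fun i _ => ?_
          rw [dotR_smul, dotR_qre]
        rw [← hdot]; exact hker
      set s : ℝ := ∑ i, if 0 < ℓ i then cf i * (ℓ i : ℝ) else 0 with hs
      have hterm_nonneg : ∀ i ∈ Finset.univ, (0:ℝ) ≤ if 0 < ℓ i then cf i * (ℓ i : ℝ) else 0 := by
        intro i _
        split
        · next h => exact mul_nonneg (hcf i) (by exact_mod_cast h.le)
        · exact le_refl 0
      have hs_nonneg : 0 ≤ s := Finset.sum_nonneg hterm_nonneg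
      have hN : (∑ i, if ℓ i < 0 then cf i * (ℓ i:ℝ) else 0) = -s := by
        have h3 := sum_trichotomy3 ℓ (fun i => cf i * (ℓ i : ℝ))
        have hZ : (∑ i, if ℓ i = 0 then cf i * (ℓ i:ℝ) else 0) = 0 :=
          Finset.sum_eq_zero fun i _ => by
            split
            · next h => rw [h]; simp
            · rfl
        rw [hker', hZ, zero_add] at h3
        linarith
      have hN' : (∑ i, if ℓ i < 0 then cf i * (-(ℓ i):ℝ) else 0) = s := by
        have hpt : ∀ i ∈ Finset.univ, (if ℓ i < 0 then cf i * (-(ℓ i):ℝ) else 0)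
            = -(if ℓ i < 0 then cf i * ((ℓ i):ℝ) else 0) := by
          intro i _
          split
          · push_cast; ring
          · rw [neg_zero]
        rw [Finset.sum_congr rfl hpt, Finset.sum_neg_distrib, hN, neg_neg]
      rcases eq_or_lt_of_le hs_nonneg with hs0 | hspos
      · -- s = 0 : all coefficients with nonzero ℓ vanish
        have hposzero : ∀ i, 0 < ℓ i → cf i = 0 := by
          intro i hi
          have h0 := (Finset.sum_eq_zero_iff_of_nonneg hterm_nonneg).mp hs0.symm i (Finset.mem_univ i)
          rw [if_pos hi] at h0
          have hpos : (0:ℝ) < ((ℓ i):ℝ) := by exact_mod_cast hi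
          rcases mul_eq_zero.mp h0 with h | h
          · exact h
          · exact absurd h hpos.ne'
        have hterm2_nonneg : ∀ i ∈ Finset.univ, (0:ℝ) ≤ if ℓ i < 0 then cf i * (-(ℓ i):ℝ) else 0 := by
          intro i _
          split
          · next h => exact mul_nonneg (hcf i) (by push_cast; linarith [(Rat.cast_lt_zero (K := ℝ)).mpr h])
          · exact le_refl 0
        have hnegzero : ∀ i, ℓ i < 0 → cf i = 0 := by
          intro i hi
          have heq0 : (∑ i, if ℓ i < 0 then cf i * (-(ℓ i):ℝ) else 0) = 0 := by rw [hN', ← hs0]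
          have h0 := (Finset.sum_eq_zero_iff_of_nonneg hterm2_nonneg).mp heq0 i (Finset.mem_univ i)
          rw [if_pos hi] at h0
          have hpos : (0:ℝ) < (-(ℓ i):ℝ) := by push_cast; exact neg_pos.mpr (by exact_mod_cast hi)
          rcases mul_eq_zero.mp h0 with h | h
          · exact h
          · exact absurd h hpos.ne'
        refine ⟨Sum.elim (fun i => if ℓ i = 0 then cf i else 0) (fun _ => 0), ?_, ?_⟩
        · rintro (i | p)
          · dsimp only [Sum.elim_inl]; split; exacts [hcf i, le_refl 0]
          · exact le_refl 0
        · rw [hx, Fintype.sum_sum_type]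
          have h2 : (∑ p : Fin m × Fin m,
              Sum.elim (fun i => if ℓ i = 0 then cf i else 0) (fun _ => (0:ℝ)) (Sum.inr p)
                • qre (w (Sum.inr p))) = 0 :=
            Finset.sum_eq_zero fun p _ => by rw [Sum.elim_inr, zero_smul]
          rw [h2, add_zero]
          refine Finset.sum_congr rfl fun i _ => ?_
          rw [Sum.elim_inl, hwdef, Sum.elim_inl]
          rcases lt_trichotomy (ℓ i) 0 with h | h | h
          · rw [hnegzero i h, if_neg h.ne, zero_smul, zero_smul]
          · rw [if_pos h, if_pos h]
          · rw [hposzero i h, if_neg h.ne', zero_smul, zero_smul]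
      · -- 0 < s
        have hsne : s ≠ 0 := hspos.ne'
        set A : Fin d → ℝ := ∑ j, if ℓ j < 0 then cf j • qre (v j) else 0 with hA
        refine ⟨Sum.elim (fun i => if ℓ i = 0 then cf i else 0)
            (fun p => if 0 < ℓ p.1 ∧ ℓ p.2 < 0 then cf p.1 * cf p.2 / s else 0), ?_, ?_⟩
        · rintro (i | p)
          · dsimp only [Sum.elim_inl]; split; exacts [hcf i, le_refl 0]
          · dsimp only [Sum.elim_inr]; split
            · exact div_nonneg (mul_nonneg (hcf _) (hcf _)) hspos.le
            · exact le_refl 0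
        · rw [hx, Fintype.sum_sum_type]
          have hZpart : (∑ i : Fin m, Sum.elim (fun i : Fin m => if ℓ i = 0 then cf i else 0)
              (fun p : Fin m × Fin m => if 0 < ℓ p.1 ∧ ℓ p.2 < 0 then cf p.1 * cf p.2 / s else 0) (Sum.inl i)
                • qre (w (Sum.inl i)))
              = ∑ i, if ℓ i = 0 then cf i • qre (v i) else 0 := by
            refine Finset.sum_congr rfl fun i _ => ?_
            rw [Sum.elim_inl, hwdef, Sum.elim_inl]
            by_cases h : ℓ i = 0
            · rw [if_pos h, if_pos h, if_pos h]
            · rw [if_neg h, if_neg h, if_neg h, zero_smul]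
          have hTpart : (∑ p : Fin m × Fin m, Sum.elim (fun i : Fin m => if ℓ i = 0 then cf i else 0)
              (fun p : Fin m × Fin m => if 0 < ℓ p.1 ∧ ℓ p.2 < 0 then cf p.1 * cf p.2 / s else 0) (Sum.inr p)
                • qre (w (Sum.inr p)))
              = A + ∑ i, if 0 < ℓ i then cf i • qre (v i) else 0 := by
            have hpt : ∀ p : Fin m × Fin m,
                (Sum.elim (fun i : Fin m => if ℓ i = 0 then cf i else 0)
                  (fun p : Fin m × Fin m => if 0 < ℓ p.1 ∧ ℓ p.2 < 0 then cf p.1 * cf p.2 / s else 0) (Sum.inr p)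
                    • qre (w (Sum.inr p)))
                = if 0 < ℓ p.1 ∧ ℓ p.2 < 0 then
                    (cf p.1 * ((ℓ p.1):ℝ) / s) • (cf p.2 • qre (v p.2))
                      + (cf p.2 * (-(ℓ p.2):ℝ)) • ((cf p.1 / s) • qre (v p.1)) else 0 := by
              intro p
              rw [Sum.elim_inr, hwdef, Sum.elim_inr]
              by_cases h : 0 < ℓ p.1 ∧ ℓ p.2 < 0
              · rw [if_pos h, if_pos h, if_pos h, qre_sub, qre_smul, qre_smul]
                rw [smul_sub, smul_smul, smul_smul, smul_smul, smul_smul, sub_eq_add_neg,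
                  ← neg_smul]
                congr 2
                · ring
                · push_cast; ring
              · rw [if_neg h, if_neg h, if_neg h, qre_zero, smul_zero]
            rw [Finset.sum_congr rfl (fun p _ => hpt p), Fintype.sum_prod_type]
            have hinner : ∀ i : Fin m, (∑ j, if 0 < ℓ i ∧ ℓ j < 0 then
                (cf i * ((ℓ i):ℝ) / s) • (cf j • qre (v j))
                  + (cf j * (-(ℓ j):ℝ)) • ((cf i / s) • qre (v i)) else 0)
                = if 0 < ℓ i then (cf i * ((ℓ i):ℝ) / s) • A + cf i • qre (v i) else 0 := by
              intro i
              by_cases hi : 0 < ℓ i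
              · simp only [hi, true_and, if_true]
                have hsplitj : ∀ j ∈ Finset.univ, (if ℓ j < 0 then
                    (cf i * ((ℓ i):ℝ) / s) • (cf j • qre (v j))
                      + (cf j * (-(ℓ j):ℝ)) • ((cf i / s) • qre (v i)) else 0)
                    = (if ℓ j < 0 then (cf i * ((ℓ i):ℝ) / s) • (cf j • qre (v j)) else 0)
                      + (if ℓ j < 0 then (cf j * (-(ℓ j):ℝ)) • ((cf i / s) • qre (v i)) else 0) := by
                  intro j _
                  split
                  · rfl
                  · rw [add_zero]
                rw [Finset.sum_congr rfl hsplitj, Finset.sum_add_distrib]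
                congr 1
                · -- first piece sums to (cf i ℓ i / s) • A
                  rw [hA, Finset.smul_sum]
                  refine Finset.sum_congr rfl fun j _ => ?_
                  by_cases hj : ℓ j < 0
                  · rw [if_pos hj, if_pos hj]
                  · rw [if_neg hj, if_neg hj, smul_zero]
                · -- second piece sums to cf i • qre (v i)
                  have hps : ∀ j ∈ Finset.univ, (if ℓ j < 0 then
                      (cf j * (-(ℓ j):ℝ)) • ((cf i / s) • qre (v i)) else 0)
                      = (if ℓ j < 0 then cf j * (-(ℓ j):ℝ) else 0) • ((cf i / s) • qre (v i)) := by
                    intro j _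
                    split
                    · rfl
                    · rw [zero_smul]
                  rw [Finset.sum_congr rfl hps, ← Finset.sum_smul, hN', smul_smul]
                  congr 1
                  field_simp
              · simp only [hi, false_and, if_false]
                exact Finset.sum_eq_zero fun j _ => rfl
            rw [Finset.sum_congr rfl (fun i _ => hinner i)]
            -- ∑ i, if 0<ℓi then r_i • A + cf i • qre v i else 0 = (∑ r_i) • A + P
            have hsplit : ∀ i ∈ Finset.univ, (if 0 < ℓ i then
                (cf i * ((ℓ i):ℝ) / s) • A + cf i • qre (v i) else 0)
                = (if 0 < ℓ i then cf i * ((ℓ i):ℝ) / s else 0) • A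
                  + (if 0 < ℓ i then cf i • qre (v i) else 0) := by
              intro i _
              split
              · rfl
              · rw [zero_smul, add_zero]
            rw [Finset.sum_congr rfl hsplit, Finset.sum_add_distrib, ← Finset.sum_smul]
            have hcoef : (∑ i, if 0 < ℓ i then cf i * ((ℓ i):ℝ) / s else 0) = 1 := by
              have : ∀ i ∈ Finset.univ, (if 0 < ℓ i then cf i * ((ℓ i):ℝ) / s else 0)
                  = (if 0 < ℓ i then cf i * ((ℓ i):ℝ) else 0) / s := by
                intro i _
                split
                · rfl
                · rw [zero_div]
              rw [Finset.sum_congr rfl this, ← Finset.sum_div, ← hs, div_self hsne]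
            rw [hcoef, one_smul]
          rw [hZpart, hTpart]
          rw [sum_trichotomy3 ℓ (fun i => cf i • qre (v i))]
          abel
    · refine coneOf_subset ⟨zero_mem_coneOf v, by simp [Set.mem_setOf_eq, dotR_zero]⟩
        (fun a ha b hb => ⟨add_mem_coneOf ha.1 hb.1, by
          simp only [Set.mem_setOf_eq] at *
          rw [dotR_add, ha.2, hb.2, add_zero]⟩)
        (fun r hr a ha => ⟨smul_mem_coneOf hr ha.1, by
          simp only [Set.mem_setOf_eq] at *
          rw [dotR_smul, ha.2, mul_zero]⟩) ?_
      rintro (i | p)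
      · rw [hwdef, Sum.elim_inl]
        by_cases h : ℓ i = 0
        · rw [if_pos h]
          exact ⟨gen_mem_coneOf v i, by
            simp only [Set.mem_setOf_eq]
            rw [dotR_qre]
            exact_mod_cast h⟩
        · rw [if_neg h, qre_zero]
          exact ⟨zero_mem_coneOf v, by simp [Set.mem_setOf_eq, dotR_zero]⟩
      · rw [hwdef, Sum.elim_inr]
        by_cases h : 0 < ℓ p.1 ∧ ℓ p.2 < 0
        · rw [if_pos h]
          constructor
          · have hrepr : qre (ℓ p.1 • v p.2 - ℓ p.2 • v p.1)
                = ((ℓ p.1 : ℝ)) • qre (v p.2) + ((-(ℓ p.2) : ℚ) : ℝ) • qre (v p.1) := by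
              rw [qre_sub, qre_smul, qre_smul, sub_eq_add_neg, ← neg_smul, ← Rat.cast_neg]
            rw [hrepr]
            exact add_mem_coneOf
              (smul_mem_coneOf (by exact_mod_cast h.1.le) (gen_mem_coneOf v p.2))
              (smul_mem_coneOf (by exact_mod_cast (neg_nonneg.mpr h.2.le)) (gen_mem_coneOf v p.1))
          · simp only [Set.mem_setOf_eq]
            rw [dotR_qre]
            have hq0 : dotQ u (ℓ p.1 • v p.2 - ℓ p.2 • v p.1) = 0 := by
              rw [dotQ_sub_right, dotQ_smul_right, dotQ_smul_right]
              have e1 : dotQ u (v p.1) = ℓ p.1 := rfl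
              have e2 : dotQ u (v p.2) = ℓ p.2 := rfl
              rw [e1, e2]; ring
            rw [hq0]; exact Rat.cast_zero
        · rw [if_neg h, qre_zero]
          exact ⟨zero_mem_coneOf v, by simp [Set.mem_setOf_eq, dotR_zero]⟩
  obtain ⟨m', v', hv'⟩ := isRatPolyhedralCone_coneOf w
  exact ⟨m', v', key.trans hv'⟩

lemma cone_inter_hyperplanes {p : ℕ} (u : Fin p → (Fin d → ℚ)) {m : ℕ} (v : Fin m → (Fin d → ℚ)) :
    ∃ (m' : ℕ) (v' : Fin m' → (Fin d → ℚ)),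
      coneOf v ∩ {x | ∀ k, dotR (u k) x = 0} = coneOf v' := by
  induction p with
  | zero =>
    refine ⟨m, v, ?_⟩
    have : {x : Fin d → ℝ | ∀ k : Fin 0, dotR (u k) x = 0} = Set.univ := by
      ext x; simp [Fin.forall_fin_zero_pi]
    rw [this, Set.inter_univ]
  | succ p ih =>
    obtain ⟨m', v', hv'⟩ := ih (fun k => u k.castSucc)
    obtain ⟨m'', v'', hv''⟩ := cone_inter_hyperplane (u (Fin.last p)) v'
    refine ⟨m'', v'', ?_⟩
    rw [← hv'', ← hv', Set.inter_assoc]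
    congr 1
    ext x
    simp only [Set.mem_inter_iff, Set.mem_setOf_eq]
    constructor
    · intro h
      exact ⟨fun k => h k.castSucc, h (Fin.last p)⟩
    · rintro ⟨h1, h2⟩ k
      rcases Fin.eq_castSucc_or_eq_last k with ⟨j, rfl⟩ | rfl
      · exact h1 j
      · exact h2

def latt (N : ℕ) : AddSubgroup (Fin d → ℤ) :=
  AddSubgroup.pi Set.univ fun _ => AddSubgroup.zmultiples (N : ℤ)

lemma mem_latt {N : ℕ} {x : Fin d → ℤ} : x ∈ (latt N : AddSubgroup (Fin d → ℤ)) ↔ ∀ j, (N : ℤ) ∣ x j := by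
  rw [latt, AddSubgroup.mem_pi]
  constructor
  · intro h j
    obtain ⟨k, hk⟩ := AddSubgroup.mem_zmultiples_iff.mp (h j (Set.mem_univ j))
    exact ⟨k, by rw [← hk]; simp [smul_eq_mul, mul_comm]⟩
  · intro h j _
    obtain ⟨k, hk⟩ := h j
    exact AddSubgroup.mem_zmultiples_iff.mpr ⟨k, by rw [hk]; simp [smul_eq_mul, mul_comm]⟩

lemma latt_finiteIndex {N : ℕ} (hN : 0 < N) : (latt N : AddSubgroup (Fin d → ℤ)).FiniteIndex := by
  constructor
  rw [latt, AddSubgroup.index_pi]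
  simp only [Int.index_zmultiples, Int.natAbs_natCast]
  positivity

def Good (Λ : AddSubgroup (Fin d → ℤ)) (S : Set (Fin d → ℤ)) : Prop :=
  ∃ (ι : Type) (_ : Fintype ι) (τ : ι → Set (Fin d → ℝ)) (g : ι → (Fin d → ℤ)),
    (∀ j, IsRatPolyhedralCone (τ j)) ∧
    S = ⋃ j, (({g j} : Set (Fin d → ℤ)) + {x : Fin d → ℤ | (fun k => ((x k : ℝ))) ∈ τ j ∧ x ∈ Λ})

lemma good_iUnion {Λ : AddSubgroup (Fin d → ℤ)} {ι₀ : Type} [Fintype ι₀]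
    {S : ι₀ → Set (Fin d → ℤ)} (h : ∀ i, Good Λ (S i)) : Good Λ (⋃ i, S i) := by
  choose ι inst τ g hcone hS using h
  refine ⟨(i : ι₀) × ι i, inferInstance, fun p => τ p.1 p.2, fun p => g p.1 p.2,
    fun p => hcone p.1 p.2, ?_⟩
  rw [Set.iUnion_sigma]
  exact Set.iUnion_congr hS

lemma good_biUnion {Λ : AddSubgroup (Fin d → ℤ)} {α : Type} {F : Set α} (hF : F.Finite)
    {S : α → Set (Fin d → ℤ)} (h : ∀ a ∈ F, Good Λ (S a)) : Good Λ (⋃ a ∈ F, S a) := by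
  have : Fintype F := hF.fintype
  rw [Set.biUnion_eq_iUnion]
  exact good_iUnion fun a => h a a.2

lemma good_translate {Λ : AddSubgroup (Fin d → ℤ)} {S : Set (Fin d → ℤ)} (a : Fin d → ℤ)
    (h : Good Λ S) : Good Λ (({a} : Set (Fin d → ℤ)) + S) := by
  obtain ⟨ι, inst, τ, g, hcone, rfl⟩ := h
  refine ⟨ι, inst, τ, fun j => a + g j, hcone, ?_⟩
  rw [Set.singleton_add, Set.image_iUnion]
  refine Set.iUnion_congr fun j => ?_
  rw [← Set.singleton_add, ← add_assoc, Set.singleton_add_singleton]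

lemma good_single {Λ : AddSubgroup (Fin d → ℤ)} {τ : Set (Fin d → ℝ)} (hτ : IsRatPolyhedralCone τ)
    (g : Fin d → ℤ) :
    Good Λ (({g} : Set (Fin d → ℤ)) + {x : Fin d → ℤ | (fun k => ((x k : ℝ))) ∈ τ ∧ x ∈ Λ}) := by
  exact ⟨Fin 1, inferInstance, fun _ => τ, fun _ => g, fun _ => hτ, (Set.iUnion_const _).symm⟩

lemma exists_fin_gens {R M : Type} [CommRing R] [AddCommGroup M] [Module R M] [IsNoetherian R M]
    (p : Submodule R M) : ∃ (k : ℕ) (b : Fin k → M),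
      ∀ x, x ∈ p ↔ ∃ a : Fin k → R, x = ∑ s, a s • b s := by
  obtain ⟨S, hS⟩ := IsNoetherian.noetherian p
  refine ⟨S.card, fun i => ((S.equivFin.symm i : {x // x ∈ S}) : M), fun x => ?_⟩
  have hrange : Set.range (fun i => ((S.equivFin.symm i : {x // x ∈ S}) : M)) = (S : Set M) := by
    have : (fun i => ((S.equivFin.symm i : {x // x ∈ S}) : M)) =
        (fun (s : {x // x ∈ S}) => (s : M)) ∘ S.equivFin.symm := rfl
    rw [this, Set.range_comp, Equiv.range_eq_univ, Set.image_univ]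
    ext m; simp
  rw [← hS, ← hrange, Submodule.mem_span_range_iff_exists_fun]
  constructor
  · rintro ⟨a, ha⟩; exact ⟨a, ha.symm⟩
  · rintro ⟨a, ha⟩; exact ⟨a, ha.symm⟩

/-- Key duality lemma: for a subgroup L of ℤ^d there are finitely many rational functionals
vanishing on L such that any integer vector annihilated by all of them has a positive
multiple inside L. -/
lemma lattice_functionals (L : AddSubgroup (Fin d → ℤ)) :
    ∃ (p : ℕ) (u : Fin p → (Fin d → ℚ)) (m : ℕ), 0 < m ∧
      (∀ x ∈ L, ∀ k, dotQ (u k) (zrat x) = 0) ∧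
      (∀ z : Fin d → ℤ, (∀ k, dotQ (u k) (zrat z) = 0) → (m : ℤ) • z ∈ L) := by
  classical
  obtain ⟨kL, b, hb⟩ := exists_fin_gens (AddSubgroup.toIntSubmodule L)
  have hbL : ∀ x, x ∈ L ↔ ∃ a : Fin kL → ℤ, x = ∑ s, a s • b s := fun x => hb x
  -- the dot-product bilinear form on ℚ^d
  set B : LinearMap.BilinForm ℚ (Fin d → ℚ) := LinearMap.mk₂ ℚ (fun x y => dotQ x y)
    (fun a a' y => by
      show dotQ (a + a') y = dotQ a y + dotQ a' y
      rw [dotQ_comm, dotQ_add_right, dotQ_comm y a, dotQ_comm y a'])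
    (fun c a y => by
      show dotQ (c • a) y = c • dotQ a y
      rw [dotQ_comm, dotQ_smul_right, dotQ_comm, smul_eq_mul])
    (fun a y y' => by
      show dotQ a (y + y') = dotQ a y + dotQ a y'
      exact dotQ_add_right a y y')
    (fun c a y => by
      show dotQ a (c • y) = c • dotQ a y
      rw [dotQ_smul_right, smul_eq_mul]) with hB
  have hBapp : ∀ x y, B x y = dotQ x y := fun x y => rfl
  have hBnd : B.Nondegenerate := by
    refine LinearMap.BilinForm.Nondegenerate.ofSeparatingLeft ?_
    intro x hx
    funext j
    have := hx (Pi.single j 1)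
    rw [hBapp, dotQ_single] at this
    exact this
  have hBrefl : B.IsRefl := by
    intro x y h
    rw [hBapp, dotQ_comm]
    exact h
  set bq : Fin kL → (Fin d → ℚ) := fun s => zrat (b s) with hbq
  set Wq : Submodule ℚ (Fin d → ℚ) := Submodule.span ℚ (Set.range bq) with hWq
  obtain ⟨p, u, hu⟩ := exists_fin_gens (B.orthogonal Wq)
  have huM : ∀ k, u k ∈ B.orthogonal Wq := by
    intro k
    rw [hu]
    refine ⟨fun k' => if k' = k then 1 else 0, ?_⟩
    have hpt : ∀ k' ∈ Finset.univ, (if k' = k then (1:ℚ) else 0) • u k'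
        = if k' = k then u k' else 0 := by
      intro k' _
      split
      · rw [one_smul]
      · rw [zero_smul]
    rw [Finset.sum_congr rfl hpt, Finset.sum_ite_eq' Finset.univ k u, if_pos (Finset.mem_univ k)]
  have hubq : ∀ k s, dotQ (u k) (bq s) = 0 := by
    intro k s
    have := (LinearMap.BilinForm.mem_orthogonal_iff.mp (huM k)) (bq s)
      (Submodule.subset_span ⟨s, rfl⟩)
    rw [hBapp, dotQ_comm] at this
    exact this
  -- the vanishing property on L
  have hvanish : ∀ x ∈ L, ∀ k, dotQ (u k) (zrat x) = 0 := by
    intro x hx k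
    obtain ⟨a, rfl⟩ := (hbL x).mp hx
    rw [zrat_comb, dotQ_sum_right]
    refine Finset.sum_eq_zero fun s _ => ?_
    rw [dotQ_smul_right, hubq, mul_zero]
  -- pointwise multiple property
  have hpoint : ∀ z : Fin d → ℤ, (∀ k, dotQ (u k) (zrat z) = 0) →
      ∃ mz : ℕ, 0 < mz ∧ (mz : ℤ) • z ∈ L := by
    intro z hz
    have hzo : zrat z ∈ B.orthogonal (B.orthogonal Wq) := by
      rw [LinearMap.BilinForm.mem_orthogonal_iff]
      intro n hn
      obtain ⟨a, rfl⟩ := (hu n).mp hn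
      rw [hBapp, dotQ_comm, dotQ_sum_right]
      refine Finset.sum_eq_zero fun k _ => ?_
      rw [dotQ_smul_right, dotQ_comm, hz, mul_zero]
    rw [LinearMap.BilinForm.orthogonal_orthogonal hBnd hBrefl] at hzo
    rw [hWq, Submodule.mem_span_range_iff_exists_fun] at hzo
    obtain ⟨cq, hcq⟩ := hzo
    set D : ℤ := ∏ s, ((cq s).den : ℤ) with hD
    have hDpos : 0 < D := Finset.prod_pos fun s _ => by exact_mod_cast (cq s).pos
    have hden : ∀ s, ((cq s).den : ℤ) ∣ D := fun s =>
      Finset.dvd_prod_of_mem (fun s => ((cq s).den : ℤ)) (Finset.mem_univ s)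
    choose a ha using fun s => den_clear (cq s) D (hden s)
    refine ⟨D.toNat, by omega, (hbL _).mpr ⟨a, funext fun j => ?_⟩⟩
    have hQ : zrat ((D.toNat : ℤ) • z) = zrat (∑ s, a s • b s) := by
      rw [zrat_zsmul, zrat_comb]
      have : ∀ s ∈ Finset.univ, (a s : ℚ) • zrat (b s) = ((D:ℚ) * cq s) • bq s := by
        intro s _
        rw [ha s, hbq]
      rw [Finset.sum_congr rfl this]
      have hDt : ((D.toNat : ℤ) : ℚ) = (D : ℚ) := by
        have : (D.toNat : ℤ) = D := Int.toNat_of_nonneg hDpos.le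
        exact_mod_cast congrArg (fun t : ℤ => (t : ℚ)) this
      rw [hDt, ← hcq, Finset.smul_sum]
      refine Finset.sum_congr rfl fun s _ => ?_
      rw [smul_smul]
    have := congrFun hQ j
    simp only [zrat] at this
    exact_mod_cast this
  -- uniformize over a generating set of the solution module Z
  set Z : Submodule ℤ (Fin d → ℤ) :=
    { carrier := {z | ∀ k, dotQ (u k) (zrat z) = 0}
      add_mem' := by
        intro z z' hz hz' k
        rw [zrat_add, dotQ_add_right, hz k, hz' k, add_zero]
      zero_mem' := by
        intro k
        have : zrat (0 : Fin d → ℤ) = 0 := by funext j; simp [zrat]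
        rw [this]
        have : dotQ (u k) 0 = 0 := by simp [dotQ]
        exact this
      smul_mem' := by
        intro c z hz k
        
        rw [zrat_zsmul, dotQ_smul_right, hz k, mul_zero] } with hZ
  obtain ⟨q, ζ, hζ⟩ := exists_fin_gens Z
  have hζZ : ∀ t, ζ t ∈ Z := by
    intro t
    rw [hζ]
    refine ⟨fun t' => if t' = t then 1 else 0, ?_⟩
    have hpt : ∀ t' ∈ Finset.univ, (if t' = t then (1:ℤ) else 0) • ζ t'
        = if t' = t then ζ t' else 0 := by
      intro t' _
      split
      · rw [one_smul]
      · rw [zero_smul]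
    rw [Finset.sum_congr rfl hpt, Finset.sum_ite_eq' Finset.univ t ζ, if_pos (Finset.mem_univ t)]
  choose mt hmtpos hmtL using fun t => hpoint (ζ t) (hζZ t)
  refine ⟨p, u, ∏ t, mt t, Finset.prod_pos fun t _ => hmtpos t, hvanish, ?_⟩
  intro z hz
  have hzZ : z ∈ Z := hz
  obtain ⟨a, rfl⟩ := (hζ z).mp hzZ
  have key : ((∏ t, mt t : ℕ) : ℤ) • ∑ t, a t • ζ t = ∑ t, a t • (((∏ t, mt t : ℕ) : ℤ) • ζ t) := by
    rw [Finset.smul_sum]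
    refine Finset.sum_congr rfl fun t _ => ?_
    rw [smul_comm]
  rw [key]
  refine AddSubgroup.sum_mem _ fun t _ => AddSubgroup.zsmul_mem _ ?_ _
  obtain ⟨r, hr⟩ := Finset.dvd_prod_of_mem mt (Finset.mem_univ t)
  have : ((∏ t, mt t : ℕ) : ℤ) • ζ t = (r : ℤ) • ((mt t : ℤ) • ζ t) := by
    rw [smul_smul]
    congr 1
    rw [hr]
    push_cast
    ring
  rw [this]
  exact AddSubgroup.zsmul_mem _ (hmtL t) _

/-- Gordan-type lemma: lattice points of a coset of Λ inside a cone with generators in Λ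
form a finite union of translates of (cone ∩ Λ). -/
lemma gordan (Λ : AddSubgroup (Fin d → ℤ)) {m : ℕ} (v : Fin m → (Fin d → ℤ))
    (hvΛ : ∀ i, v i ∈ Λ) (c : Fin d → ℤ) :
    ∃ F : Set (Fin d → ℤ), F.Finite ∧
      {x : Fin d → ℤ | zre x ∈ coneOf (fun i => zrat (v i)) ∧ x - c ∈ Λ} =
        ⋃ g ∈ F, (({g} : Set (Fin d → ℤ)) +
          {x : Fin d → ℤ | zre x ∈ coneOf (fun i => zrat (v i)) ∧ x ∈ Λ}) := by
  classical
  set q : Fin m → (Fin d → ℚ) := fun i => zrat (v i) with hq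
  set K : Set (Fin d → ℤ) :=
    {g | (∀ j, |g j| ≤ ∑ i, |v i j|) ∧ zre g ∈ coneOf q ∧ g - c ∈ Λ} with hK
  have hzre_comb : ∀ (a : Fin m → ℤ), zre (∑ i, a i • v i) = ∑ i, (a i : ℝ) • qre (q i) := by
    intro a
    funext j
    simp only [zre, Finset.sum_apply, Pi.smul_apply, smul_eq_mul, qre, hq, zrat]
    push_cast
    rfl
  refine ⟨K, ?_, ?_⟩
  · refine Set.Finite.subset
      (Set.Finite.pi (fun j => Set.finite_Icc (-(∑ i, |v i j|)) (∑ i, |v i j|))) ?_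
    intro g hg
    rw [Set.mem_univ_pi]
    intro j
    rw [Set.mem_Icc, ← abs_le]
    exact hg.1 j
  · ext x
    simp only [Set.mem_setOf_eq, Set.mem_iUnion]
    constructor
    · rintro ⟨⟨cf, hcf, hx⟩, hxc⟩
      set a : Fin m → ℤ := fun i => ⌊cf i⌋ with ha
      have ha0 : ∀ i, (0:ℝ) ≤ (a i : ℝ) := by
        intro i
        exact_mod_cast Int.le_floor.2 (by exact_mod_cast hcf i)
      set y : Fin d → ℤ := ∑ i, a i • v i with hy
      have hyΛ : y ∈ Λ := AddSubgroup.sum_mem _ (fun i _ => AddSubgroup.zsmul_mem _ (hvΛ i) _)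
      have hycone : zre y ∈ coneOf q := ⟨fun i => (a i : ℝ), ha0, hzre_comb a⟩
      set g : Fin d → ℤ := x - y with hg
      have hgrepr : zre g = ∑ i, (cf i - (a i : ℝ)) • qre (q i) := by
        rw [hg, zre_sub, hx, hzre_comb]
        rw [← Finset.sum_sub_distrib]
        congr 1; funext i; rw [sub_smul]
      have ht0 : ∀ i, 0 ≤ cf i - (a i : ℝ) := fun i => sub_nonneg.2 (Int.floor_le _)
      have ht1 : ∀ i, cf i - (a i : ℝ) ≤ 1 := by
        intro i
        have := Int.lt_floor_add_one (cf i)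
        simp only [ha]
        linarith
      have hgcone : zre g ∈ coneOf q := ⟨_, ht0, hgrepr⟩
      have habs : ∀ j, |g j| ≤ ∑ i, |v i j| := by
        intro j
        have hgj : (g j : ℝ) = ∑ i, (cf i - (a i : ℝ)) * (v i j : ℝ) := by
          have := congrFun hgrepr j
          simp only [zre, Finset.sum_apply, Pi.smul_apply, smul_eq_mul, qre, hq, zrat] at this
          push_cast at this
          exact this
        have : |(g j : ℝ)| ≤ ∑ i, |(v i j : ℝ)| := by
          rw [hgj]
          refine (Finset.abs_sum_le_sum_abs _ _).trans ?_
          refine Finset.sum_le_sum fun i _ => ?_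
          rw [abs_mul]
          calc |cf i - (a i : ℝ)| * |(v i j : ℝ)| ≤ 1 * |(v i j : ℝ)| := by
                refine mul_le_mul_of_nonneg_right ?_ (abs_nonneg _)
                rw [abs_of_nonneg (ht0 i)]; exact ht1 i
            _ = |(v i j : ℝ)| := one_mul _
        have hcast : ((|g j| : ℤ) : ℝ) ≤ ((∑ i, |v i j| : ℤ) : ℝ) := by
          push_cast
          exact this
        exact_mod_cast hcast
      have hgK : g ∈ K := ⟨habs, hgcone, by
        have : g - c = (x - c) - y := by rw [hg]; abel
        rw [this]
        exact AddSubgroup.sub_mem _ hxc hyΛ⟩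
      refine ⟨g, hgK, ?_⟩
      rw [Set.singleton_add]
      exact ⟨y, ⟨hycone, hyΛ⟩, by show x - y + y = x; rw [sub_add_cancel]⟩
    · rintro ⟨g, hgK, hx⟩
      rw [Set.singleton_add] at hx
      obtain ⟨s, ⟨hscone, hsΛ⟩, rfl⟩ := hx
      obtain ⟨habs, hgcone, hgcΛ⟩ := hgK
      constructor
      · rw [zre_add]
        exact add_mem_coneOf hgcone hscone
      · have : g + s - c = (g - c) + s := by abel
        rw [this]
        exact AddSubgroup.add_mem _ hgcΛ hsΛ

/-- Main per-piece lemma. -/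
lemma piece (σ : Set (Fin d → ℝ)) (hσ : IsRatPolyhedralCone σ) (L : AddSubgroup (Fin d → ℤ)) :
    ∃ N₀ : ℕ, 0 < N₀ ∧ ∀ N : ℕ, 0 < N → N₀ ∣ N →
      Good (latt N) {x : Fin d → ℤ | (fun j => ((x j : ℝ))) ∈ σ ∧ x ∈ L} := by
  classical
  obtain ⟨p, u, m0, hm0, hvan, hmul⟩ := lattice_functionals L
  obtain ⟨mσ, v, hσeq⟩ := hσ
  have hσc : σ = coneOf v := hσeq
  obtain ⟨m', v', hv'⟩ := cone_inter_hyperplanes u v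
  obtain ⟨kL, b, hb⟩ := exists_fin_gens (AddSubgroup.toIntSubmodule L)
  have hbL : ∀ x, x ∈ L ↔ ∃ a : Fin kL → ℤ, x = ∑ s, a s • b s := fun x => hb x
  have hker_sub : coneOf v' ⊆ {x : Fin d → ℝ | ∀ k, dotR (u k) x = 0} := by
    rw [← hv']; exact Set.inter_subset_right
  have hcone_sub : coneOf v' ⊆ coneOf v := by
    rw [← hv']; exact Set.inter_subset_left
  refine ⟨m0, hm0, ?_⟩
  intro N hNpos hdvd
  have hNne : (N:ℤ) ≠ 0 := by exact_mod_cast hNpos.ne'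
  -- the finite set of coset representatives
  set F : Set (Fin d → ℤ) := (fun r : Fin kL → ℤ => ∑ s, r s • b s) ''
    (Set.pi Set.univ fun _ => Set.Ico (0:ℤ) (N:ℤ)) with hF
  have hFfin : F.Finite :=
    Set.Finite.image _ (Set.Finite.pi fun _ => Set.finite_Ico _ _)
  have hFL : ∀ c ∈ F, c ∈ L := by
    rintro c ⟨r, _, rfl⟩
    exact (hbL _).mpr ⟨r, rfl⟩
  -- membership in L from cone + coset conditions
  have hLrec : ∀ (x c : Fin d → ℤ), c ∈ L → zre x ∈ coneOf v' → x - c ∈ latt N → x ∈ L := by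
    intro x c hcL hxcone hxc
    set z : Fin d → ℤ := fun j => (x - c) j / (N:ℤ) with hz
    have hxz : x - c = (N:ℤ) • z := by
      funext j
      have : (N:ℤ) ∣ (x - c) j := mem_latt.mp hxc j
      rw [Pi.smul_apply, hz, smul_eq_mul, Int.mul_ediv_cancel' this]
    have hzker : ∀ k, dotQ (u k) (zrat z) = 0 := by
      intro k
      have hxk : dotR (u k) (zre x) = 0 := hker_sub hxcone k
      have hck : dotR (u k) (zre c) = 0 := by
        rw [dotR_zre, hvan c hcL k, Rat.cast_zero]
      have hsub : dotR (u k) (zre (x - c)) = 0 := by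
        rw [zre_sub, dotR_sub, hxk, hck, sub_zero]
      rw [hxz, zre_zsmul, dotR_smul] at hsub
      have : dotR (u k) (zre z) = 0 := by
        rcases mul_eq_zero.mp hsub with h | h
        · exact absurd h (by exact_mod_cast hNne)
        · exact h
      rw [dotR_zre] at this
      exact_mod_cast this
    have hmz : (m0 : ℤ) • z ∈ L := hmul z hzker
    obtain ⟨t, ht⟩ := hdvd
    have hxcL : x - c ∈ L := by
      rw [hxz]
      have : (N:ℤ) • z = (t:ℤ) • ((m0:ℤ) • z) := by
        rw [smul_smul]
        congr 1
        rw [ht]; push_cast; ring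
      rw [this]
      exact AddSubgroup.zsmul_mem _ hmz _
    have := AddSubgroup.add_mem _ hcL hxcL
    rwa [add_sub_cancel] at this
  -- the coset decomposition
  have hsplit : {x : Fin d → ℤ | (fun j => ((x j : ℝ))) ∈ σ ∧ x ∈ L}
      = ⋃ c ∈ F, {x : Fin d → ℤ | zre x ∈ coneOf v' ∧ x - c ∈ latt N} := by
    ext x
    simp only [Set.mem_setOf_eq, Set.mem_iUnion, exists_prop]
    constructor
    · rintro ⟨hxσ, hxL⟩
      have hxker : ∀ k, dotR (u k) (zre x) = 0 := by
        intro k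
        rw [dotR_zre, hvan x hxL k, Rat.cast_zero]
      have hxcone : zre x ∈ coneOf v' := by
        rw [← hv']
        refine ⟨?_, hxker⟩
        rw [← hσc]
        exact hxσ
      obtain ⟨a, hax⟩ := (hbL x).mp hxL
      refine ⟨∑ s, (a s % (N:ℤ)) • b s, ⟨fun s => a s % (N:ℤ), fun s _ => ?_, rfl⟩,
        hxcone, ?_⟩
      · exact Set.mem_Ico.mpr ⟨Int.emod_nonneg _ hNne, Int.emod_lt_of_pos _ (by exact_mod_cast hNpos)⟩
      · rw [hax, ← Finset.sum_sub_distrib]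
        rw [mem_latt]
        intro j
        have : (∑ s, (a s • b s - (a s % (N:ℤ)) • b s)) j
            = ∑ s, (a s - a s % (N:ℤ)) * b s j := by
          rw [Finset.sum_apply]
          refine Finset.sum_congr rfl fun s _ => ?_
          rw [Pi.sub_apply, Pi.smul_apply, Pi.smul_apply, smul_eq_mul, smul_eq_mul, sub_mul]
        rw [this]
        refine Finset.dvd_sum fun s _ => ?_
        have : a s - a s % (N:ℤ) = (N:ℤ) * (a s / (N:ℤ)) := by
          have := Int.mul_ediv_add_emod (a s) (N:ℤ)
          linarith
        rw [this, mul_assoc]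
        exact Dvd.intro _ rfl
    · rintro ⟨c, hcF, hxcone, hxc⟩
      refine ⟨?_, hLrec x c (hFL c hcF) hxcone hxc⟩
      rw [hσc]
      exact hcone_sub hxcone
  rw [hsplit]
  refine good_biUnion hFfin fun c _ => ?_
  -- integral generators for coneOf v' inside latt N
  set Dden : Fin m' → ℤ := fun i => ∏ j, ((v' i j).den : ℤ) with hDden
  have hDpos : ∀ i, 0 < Dden i := fun i => Finset.prod_pos fun j _ => by exact_mod_cast (v' i j).pos
  have hdvdD : ∀ i j, ((v' i j).den : ℤ) ∣ Dden i := fun i j =>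
    Finset.dvd_prod_of_mem _ (Finset.mem_univ j)
  choose g hg using fun (i : Fin m') (j : Fin d) => den_clear (v' i j) (Dden i) (hdvdD i j)
  set wZ : Fin m' → (Fin d → ℤ) := fun i j => (N:ℤ) * g i j with hwZ
  have hwlatt : ∀ i, wZ i ∈ (latt N : AddSubgroup (Fin d → ℤ)) := by
    intro i
    rw [mem_latt]
    intro j
    exact Dvd.intro _ rfl
  have hconeeq : coneOf (fun i => zrat (wZ i)) = coneOf v' := by
    have : (fun i => zrat (wZ i)) = fun i => (((N:ℤ) * Dden i : ℤ):ℚ) • v' i := by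
      funext i j
      simp only [zrat, hwZ, Pi.smul_apply, smul_eq_mul]
      push_cast
      rw [hg i j]
      ring
    rw [this]
    exact coneOf_scale v' _ fun i => by
      have h1 : (0:ℤ) < (N:ℤ) * Dden i := by positivity
      exact_mod_cast h1
  obtain ⟨F', hF'fin, hF'⟩ := gordan (latt N) wZ hwlatt c
  rw [hconeeq] at hF'
  rw [hF']
  refine good_biUnion hF'fin fun g₀ _ => ?_
  exact good_single (isRatPolyhedralCone_coneOf v') g₀

end UNC

/-- If `W ⊆ ℤ^d` is a finite union of translates of normal affine semigroups
`Aᵢ = σᵢ ∩ Lᵢ` (with `σᵢ` a rational polyhedral cone and `Lᵢ ⊆ ℤ^d` a subgroup),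
then `W` is a finite union of translates of normal affine semigroups `σⱼ ∩ L`
all defined with respect to a single finite-index sublattice `L ⊆ ℤ^d`. -/
theorem union_of_normal_common_lattice {d n : ℕ} (W : Set (Fin d → ℤ))
    (f : Fin n → (Fin d → ℤ)) (σ : Fin n → Set (Fin d → ℝ))
    (L : Fin n → AddSubgroup (Fin d → ℤ))
    (hσ : ∀ i, IsRatPolyhedralCone (σ i))
    (hW : W = ⋃ i, (({f i} : Set (Fin d → ℤ)) +
      {x : Fin d → ℤ | (fun j => (x j : ℝ)) ∈ σ i ∧ x ∈ L i})) :
    ∃ (L' : AddSubgroup (Fin d → ℤ)) (_ : L'.FiniteIndex)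
      (r : ℕ) (τ : Fin r → Set (Fin d → ℝ)) (g : Fin r → (Fin d → ℤ)),
      (∀ j, IsRatPolyhedralCone (τ j)) ∧
      W = ⋃ j, (({g j} : Set (Fin d → ℤ)) +
        {x : Fin d → ℤ | (fun k => (x k : ℝ)) ∈ τ j ∧ x ∈ L'}) := by
  classical
  choose N₀ hN₀pos hN₀ using fun i => UNC.piece (σ i) (hσ i) (L i)
  set N : ℕ := ∏ i, N₀ i with hN
  have hNpos : 0 < N := Finset.prod_pos fun i _ => hN₀pos i
  refine ⟨UNC.latt N, UNC.latt_finiteIndex hNpos, ?_⟩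
  have hGood : UNC.Good (UNC.latt N) W := by
    rw [hW]
    exact UNC.good_iUnion fun i => UNC.good_translate (f i)
      (hN₀ i N hNpos (Finset.dvd_prod_of_mem N₀ (Finset.mem_univ i)))
  obtain ⟨ι, inst, τ, g, hτ, hWeq⟩ := hGood
  refine ⟨Fintype.card ι, fun j => τ ((Fintype.equivFin ι).symm j),
    fun j => g ((Fintype.equivFin ι).symm j), fun j => hτ _, ?_⟩
  rw [hWeq]
  exact ((Fintype.equivFin ι).symm.surjective.iUnion_comp
    (fun i => ({g i} : Set (Fin d → ℤ)) +
      {x : Fin d → ℤ | (fun k => ((x k : ℝ))) ∈ τ i ∧ x ∈ UNC.latt N})).symm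
end
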